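/- arXiv:1407.1167 — 4 statements merged into one kernel-verified Lean document; each statement's English description precedes it below -/
import Mathlib

section
/- Let T = (V, E(T)) be the red tree of a StackMST(0,0) game and let T_1 = (V_1, E_1), …, T_ℓ = (V_ℓ, E_ℓ) be a partition of T into ℓ subtrees, i.e., each T_i is a subtree of T, V = ∪_i V_i, E(T) = ∪_i E_i, and the edge sets E_i are pairwise disjoint. Then the optimal revenue of the game on T is at least the sum of the optimal revenues of the games on the subtrees: r*(T, c) ≥ Σ_{i=1}^{ℓ} r*(T_i, c restricted to E_i). -/
namespace StackMST

variable {V : Type*}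

/-- Sum of an edge-weight function over a set of edges. -/
noncomputable def esum (w : Sym2 V → ℝ) (s : Set (Sym2 V)) : ℝ := ∑ᶠ e ∈ s, w e

/-- `M` is a spanning tree of `G`. -/
def IsSpanningTreeOf (G M : SimpleGraph V) : Prop := M ≤ G ∧ M.IsTree

/-- Total weight of `M`, where red edges (the edges of `T`) are weighted by `c`
and all other (blue) edges are weighted by `p`. -/
noncomputable def weight (T : SimpleGraph V) (c p : Sym2 V → ℝ) (M : SimpleGraph V) : ℝ :=
  esum c (M.edgeSet ∩ T.edgeSet) + esum p (M.edgeSet \ T.edgeSet)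

/-- Total price of the blue edges of `M`. -/
noncomputable def blueRevenue (T : SimpleGraph V) (p : Sym2 V → ℝ) (M : SimpleGraph V) : ℝ :=
  esum p (M.edgeSet \ T.edgeSet)

/-- The leader's revenue once `F` and `p` are fixed: the follower selects a
minimum-weight spanning tree of `T ⊔ F` and, among those, one maximizing the
total price of the blue edges it contains. -/
noncomputable def followerRevenue (T : SimpleGraph V) (c : Sym2 V → ℝ)
    (F : SimpleGraph V) (p : Sym2 V → ℝ) : ℝ :=
  sSup {r | ∃ M : SimpleGraph V, IsSpanningTreeOf (T ⊔ F) M ∧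
    (∀ M' : SimpleGraph V, IsSpanningTreeOf (T ⊔ F) M' →
        weight T c p M ≤ weight T c p M') ∧
    r = blueRevenue T p M}

/-- `F` is a set of blue edges: none of its edges is a red edge. -/
def IsBlueSet (T F : SimpleGraph V) : Prop := F ≤ Tᶜ

/-- `r(F)`: the best revenue the leader can obtain from the activated set `F`. -/
noncomputable def revenueOf (T : SimpleGraph V) (c : Sym2 V → ℝ) (F : SimpleGraph V) : ℝ :=
  sSup {r | ∃ p : Sym2 V → ℝ, (∀ e ∈ F.edgeSet, 0 ≤ p e) ∧ r = followerRevenue T c F p}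

/-- Optimal revenue `r*(T, c)` of the StackMST(0,0) game on the red tree `T`. -/
noncomputable def optRevenue (T : SimpleGraph V) (c : Sym2 V → ℝ) : ℝ :=
  sSup {r | ∃ (F : SimpleGraph V) (p : Sym2 V → ℝ), IsBlueSet T F ∧
    (∀ e ∈ F.edgeSet, 0 ≤ p e) ∧ r = followerRevenue T c F p}

/-- Total cost `c(T)` of the red edges. -/
noncomputable def redCost (T : SimpleGraph V) (c : Sym2 V → ℝ) : ℝ := esum c T.edgeSet

/-- Optimal revenue of the budgeted game StackMST(γ, Δ). -/
noncomputable def gammaOptRevenue (T : SimpleGraph V) (c γ : Sym2 V → ℝ) (Δ : ℝ) : ℝ :=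
  sSup {r | ∃ F : SimpleGraph V, IsBlueSet T F ∧ esum γ F.edgeSet ≤ Δ ∧
    r = revenueOf T c F}

end StackMST

open StackMST
open SimpleGraph

namespace StackMST

variable {V : Type*}

lemma esum_eq_sum (w : Sym2 V → ℝ) {s : Set (Sym2 V)} (hs : s.Finite) :
    esum w s = ∑ e ∈ hs.toFinset, w e := by
  rw [esum, ← finsum_mem_coe_finset, hs.coe_toFinset]

lemma esum_empty (w : Sym2 V → ℝ) : esum w (∅ : Set (Sym2 V)) = 0 := finsum_mem_empty

lemma esum_nonneg {w : Sym2 V → ℝ} {s : Set (Sym2 V)} (hs : s.Finite)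
    (h : ∀ e ∈ s, 0 ≤ w e) : 0 ≤ esum w s := by
  rw [esum_eq_sum w hs]
  exact Finset.sum_nonneg fun e he => h e (hs.mem_toFinset.mp he)

lemma esum_congr {w w' : Sym2 V → ℝ} {s : Set (Sym2 V)} (h : ∀ e ∈ s, w e = w' e) :
    esum w s = esum w' s := finsum_mem_congr rfl h

lemma esum_image {W : Type*} (w : Sym2 V → ℝ) {s : Set (Sym2 W)} {g : Sym2 W → Sym2 V}
    (hg : s.InjOn g) : esum w (g '' s) = esum (fun e => w (g e)) s :=
  finsum_mem_image hg

lemma esum_iUnion {ι : Type*} [Fintype ι] (w : Sym2 V → ℝ) {t : ι → Set (Sym2 V)}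
    (hd : Pairwise (Function.onFun Disjoint t)) (ht : ∀ i, (t i).Finite) :
    esum w (⋃ i, t i) = ∑ i, esum w (t i) := by
  rw [esum, finsum_mem_iUnion hd ht, finsum_eq_sum_of_fintype]
  rfl

section Game
open SimpleGraph
variable {W : Type*} [Finite W] {G : SimpleGraph W} {c p : Sym2 W → ℝ} {F : SimpleGraph W}

omit [Finite W] in
lemma spanningTree_self (hG : G.IsTree) (F : SimpleGraph W) :
    IsSpanningTreeOf (G ⊔ F) G := ⟨le_sup_left, hG⟩

lemma redCost_nonneg (hc : ∀ e ∈ G.edgeSet, 0 ≤ c e) : 0 ≤ redCost G c :=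
  esum_nonneg (Set.toFinite _) hc

lemma blueRevenue_le_redCost (hG : G.IsTree)
    (hc : ∀ e ∈ G.edgeSet, 0 ≤ c e)
    {M : SimpleGraph W}
    (hmin : ∀ M', IsSpanningTreeOf (G ⊔ F) M' → weight G c p M ≤ weight G c p M') :
    blueRevenue G p M ≤ redCost G c := by
  have h1 : blueRevenue G p M ≤ weight G c p M := by
    rw [weight, blueRevenue]
    have : 0 ≤ esum c (M.edgeSet ∩ G.edgeSet) :=
      esum_nonneg (Set.toFinite _) (fun e he => hc e he.2)
    linarith
  have h2 : weight G c p M ≤ weight G c p G := hmin G (spanningTree_self hG F)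
  have h3 : weight G c p G = redCost G c := by
    rw [weight, redCost, Set.inter_self, Set.diff_self, esum_empty]; ring
  linarith

lemma followerRevenue_le_redCost (hG : G.IsTree)
    (hc : ∀ e ∈ G.edgeSet, 0 ≤ c e) :
    followerRevenue G c F p ≤ redCost G c := by
  apply Real.sSup_le _ (redCost_nonneg hc)
  rintro r ⟨M, hM, hmin, rfl⟩
  exact blueRevenue_le_redCost hG hc hmin

lemma mstSet_bddAbove (hG : G.IsTree) (hc : ∀ e ∈ G.edgeSet, 0 ≤ c e) :
    BddAbove {r | ∃ M : SimpleGraph W, IsSpanningTreeOf (G ⊔ F) M ∧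
      (∀ M' : SimpleGraph W, IsSpanningTreeOf (G ⊔ F) M' →
          weight G c p M ≤ weight G c p M') ∧ r = blueRevenue G p M} := by
  refine ⟨redCost G c, ?_⟩
  rintro r ⟨M, hM, hmin, rfl⟩
  exact blueRevenue_le_redCost hG hc hmin

lemma optSet_bddAbove (hG : G.IsTree) (hc : ∀ e ∈ G.edgeSet, 0 ≤ c e) :
    BddAbove {r | ∃ (F : SimpleGraph W) (p : Sym2 W → ℝ), IsBlueSet G F ∧
      (∀ e ∈ F.edgeSet, 0 ≤ p e) ∧ r = followerRevenue G c F p} := by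
  refine ⟨redCost G c, ?_⟩
  rintro r ⟨F, p, hF, hp, rfl⟩
  exact followerRevenue_le_redCost hG hc

lemma exists_opt_mst (hG : G.IsTree) (c : Sym2 W → ℝ) (F : SimpleGraph W) (p : Sym2 W → ℝ) :
    ∃ M : SimpleGraph W, IsSpanningTreeOf (G ⊔ F) M ∧
      (∀ M', IsSpanningTreeOf (G ⊔ F) M' → weight G c p M ≤ weight G c p M') ∧
      blueRevenue G p M = followerRevenue G c F p := by
  classical
  have hSfin : {M : SimpleGraph W | IsSpanningTreeOf (G ⊔ F) M}.Finite := Set.toFinite _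
  have hSne : {M : SimpleGraph W | IsSpanningTreeOf (G ⊔ F) M}.Nonempty :=
    ⟨G, spanningTree_self hG F⟩
  obtain ⟨M₀, hM₀, hmin₀⟩ := Set.exists_min_image _ (weight G c p) hSfin hSne
  have hBne : {r | ∃ M : SimpleGraph W, IsSpanningTreeOf (G ⊔ F) M ∧
      (∀ M', IsSpanningTreeOf (G ⊔ F) M' → weight G c p M ≤ weight G c p M') ∧
      r = blueRevenue G p M}.Nonempty :=
    ⟨_, M₀, hM₀, fun M' h' => hmin₀ M' h', rfl⟩
  have hBfin : {r | ∃ M : SimpleGraph W, IsSpanningTreeOf (G ⊔ F) M ∧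
      (∀ M', IsSpanningTreeOf (G ⊔ F) M' → weight G c p M ≤ weight G c p M') ∧
      r = blueRevenue G p M}.Finite := by
    apply (hSfin.image (blueRevenue G p)).subset
    rintro r ⟨M, h1, h2, rfl⟩
    exact ⟨M, h1, rfl⟩
  obtain ⟨M, h1, h2, h3⟩ := hBne.csSup_mem hBfin
  exact ⟨M, h1, h2, h3.symm⟩

end Game
end StackMST

namespace StackMSTAux
open SimpleGraph
variable {V : Type*}

lemma isAcyclic_of_hom {W : Type*} {G : SimpleGraph W} {G' : SimpleGraph V}
    (f : G →g G') (hf : Function.Injective f) (h : G'.IsAcyclic) : G.IsAcyclic := by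
  intro v c hc
  exact h (c.map f) (hc.map hf)

lemma coe_isAcyclic {T : SimpleGraph V} (hT : T.IsAcyclic) (S : T.Subgraph) :
    S.coe.IsAcyclic :=
  isAcyclic_of_hom S.hom Subtype.val_injective hT

def glue {ℓ : ℕ} (A : Fin ℓ → Set V) (B : ∀ i, SimpleGraph (A i)) : SimpleGraph V where
  Adj u v := ∃ (i : Fin ℓ) (hu : u ∈ A i) (hv : v ∈ A i), (B i).Adj ⟨u, hu⟩ ⟨v, hv⟩
  symm := ⟨by rintro u v ⟨i, hu, hv, h⟩; exact ⟨i, hv, hu, h.symm⟩⟩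
  loopless := ⟨by rintro u ⟨i, hu, hu', h⟩; exact (B i).irrefl h⟩

lemma glue_edgeSet {ℓ : ℕ} {A : Fin ℓ → Set V} {B : ∀ i, SimpleGraph (A i)} :
    (glue A B).edgeSet = ⋃ i, (Sym2.map (Subtype.val : A i → V)) '' (B i).edgeSet := by
  ext e
  induction e using Sym2.ind with
  | _ u v =>
    simp only [mem_edgeSet, Set.mem_iUnion, Set.mem_image]
    constructor
    · rintro ⟨i, hu, hv, h⟩
      exact ⟨i, s(⟨u, hu⟩, ⟨v, hv⟩), (mem_edgeSet _).mpr h, by rw [Sym2.map_pair_eq]⟩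
    · rintro ⟨i, e', he', hmap⟩
      induction e' using Sym2.ind with
      | _ x y =>
        rw [Sym2.map_pair_eq, Sym2.eq_iff] at hmap
        rw [mem_edgeSet] at he'
        rcases hmap with ⟨h1, h2⟩ | ⟨h1, h2⟩
        · subst h1; subst h2; exact ⟨i, x.2, y.2, he'⟩
        · subst h1; subst h2; exact ⟨i, y.2, x.2, he'.symm⟩

section Region
variable {T : SimpleGraph V} {ℓ : ℕ} {H : Fin ℓ → T.Subgraph}

lemma exists_path_in_region (hconn : ∀ i, (H i).Connected) (i : Fin ℓ) {u v : V}
    (hu : u ∈ (H i).verts) (hv : v ∈ (H i).verts) :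
    ∃ R : T.Walk u v, R.IsPath ∧ ∀ e ∈ R.edges, e ∈ (H i).edgeSet := by
  classical
  obtain ⟨w⟩ := (hconn i).coe ⟨u, hu⟩ ⟨v, hv⟩
  refine ⟨(w.map (H i).hom).bypass, Walk.bypass_isPath _, fun e he => ?_⟩
  have he' := (w.map (H i).hom).edges_bypass_subset he
  rw [Walk.edges_map, List.mem_map] at he'
  obtain ⟨e', he', rfl⟩ := he'
  have := w.edges_subset_edgeSet he'
  induction e' using Sym2.ind with
  | _ x y =>
    rw [SimpleGraph.mem_edgeSet] at this
    have : (H i).Adj x y := this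
    show Sym2.map Subtype.val s(x,y) ∈ (H i).edgeSet
    rw [Sym2.map_pair_eq]
    exact Subgraph.mem_edgeSet.mpr this

lemma path_edges_in_region (hT : T.IsTree) (hconn : ∀ i, (H i).Connected) (i : Fin ℓ)
    {u v : V} (hu : u ∈ (H i).verts) (hv : v ∈ (H i).verts)
    (R : T.Walk u v) (hR : R.IsPath) : ∀ e ∈ R.edges, e ∈ (H i).edgeSet := by
  obtain ⟨R₀, hR₀, hsub⟩ := exists_path_in_region hconn i hu hv
  have := (hT.existsUnique_path u v).unique hR hR₀
  rw [this]
  exact hsub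

lemma adj_in_region (hT : T.IsTree) (hconn : ∀ i, (H i).Connected) (i : Fin ℓ)
    {u v : V} (hu : u ∈ (H i).verts) (hv : v ∈ (H i).verts) (h : T.Adj u v) :
    (H i).Adj u v := by
  have hp : (Walk.cons h Walk.nil).IsPath := by
    simp [Walk.isPath_def, h.ne]
  have := path_edges_in_region hT hconn i hu hv _ hp s(u, v) (by simp)
  exact Subgraph.mem_edgeSet.mp this

lemma region_inter (hT : T.IsTree) (hconn : ∀ i, (H i).Connected)
    (hdisj : ∀ i j, i ≠ j → Disjoint ((H i).edgeSet) ((H j).edgeSet))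
    {i j : Fin ℓ} (hij : i ≠ j) {u v : V}
    (hui : u ∈ (H i).verts) (hvi : v ∈ (H i).verts)
    (huj : u ∈ (H j).verts) (hvj : v ∈ (H j).verts) : u = v := by
  by_contra hne
  obtain ⟨R, hR, hsubi⟩ := exists_path_in_region hconn i hui hvi
  have hsubj := path_edges_in_region hT hconn j huj hvj R hR
  have hRne : R.edges ≠ [] := by
    intro h0
    have : R.length = 0 := by
      have := R.length_edges
      rw [h0] at this
      simpa using this.symm
    exact hne (Walk.eq_of_length_eq_zero this)
  obtain ⟨e, he⟩ := List.exists_mem_of_ne_nil _ hRne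
  exact Set.disjoint_left.mp (hdisj i j hij) (hsubi e he) (hsubj e he)

lemma exists_region_edge (hT : T.IsTree) (hconn : ∀ i, (H i).Connected)
    (hdisj : ∀ i j, i ≠ j → Disjoint ((H i).edgeSet) ((H j).edgeSet))
    {N : SimpleGraph V} (hN : ∀ ⦃a b : V⦄, N.Adj a b → ∃ j, a ∈ (H j).verts ∧ b ∈ (H j).verts)
    (i : Fin ℓ) {u v : V} (hu : u ∈ (H i).verts) (hv : v ∈ (H i).verts) (hne : u ≠ v)
    (P : N.Walk u v) :
    ∃ a b : V, s(a, b) ∈ P.edges ∧ a ∈ (H i).verts ∧ b ∈ (H i).verts := by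
  classical
  by_contra hcon
  push_neg at hcon
  have key : ∀ {x y : V} (Q : N.Walk x y),
      (∀ a b : V, s(a, b) ∈ Q.edges → a ∈ (H i).verts → b ∉ (H i).verts) →
      ∃ R : T.Walk x y, ∀ e ∈ R.edges, e ∉ (H i).edgeSet := by
    intro x y Q
    induction Q with
    | nil => exact fun _ => ⟨Walk.nil, by simp⟩
    | @cons a b y hab Q ih =>
      intro hQ
      obtain ⟨R', hR'⟩ := ih (fun p q hpq => hQ p q (by simp [hpq]))
      obtain ⟨j, haj, hbj⟩ := hN hab
      have hji : j ≠ i := by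
        rintro rfl
        exact hQ a b (by simp) haj hbj
      obtain ⟨R₀, _, hR₀⟩ := exists_path_in_region hconn j haj hbj
      refine ⟨R₀.append R', fun e he => ?_⟩
      rw [Walk.edges_append, List.mem_append] at he
      rcases he with he | he
      · exact Set.disjoint_left.mp (hdisj j i hji) (hR₀ e he)
      · exact hR' e he
  obtain ⟨R, hR⟩ := key P (fun a b hab hai => fun hbi => hcon a b hab hai hbi)
  have hsubi := path_edges_in_region hT hconn i hu hv R.bypass R.bypass_isPath
  have hRne : R.bypass.edges ≠ [] := by
    intro h0
    have : R.bypass.length = 0 := by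
      have := R.bypass.length_edges
      rw [h0] at this
      simpa using this.symm
    exact hne (Walk.eq_of_length_eq_zero this)
  obtain ⟨e, he⟩ := List.exists_mem_of_ne_nil _ hRne
  exact hR e (R.edges_bypass_subset he) (hsubi e he)

lemma project (hT : T.IsTree) (hconn : ∀ i, (H i).Connected)
    (hdisj : ∀ i j, i ≠ j → Disjoint ((H i).edgeSet) ((H j).edgeSet))
    {N : SimpleGraph V} (hN : ∀ ⦃a b : V⦄, N.Adj a b → ∃ j, a ∈ (H j).verts ∧ b ∈ (H j).verts)
    (i : Fin ℓ) :
    ∀ (n : ℕ) {u v : V} (hu : u ∈ (H i).verts) (hv : v ∈ (H i).verts)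
      (P : N.Walk u v), P.length ≤ n →
      ∃ W : (N.induce ((H i).verts)).Walk ⟨u, hu⟩ ⟨v, hv⟩,
        ∀ e ∈ W.edges, Sym2.map Subtype.val e ∈ P.edges := by
  classical
  intro n
  induction n with
  | zero =>
    intro u v hu hv P hP
    have huv : u = v := Walk.eq_of_length_eq_zero (Nat.le_zero.mp hP)
    subst huv
    exact ⟨Walk.nil, by simp⟩
  | succ n ih =>
    intro u v hu hv P hP
    rcases eq_or_ne u v with rfl | hne
    · exact ⟨Walk.nil, by simp⟩
    obtain ⟨a, b, hab, ha, hb⟩ := exists_region_edge hT hconn hdisj hN i hu hv hne P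
    have hNab : N.Adj a b := (N.mem_edgeSet).mp (P.edges_subset_edgeSet hab)
    have hanb : a ≠ b := hNab.ne
    have key : ∀ c : V, c ∈ (H i).verts → c ≠ u → c ≠ v → ∀ hc : c ∈ P.support,
        ∃ W : (N.induce ((H i).verts)).Walk ⟨u, hu⟩ ⟨v, hv⟩,
          ∀ e ∈ W.edges, Sym2.map Subtype.val e ∈ P.edges := by
      intro c hcA hcu hcv hc
      have hsum : (P.takeUntil c hc).length + (P.dropUntil c hc).length = P.length := by
        have := congrArg Walk.length (P.take_spec hc)
        rwa [Walk.length_append] at this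
      have h1pos : (P.takeUntil c hc).length ≠ 0 := fun h0 =>
        hcu (Walk.eq_of_length_eq_zero h0).symm
      have h2pos : (P.dropUntil c hc).length ≠ 0 := fun h0 =>
        hcv (Walk.eq_of_length_eq_zero h0)
      obtain ⟨W₁, hW₁⟩ := ih hu hcA (P.takeUntil c hc) (by omega)
      obtain ⟨W₂, hW₂⟩ := ih hcA hv (P.dropUntil c hc) (by omega)
      refine ⟨W₁.append W₂, fun e he => ?_⟩
      rw [Walk.edges_append, List.mem_append] at he
      rcases he with he | he
      · exact P.edges_takeUntil_subset hc (hW₁ e he)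
      · exact P.edges_dropUntil_subset hc (hW₂ e he)
    have hIadj : ∀ (x y : V) (hx : x ∈ (H i).verts) (hy : y ∈ (H i).verts), N.Adj x y →
        (N.induce ((H i).verts)).Adj ⟨x, hx⟩ ⟨y, hy⟩ := by
      intro x y hx hy h
      simpa using h
    by_cases hau : a = u
    · subst hau
      by_cases hbv : b = v
      · subst hbv
        refine ⟨Walk.cons (hIadj a b hu hv hNab) Walk.nil, fun e he => ?_⟩
        simp only [Walk.edges_cons, Walk.edges_nil, List.mem_singleton] at he
        subst he
        simpa [Sym2.map_pair_eq] using hab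
      · exact key b hb (fun h => hanb h.symm) hbv (P.snd_mem_support_of_mem_edges hab)
    · by_cases hav : a = v
      · subst hav
        by_cases hbu : b = u
        · subst hbu
          refine ⟨Walk.cons (hIadj b a hu hv hNab.symm) Walk.nil, fun e he => ?_⟩
          simp only [Walk.edges_cons, Walk.edges_nil, List.mem_singleton] at he
          subst he
          rw [Sym2.map_pair_eq, Sym2.eq_swap]
          exact hab
        · exact key b hb hbu (fun h => hanb h.symm) (P.snd_mem_support_of_mem_edges hab)
      · exact key a ha hau hav (P.fst_mem_support_of_mem_edges hab)

end Region
end StackMSTAux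

/-- If `T₁, …, T_ℓ` is a partition of the red tree `T` into `ℓ`
subtrees (each `Tᵢ` is a connected subgraph of `T`, the vertex sets cover `V`, the
edge sets are pairwise disjoint and cover `E(T)`), then the optimal revenue of the
game on `T` is at least the sum of the optimal revenues of the games on the
subtrees (with the restricted costs). -/

theorem stackMST_partition_superadditive {V : Type*} [Finite V]
    (T : SimpleGraph V) (hT : T.IsTree) (c : Sym2 V → ℝ)
    (hc : ∀ e ∈ T.edgeSet, 0 ≤ c e)
    (ℓ : ℕ) (H : Fin ℓ → T.Subgraph)
    (hconn : ∀ i, (H i).Connected)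
    (hV : ∀ v : V, ∃ i, v ∈ (H i).verts)
    (hE : ∀ e ∈ T.edgeSet, ∃ i, e ∈ (H i).edgeSet)
    (hdisj : ∀ i j, i ≠ j → Disjoint ((H i).edgeSet) ((H j).edgeSet)) :
    ∑ i : Fin ℓ, optRevenue ((H i).coe) (fun e => c (Sym2.map Subtype.val e)) ≤
      optRevenue T c := by
  classical
  have hVne : Nonempty V := hT.isConnected.nonempty
  rcases Nat.eq_zero_or_pos ℓ with hl0 | hlpos
  · obtain ⟨i, -⟩ := hV (Classical.arbitrary V)
    exact absurd i.2 (by omega)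
  have hGtree : ∀ i, ((H i).coe).IsTree := fun i =>
    ⟨(hconn i).coe, StackMSTAux.coe_isAcyclic hT.IsAcyclic (H i)⟩
  have hmapedge : ∀ (i : Fin ℓ) (e : Sym2 ↥((H i).verts)), e ∈ ((H i).coe).edgeSet →
      Sym2.map Subtype.val e ∈ T.edgeSet := by
    intro i e he
    induction e using Sym2.ind with
    | _ x y =>
      rw [SimpleGraph.mem_edgeSet] at he
      have he' : (H i).Adj x y := he
      rw [Sym2.map_pair_eq, SimpleGraph.mem_edgeSet]
      exact (H i).adj_sub he'
  have hcc0 : ∀ i, ∀ e ∈ ((H i).coe).edgeSet, 0 ≤ (fun e => c (Sym2.map Subtype.val e)) e :=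
    fun i e he => hc _ (hmapedge i e he)
  have huniq : ∀ {i j : Fin ℓ} (e : Sym2 ↥((H i).verts)) (f : Sym2 ↥((H j).verts)),
      ¬e.IsDiag → Sym2.map Subtype.val e = Sym2.map Subtype.val f → i = j := by
    intro i j e f hd hmap
    by_contra hij
    induction e using Sym2.ind with
    | _ a b =>
    induction f using Sym2.ind with
    | _ x y =>
    rw [Sym2.map_pair_eq, Sym2.map_pair_eq, Sym2.eq_iff] at hmap
    have hab : (a : V) ≠ (b : V) := by
      intro h
      exact hd (by rw [Sym2.mk_isDiag_iff]; exact Subtype.ext h)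
    have hmem : (a : V) ∈ (H j).verts ∧ (b : V) ∈ (H j).verts := by
      rcases hmap with ⟨h1, h2⟩ | ⟨h1, h2⟩
      · exact ⟨by rw [h1]; exact x.2, by rw [h2]; exact y.2⟩
      · exact ⟨by rw [h1]; exact y.2, by rw [h2]; exact x.2⟩
    exact hab (StackMSTAux.region_inter hT hconn hdisj hij a.2 b.2 hmem.1 hmem.2)
  refine le_of_forall_pos_le_add fun ε hε => ?_
  have hstrat : ∀ i : Fin ℓ, ∃ (F : SimpleGraph ↥((H i).verts)) (q : Sym2 ↥((H i).verts) → ℝ),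
      IsBlueSet ((H i).coe) F ∧ (∀ e ∈ F.edgeSet, 0 ≤ q e) ∧
      optRevenue ((H i).coe) (fun e => c (Sym2.map Subtype.val e)) - ε / ℓ <
        followerRevenue ((H i).coe) (fun e => c (Sym2.map Subtype.val e)) F q := by
    intro i
    have hne : {r | ∃ (F : SimpleGraph ↥((H i).verts)) (q : Sym2 ↥((H i).verts) → ℝ),
        IsBlueSet ((H i).coe) F ∧ (∀ e ∈ F.edgeSet, 0 ≤ q e) ∧
        r = followerRevenue ((H i).coe) (fun e => c (Sym2.map Subtype.val e)) F q}.Nonempty :=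
      ⟨_, ⊥, 0, bot_le, fun e _ => le_rfl, rfl⟩
    have hlt : optRevenue ((H i).coe) (fun e => c (Sym2.map Subtype.val e)) - ε / ℓ <
        optRevenue ((H i).coe) (fun e => c (Sym2.map Subtype.val e)) := by
      have h0 : (0 : ℝ) < ε / ℓ := div_pos hε (by exact_mod_cast hlpos)
      linarith
    obtain ⟨r, hrmem, hr⟩ := exists_lt_of_lt_csSup hne hlt
    obtain ⟨F, q, h1, h2, rfl⟩ := hrmem
    exact ⟨F, q, h1, h2, hr⟩
  choose Fc qq hFblue hqpos hgood using hstrat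
  choose Mc hMspan hMmin hMrev using fun i =>
    exists_opt_mst (hGtree i) (fun e => c (Sym2.map Subtype.val e)) (Fc i) (qq i)
  set Fg : SimpleGraph V := StackMSTAux.glue (fun i => (H i).verts) Fc with hFgdef
  set Mg : SimpleGraph V := StackMSTAux.glue (fun i => (H i).verts) Mc with hMgdef
  set p : Sym2 V → ℝ := fun e =>
    sSup {x | ∃ (i : Fin ℓ) (e' : Sym2 ↥((H i).verts)), e' ∈ (Fc i).edgeSet ∧
      Sym2.map Subtype.val e' = e ∧ x = qq i e'} with hpdef
  have hpagree : ∀ (i : Fin ℓ) (e' : Sym2 ↥((H i).verts)), e' ∈ (Fc i).edgeSet →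
      p (Sym2.map Subtype.val e') = qq i e' := by
    intro i e' he'
    have hset : {x | ∃ (j : Fin ℓ) (f : Sym2 ↥((H j).verts)), f ∈ (Fc j).edgeSet ∧
        Sym2.map Subtype.val f = Sym2.map Subtype.val e' ∧ x = qq j f} = {qq i e'} := by
      ext x
      simp only [Set.mem_setOf_eq, Set.mem_singleton_iff]
      constructor
      · rintro ⟨j, f, hf, hmap, rfl⟩
        have hd : ¬f.IsDiag := SimpleGraph.not_isDiag_of_mem_edgeSet _ hf
        have hji : j = i := huniq f e' hd hmap
        subst hji
        have : f = e' := Sym2.map.injective Subtype.val_injective hmap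
        rw [this]
      · rintro rfl
        exact ⟨i, e', he', rfl, rfl⟩
    rw [hpdef]
    show sSup _ = qq i e'
    rw [hset]
    exact csSup_singleton _
  have hglueAdj : ∀ (B : ∀ i : Fin ℓ, SimpleGraph ↥((H i).verts)) (i : Fin ℓ)
      (x y : ↥((H i).verts)),
      (StackMSTAux.glue (fun j => (H j).verts) B).Adj x.1 y.1 → (B i).Adj x y := by
    intro B i x y h
    obtain ⟨j, hx, hy, hadj⟩ := h
    rcases eq_or_ne j i with rfl | hji
    · exact hadj
    · have heq : (x : V) = (y : V) :=
        StackMSTAux.region_inter hT hconn hdisj hji.symm x.2 y.2 hx hy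
      exact absurd (Subtype.ext heq : (⟨x.1, hx⟩ : ↥((H j).verts)) = ⟨y.1, hy⟩) hadj.ne
  have hFgblue : IsBlueSet T Fg := by
    rintro u v ⟨i, hu, hv, hadj⟩
    have hne : u ≠ v := fun h => (Fc i).ne_of_adj hadj (Subtype.ext h)
    rw [SimpleGraph.compl_adj]
    refine ⟨hne, fun hTadj => ?_⟩
    have hr := StackMSTAux.adj_in_region hT hconn i hu hv hTadj
    have h2 := hFblue i hadj
    rw [SimpleGraph.compl_adj] at h2
    exact h2.2 hr
  have hpnn : ∀ e ∈ Fg.edgeSet, 0 ≤ p e := by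
    intro e he
    rw [hFgdef, StackMSTAux.glue_edgeSet] at he
    simp only [Set.mem_iUnion, Set.mem_image] at he
    obtain ⟨i, e', he', rfl⟩ := he
    rw [hpagree i e' he']
    exact hqpos i e' he'
  have hNreg : ∀ {N : SimpleGraph V}, N ≤ T ⊔ Fg → ∀ ⦃a b : V⦄, N.Adj a b →
      ∃ j, a ∈ (H j).verts ∧ b ∈ (H j).verts := by
    intro N hN a b hab
    rcases hN hab with hT' | hF'
    · obtain ⟨j, hj⟩ := hE s(a, b) ((T.mem_edgeSet).mpr hT')
      exact ⟨j, Subgraph.mem_verts_of_mem_edge hj (Sym2.mem_mk_left a b),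
        Subgraph.mem_verts_of_mem_edge hj (Sym2.mem_mk_right a b)⟩
    · rw [hFgdef] at hF'
      obtain ⟨j, hu, hv, -⟩ := hF'
      exact ⟨j, hu, hv⟩

  have hMgInduce : ∀ i, Mg.induce ((H i).verts) = Mc i := by
    intro i
    ext x y
    show Mg.Adj x.1 y.1 ↔ (Mc i).Adj x y
    constructor
    · intro h
      rw [hMgdef] at h
      exact hglueAdj Mc i x y h
    · intro h
      rw [hMgdef]
      exact ⟨i, x.2, y.2, h⟩
  have hMgle : Mg ≤ T ⊔ Fg := by
    rintro u v h
    rw [hMgdef] at h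
    obtain ⟨i, hu, hv, hadj⟩ := h
    rcases (hMspan i).1 hadj with h' | h'
    · exact Or.inl ((H i).adj_sub h')
    · refine Or.inr ?_
      rw [hFgdef]
      exact ⟨i, hu, hv, h'⟩
  have hMgconn : Mg.Connected := by
    have hpre : Mg.Preconnected := by
      intro u v
      obtain ⟨P⟩ := hT.isConnected.preconnected u v
      induction P with
      | nil => exact Reachable.refl _
      | @cons a b w h P ih =>
        refine Reachable.trans ?_ ih
        obtain ⟨j, hj⟩ := hE s(a, b) ((T.mem_edgeSet).mpr h)
        have h1 : a ∈ (H j).verts :=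
          Subgraph.mem_verts_of_mem_edge hj (Sym2.mem_mk_left a b)
        have h2 : b ∈ (H j).verts :=
          Subgraph.mem_verts_of_mem_edge hj (Sym2.mem_mk_right a b)
        have hr : (Mc j).Reachable ⟨a, h1⟩ ⟨b, h2⟩ :=
          ((hMspan j).2.isConnected).preconnected _ _
        exact hr.map (⟨Subtype.val, fun {x y} hadj => by
          rw [hMgdef]; exact ⟨j, x.2, y.2, hadj⟩⟩ : Mc j →g Mg)
    exact ⟨hpre⟩
  have hMgNreg : ∀ ⦃a b : V⦄, Mg.Adj a b → ∃ j, a ∈ (H j).verts ∧ b ∈ (H j).verts :=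
    hNreg hMgle
  have hMgacyc : Mg.IsAcyclic := by
    rw [isAcyclic_iff_forall_adj_isBridge]
    intro x y hxy
    rw [isBridge_iff_adj_and_forall_walk_mem_edges]
    refine fun P => ?_
    have hxy' := hxy
    rw [hMgdef] at hxy'
    obtain ⟨i, hx, hy, hadj⟩ := hxy'
    obtain ⟨W, hW⟩ := StackMSTAux.project hT hconn hdisj hMgNreg i P.length hx hy P le_rfl
    have hWedges : ∀ e ∈ W.edges, e ∈ (Mc i).edgeSet := by
      intro e he
      have h0 := W.edges_subset_edgeSet he
      rw [hMgInduce i] at h0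
      exact h0
    have hbr := isAcyclic_iff_forall_adj_isBridge.mp (hMspan i).2.IsAcyclic hadj
    rw [isBridge_iff_adj_and_forall_walk_mem_edges] at hbr
    have hmem := hbr (W.transfer (Mc i) hWedges)
    rw [Walk.edges_transfer] at hmem
    have := hW _ hmem
    simpa [Sym2.map_pair_eq] using this
  have hMgtree : IsSpanningTreeOf (T ⊔ Fg) Mg := ⟨hMgle, hMgconn, hMgacyc⟩

  have hinduce_le : ∀ {N : SimpleGraph V}, N ≤ T ⊔ Fg → ∀ i,
      N.induce ((H i).verts) ≤ (H i).coe ⊔ Fc i := by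
    intro N hN1 i x y h
    have h' : N.Adj x.1 y.1 := h
    rcases hN1 h' with hTadj | hFadj
    · exact Or.inl (StackMSTAux.adj_in_region hT hconn i x.2 y.2 hTadj)
    · refine Or.inr ?_
      rw [hFgdef] at hFadj
      exact hglueAdj Fc i x y hFadj
  have hinduce_span : ∀ {N : SimpleGraph V}, IsSpanningTreeOf (T ⊔ Fg) N → ∀ i,
      IsSpanningTreeOf ((H i).coe ⊔ Fc i) (N.induce ((H i).verts)) := by
    intro N hN i
    refine ⟨hinduce_le hN.1 i, ?_, ?_⟩
    · haveI : Nonempty ↥((H i).verts) := ((hconn i).coe).nonempty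
      refine ⟨fun x y => ?_⟩
      obtain ⟨P⟩ := hN.2.isConnected.preconnected x.1 y.1
      obtain ⟨W, -⟩ := StackMSTAux.project hT hconn hdisj (hNreg hN.1) i P.length x.2 y.2 P le_rfl
      exact ⟨W⟩
    · exact StackMSTAux.isAcyclic_of_hom (SimpleGraph.Embedding.induce (G := N) ((H i).verts)).toHom
        (SimpleGraph.Embedding.induce (G := N) ((H i).verts)).injective hN.2.IsAcyclic
  have himgsub : ∀ {N : SimpleGraph V} (i : Fin ℓ),
      (Sym2.map (Subtype.val : ↥((H i).verts) → V)) '' (N.induce ((H i).verts)).edgeSet ⊆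
        N.edgeSet := by
    intro N i e he
    obtain ⟨e', he', rfl⟩ := he
    induction e' using Sym2.ind with
    | _ x y =>
      rw [Sym2.map_pair_eq]
      exact (N.mem_edgeSet).mpr ((mem_edgeSet _).mp he')
  have hNdec : ∀ {N : SimpleGraph V}, N ≤ T ⊔ Fg →
      N.edgeSet = ⋃ i, (Sym2.map (Subtype.val : ↥((H i).verts) → V)) ''
        (N.induce ((H i).verts)).edgeSet := by
    intro N hN1
    apply Set.Subset.antisymm
    · intro e he
      induction e using Sym2.ind with
      | _ u v =>
        have hadj : N.Adj u v := (N.mem_edgeSet).mp he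
        obtain ⟨i, hu, hv⟩ := hNreg hN1 hadj
        refine Set.mem_iUnion.mpr ⟨i, s(⟨u, hu⟩, ⟨v, hv⟩), ?_, by rw [Sym2.map_pair_eq]⟩
        exact (mem_edgeSet _).mpr hadj
    · exact Set.iUnion_subset fun i => himgsub i
  have hYdisj : ∀ {N : SimpleGraph V}, Pairwise (Function.onFun Disjoint fun i =>
      (Sym2.map (Subtype.val : ↥((H i).verts) → V)) '' (N.induce ((H i).verts)).edgeSet) := by
    intro N i j hij
    rw [Function.onFun, Set.disjoint_left]
    rintro e ⟨e', he', rfl⟩ ⟨f', hf', hmap⟩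
    have hd : ¬e'.IsDiag := SimpleGraph.not_isDiag_of_mem_edgeSet _ he'
    exact hij (huniq e' f' hd hmap.symm)
  have hsplitT : ∀ {N : SimpleGraph V} (i : Fin ℓ) (e' : Sym2 ↥((H i).verts)),
      e' ∈ (N.induce ((H i).verts)).edgeSet →
      (Sym2.map Subtype.val e' ∈ T.edgeSet ↔ e' ∈ ((H i).coe).edgeSet) := by
    intro N i e' he'
    induction e' using Sym2.ind with
    | _ x y =>
      rw [Sym2.map_pair_eq, mem_edgeSet, mem_edgeSet]
      constructor
      · intro h
        exact StackMSTAux.adj_in_region hT hconn i x.2 y.2 h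
      · intro h
        exact (H i).adj_sub h
  have hinterT : ∀ {N : SimpleGraph V}, N ≤ T ⊔ Fg →
      N.edgeSet ∩ T.edgeSet = ⋃ i, (Sym2.map (Subtype.val : ↥((H i).verts) → V)) ''
        ((N.induce ((H i).verts)).edgeSet ∩ ((H i).coe).edgeSet) := by
    intro N hN1
    rw [hNdec hN1, Set.iUnion_inter]
    refine Set.iUnion_congr fun i => ?_
    ext e
    constructor
    · rintro ⟨⟨e', he', rfl⟩, heT⟩
      exact ⟨e', ⟨he', (hsplitT i e' he').mp heT⟩, rfl⟩
    · rintro ⟨e', ⟨he', heG⟩, rfl⟩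
      exact ⟨⟨e', he', rfl⟩, (hsplitT i e' he').mpr heG⟩
  have hdiffT : ∀ {N : SimpleGraph V}, N ≤ T ⊔ Fg →
      N.edgeSet \ T.edgeSet = ⋃ i, (Sym2.map (Subtype.val : ↥((H i).verts) → V)) ''
        ((N.induce ((H i).verts)).edgeSet \ ((H i).coe).edgeSet) := by
    intro N hN1
    rw [hNdec hN1, Set.iUnion_diff]
    refine Set.iUnion_congr fun i => ?_
    ext e
    constructor
    · rintro ⟨⟨e', he', rfl⟩, heT⟩
      exact ⟨e', ⟨he', fun hG => heT ((hsplitT i e' he').mpr hG)⟩, rfl⟩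
    · rintro ⟨e', ⟨he', heG⟩, rfl⟩
      exact ⟨⟨e', he', rfl⟩, fun hT' => heG ((hsplitT i e' he').mp hT')⟩
  have hblueF : ∀ {N : SimpleGraph V}, N ≤ T ⊔ Fg → ∀ (i : Fin ℓ)
      (e' : Sym2 ↥((H i).verts)),
      e' ∈ (N.induce ((H i).verts)).edgeSet \ ((H i).coe).edgeSet →
      e' ∈ (Fc i).edgeSet := by
    intro N hN1 i e' he'
    induction e' using Sym2.ind with
    | _ x y =>
      obtain ⟨h1, h2⟩ := he'
      have hadj : (N.induce ((H i).verts)).Adj x y := (mem_edgeSet _).mp h1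
      rcases hinduce_le hN1 i hadj with hG | hF
      · exact absurd ((mem_edgeSet _).mpr hG) h2
      · exact (mem_edgeSet _).mpr hF
  have hinj : ∀ i : Fin ℓ, Function.Injective (Sym2.map (Subtype.val : ↥((H i).verts) → V)) :=
    fun i => Sym2.map.injective Subtype.val_injective
  have hweightN : ∀ {N : SimpleGraph V}, N ≤ T ⊔ Fg →
      weight T c p N = ∑ i, weight ((H i).coe) (fun e => c (Sym2.map Subtype.val e)) (qq i)
        (N.induce ((H i).verts)) := by
    intro N hN1
    have hd1 : Pairwise (Function.onFun Disjoint fun i =>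
        (Sym2.map (Subtype.val : ↥((H i).verts) → V)) ''
          ((N.induce ((H i).verts)).edgeSet ∩ ((H i).coe).edgeSet)) := fun i j hij =>
      Disjoint.mono (Set.image_mono Set.inter_subset_left)
        (Set.image_mono Set.inter_subset_left) (hYdisj hij)
    have hd2 : Pairwise (Function.onFun Disjoint fun i =>
        (Sym2.map (Subtype.val : ↥((H i).verts) → V)) ''
          ((N.induce ((H i).verts)).edgeSet \ ((H i).coe).edgeSet)) := fun i j hij =>
      Disjoint.mono (Set.image_mono Set.diff_subset)
        (Set.image_mono Set.diff_subset) (hYdisj hij)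
    rw [weight, hinterT hN1, hdiffT hN1, esum_iUnion c hd1 (fun i => Set.toFinite _),
      esum_iUnion p hd2 (fun i => Set.toFinite _), ← Finset.sum_add_distrib]
    refine Finset.sum_congr rfl fun i _ => ?_
    rw [weight, esum_image c ((hinj i).injOn), esum_image p ((hinj i).injOn)]
    congr 1
    apply esum_congr
    intro e' he'
    exact hpagree i e' (hblueF hN1 i e' he')
  have hblueN : ∀ {N : SimpleGraph V}, N ≤ T ⊔ Fg →
      blueRevenue T p N = ∑ i, blueRevenue ((H i).coe) (qq i) (N.induce ((H i).verts)) := by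
    intro N hN1
    have hd2 : Pairwise (Function.onFun Disjoint fun i =>
        (Sym2.map (Subtype.val : ↥((H i).verts) → V)) ''
          ((N.induce ((H i).verts)).edgeSet \ ((H i).coe).edgeSet)) := fun i j hij =>
      Disjoint.mono (Set.image_mono Set.diff_subset)
        (Set.image_mono Set.diff_subset) (hYdisj hij)
    rw [blueRevenue, hdiffT hN1, esum_iUnion p hd2 (fun i => Set.toFinite _)]
    refine Finset.sum_congr rfl fun i _ => ?_
    rw [blueRevenue, esum_image p ((hinj i).injOn)]
    exact esum_congr fun e' he' => hpagree i e' (hblueF hN1 i e' he')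
  have hMgmin : ∀ M', IsSpanningTreeOf (T ⊔ Fg) M' →
      weight T c p Mg ≤ weight T c p M' := by
    intro M' hM'
    rw [hweightN hMgle, hweightN hM'.1]
    refine Finset.sum_le_sum fun i _ => ?_
    rw [hMgInduce i]
    exact hMmin i _ (hinduce_span hM' i)
  have hrev : blueRevenue T p Mg = ∑ i, followerRevenue ((H i).coe)
      (fun e => c (Sym2.map Subtype.val e)) (Fc i) (qq i) := by
    rw [hblueN hMgle]
    refine Finset.sum_congr rfl fun i _ => ?_
    rw [hMgInduce i, hMrev i]
  have hfollow : blueRevenue T p Mg ≤ followerRevenue T c Fg p := by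
    apply le_csSup (mstSet_bddAbove hT hc)
    exact ⟨Mg, hMgtree, hMgmin, rfl⟩
  have hopt : followerRevenue T c Fg p ≤ optRevenue T c := by
    apply le_csSup (optSet_bddAbove hT hc)
    exact ⟨Fg, p, hFgblue, hpnn, rfl⟩
  have hsum : (∑ i : Fin ℓ, optRevenue ((H i).coe) (fun e => c (Sym2.map Subtype.val e))) - ε ≤
      blueRevenue T p Mg := by
    rw [hrev]
    have h1 : ∑ i : Fin ℓ,
        (optRevenue ((H i).coe) (fun e => c (Sym2.map Subtype.val e)) - ε / ℓ) ≤
        ∑ i : Fin ℓ, followerRevenue ((H i).coe)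
          (fun e => c (Sym2.map Subtype.val e)) (Fc i) (qq i) :=
      Finset.sum_le_sum fun i _ => (hgood i).le
    rw [Finset.sum_sub_distrib] at h1
    have hcard : ∑ _i : Fin ℓ, (ε / (ℓ : ℝ)) = ε := by
      rw [Finset.sum_const, Finset.card_univ, Fintype.card_fin, nsmul_eq_mul]
      field_simp
    rw [hcard] at h1
    exact h1
  linarith
end

section
/- For the StackMST(0,0) game whose red tree is a star S with t ≥ 3 edges and nonnegative edge costs, the optimal revenue satisfies r*(S, c) ≥ (2/3)·c(S). -/
namespace StackMST

/-- The star graph on `V` centered at `v0`: `v0` is joined to every other vertex. -/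
def starGraph {V : Type*} (v0 : V) : SimpleGraph V :=
  SimpleGraph.fromRel (fun u _ => u = v0)

end StackMST

open StackMST

section Aux

open SimpleGraph StackMST

variable {V : Type*}

lemma StackMST.starGraph_adj {v0 u v : V} :
    (starGraph v0).Adj u v ↔ u ≠ v ∧ (u = v0 ∨ v = v0) := by
  simp [starGraph]

lemma StackMST.mem_starGraph_edgeSet {v0 : V} {e : Sym2 V} :
    e ∈ (starGraph v0).edgeSet ↔ ∃ x, x ≠ v0 ∧ e = s(v0, x) := by
  induction e using Sym2.ind with
  | _ u v =>
    rw [SimpleGraph.mem_edgeSet, starGraph_adj]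
    constructor
    · rintro ⟨hne, rfl | rfl⟩
      · exact ⟨v, fun h => hne h.symm, rfl⟩
      · exact ⟨u, hne, Sym2.eq_swap⟩
    · rintro ⟨x, hx, he⟩
      rw [Sym2.eq_iff] at he
      rcases he with ⟨rfl, rfl⟩ | ⟨rfl, rfl⟩
      · exact ⟨fun h => hx h.symm, Or.inl rfl⟩
      · exact ⟨hx, Or.inr rfl⟩

lemma StackMST.starGraph_connected [Nonempty V] (v0 : V) : (starGraph v0).Connected := by
  rw [SimpleGraph.connected_iff]
  refine ⟨fun u v => ?_, inferInstance⟩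
  have h : ∀ w : V, (starGraph v0).Reachable w v0 := by
    intro w
    by_cases hw : w = v0
    · exact hw ▸ SimpleGraph.Reachable.refl w
    · exact SimpleGraph.Adj.reachable (starGraph_adj.2 ⟨hw, Or.inr rfl⟩)
  exact (h u).trans (h v).symm

lemma StackMST.starGraph_isAcyclic (v0 : V) : (starGraph v0).IsAcyclic := by
  rw [SimpleGraph.isAcyclic_iff_forall_adj_isBridge]
  intro u w huw
  rw [SimpleGraph.isBridge_iff]
  rw [starGraph_adj] at huw
  obtain ⟨hne, rfl | rfl⟩ := huw
  · rintro ⟨wk⟩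
    have := wk.reverse
    cases this with
    | nil => exact hne rfl
    | cons h q =>
      obtain ⟨hadj, hnot⟩ := h
      rw [starGraph_adj] at hadj
      obtain ⟨hwy, rfl | rfl⟩ := hadj
      · exact hne rfl
      · apply hnot
        rw [SimpleGraph.fromEdgeSet_adj]
        simp [Sym2.eq_swap, hwy]
  · rintro ⟨wk⟩
    cases wk with
    | nil => exact hne rfl
    | cons h q =>
      obtain ⟨hadj, hnot⟩ := h
      rw [starGraph_adj] at hadj
      obtain ⟨hwy, rfl | rfl⟩ := hadj
      · exact hne rfl
      · apply hnot
        rw [SimpleGraph.fromEdgeSet_adj]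
        exact ⟨rfl, hwy⟩

lemma StackMST.starGraph_isTree [Nonempty V] (v0 : V) : (starGraph v0).IsTree :=
  ⟨starGraph_connected v0, starGraph_isAcyclic v0⟩

lemma StackMST.esum_empty_s7 (q : Sym2 V → ℝ) : esum q (∅ : Set (Sym2 V)) = 0 :=
  finsum_mem_empty

lemma StackMST.esum_coe_finset (q : Sym2 V → ℝ) (s : Finset (Sym2 V)) :
    esum q ↑s = ∑ e ∈ s, q e :=
  finsum_mem_coe_finset _ _

lemma StackMST.esum_nonneg' [Finite V] (q : Sym2 V → ℝ) (s : Set (Sym2 V))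
    (hq : ∀ e ∈ s, 0 ≤ q e) : 0 ≤ esum q s := by
  rw [← Set.Finite.coe_toFinset (Set.toFinite s), esum_coe_finset]
  exact Finset.sum_nonneg fun e he => hq e ((Set.Finite.mem_toFinset _).1 he)

end Aux

open StackMST

/-- For the StackMST(0,0) game whose red tree is a star `S` with
`t ≥ 3` edges and nonnegative edge costs, the optimal revenue satisfies
`r*(S, c) ≥ (2/3)·c(S)`. -/
theorem stackMST_star_two_thirds {V : Type*} [Finite V] (v0 : V)
    (ht : 3 ≤ Set.ncard ((starGraph v0).edgeSet))
    (c : Sym2 V → ℝ) (hc : ∀ e ∈ (starGraph v0).edgeSet, 0 ≤ c e) :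
    (2 / 3 : ℝ) * redCost (starGraph v0) c ≤ optRevenue (starGraph v0) c := by
  classical
  have : Fintype V := Fintype.ofFinite V
  have hNE : Nonempty V := ⟨v0⟩
  set T := starGraph v0 with hTdef
  set f : V → ℝ := fun x => c s(v0, x) with hf
  set L : Finset V := Finset.univ.erase v0 with hLdef
  have hmemL : ∀ x : V, x ∈ L ↔ x ≠ v0 := by
    intro x; rw [hLdef, Finset.mem_erase]; simp
  have hTedge : T.edgeSet = ↑(L.image fun x => s(v0, x)) := by
    ext e
    simp only [Finset.coe_image, Set.mem_image, Finset.mem_coe]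
    rw [hTdef, mem_starGraph_edgeSet]
    constructor
    · rintro ⟨x, hx, rfl⟩; exact ⟨x, (hmemL x).2 hx, rfl⟩
    · rintro ⟨x, hx, rfl⟩; exact ⟨x, (hmemL x).1 hx, rfl⟩
  have hinjL : ∀ x ∈ L, ∀ y ∈ L, s(v0, x) = s(v0, y) → x = y := by
    intro x hx y hy h
    rw [Sym2.eq_iff] at h
    rcases h with ⟨-, h⟩ | ⟨h1, h2⟩
    · exact h
    · exact absurd h1.symm ((hmemL y).1 hy)
  have hC : redCost T c = ∑ x ∈ L, f x := by
    rw [redCost, hTedge, esum_coe_finset, Finset.sum_image hinjL]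
  have hcard : 3 ≤ L.card := by
    have h1 : Set.ncard T.edgeSet = L.card := by
      rw [hTedge, Set.ncard_coe_finset,
        Finset.card_image_of_injOn (fun x hx y hy h => hinjL x hx y hy h)]
    rw [← h1]; exact ht
  have hf0 : ∀ x : V, x ≠ v0 → 0 ≤ f x := fun x hx =>
    hc _ (mem_starGraph_edgeSet.2 ⟨x, hx, rfl⟩)
  obtain ⟨m, hmL, hmmin⟩ := L.exists_min_image f (by rw [← Finset.card_pos]; omega)
  have hmv0 : m ≠ v0 := (hmemL m).1 hmL
  set F : SimpleGraph V := SimpleGraph.fromRel (fun u v => u = m ∧ u ≠ v0 ∧ v ≠ v0) with hFdef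
  set p : Sym2 V → ℝ := fun e => c (Sym2.map (fun u => if u = m then v0 else u) e) with hpdef
  have hFadj : ∀ u v : V, F.Adj u v ↔ u ≠ v ∧ u ≠ v0 ∧ v ≠ v0 ∧ (u = m ∨ v = m) := by
    intro u v
    rw [hFdef, SimpleGraph.fromRel_adj]
    constructor
    · rintro ⟨h, ⟨h1, h2, h3⟩ | ⟨h1, h2, h3⟩⟩
      exacts [⟨h, h2, h3, Or.inl h1⟩, ⟨h, h3, h2, Or.inr h1⟩]
    · rintro ⟨h, h2, h3, h1 | h1⟩
      exacts [⟨h, Or.inl ⟨h1, h2, h3⟩⟩, ⟨h, Or.inr ⟨h1, h3, h2⟩⟩]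
  have hFedge : ∀ e : Sym2 V, e ∈ F.edgeSet ↔ ∃ x, x ≠ v0 ∧ x ≠ m ∧ e = s(m, x) := by
    intro e
    induction e using Sym2.ind with
    | _ u v =>
      rw [SimpleGraph.mem_edgeSet, hFadj]
      constructor
      · rintro ⟨huv, hu0, hv0, h | h⟩
        · exact ⟨v, hv0, fun hh => huv (h.trans hh.symm), by rw [h]⟩
        · exact ⟨u, hu0, fun hh => huv (hh.trans h.symm), by rw [h, Sym2.eq_swap]⟩
      · rintro ⟨x, hx0, hxm, he⟩
        rw [Sym2.eq_iff] at he
        rcases he with ⟨rfl, rfl⟩ | ⟨rfl, rfl⟩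
        · exact ⟨fun h => hxm h.symm, hmv0, hx0, Or.inl rfl⟩
        · exact ⟨hxm, hx0, hmv0, Or.inr rfl⟩
  have hpval : ∀ x : V, x ≠ m → p s(m, x) = f x := by
    intro x hx
    have h1 : Sym2.map (fun u => if u = m then v0 else u) s(m, x) = s(v0, x) := by
      rw [Sym2.map_pair_eq]; simp [hx]
    show c (Sym2.map (fun u => if u = m then v0 else u) s(m, x)) = f x
    rw [h1]
  have hp0 : ∀ e ∈ F.edgeSet, 0 ≤ p e := by
    intro e he
    obtain ⟨x, hx0, hxm, rfl⟩ := (hFedge e).1 he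
    rw [hpval x hxm]; exact hf0 x hx0
  have hFblue : IsBlueSet T F := by
    intro u v h
    rw [hFadj] at h
    rw [SimpleGraph.compl_adj]
    refine ⟨h.1, ?_⟩
    rw [hTdef, starGraph_adj]
    rintro ⟨-, h1 | h1⟩
    exacts [h.2.1 h1, h.2.2.1 h1]
  have hTF : ∀ u v : V, (T ⊔ F).Adj u v → u ≠ v0 → u ≠ m → (v = v0 ∨ v = m) := by
    intro u v h hu0 hum
    rcases (SimpleGraph.sup_adj _ _ _ _).1 h with h | h
    · rw [hTdef, starGraph_adj] at h
      rcases h.2 with h1 | h1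
      exacts [absurd h1 hu0, Or.inl h1]
    · rw [hFadj] at h
      rcases h.2.2.2 with h1 | h1
      exacts [absurd h1 hum, Or.inr h1]
  set w : Sym2 V → ℝ := fun e => if e ∈ T.edgeSet then c e else p e with hwdef
  have hwred : ∀ x : V, x ≠ v0 → w s(v0, x) = f x := by
    intro x hx
    have hmem : s(v0, x) ∈ T.edgeSet := mem_starGraph_edgeSet.2 ⟨x, hx, rfl⟩
    rw [hwdef]; simp only [if_pos hmem]; rfl
  have hnotT : ∀ x : V, x ≠ v0 → s(m, x) ∉ T.edgeSet := by
    intro x hx hmem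
    obtain ⟨y, hy, he⟩ := mem_starGraph_edgeSet.1 hmem
    rw [Sym2.eq_iff] at he
    rcases he with ⟨h1, -⟩ | ⟨-, h2⟩
    exacts [hmv0 h1, hx h2]
  have hwblue : ∀ x : V, x ≠ v0 → x ≠ m → w s(m, x) = f x := by
    intro x hx hxm
    rw [hwdef]; simp only [if_neg (hnotT x hx)]; exact hpval x hxm
  have hw0 : ∀ e ∈ (T ⊔ F).edgeSet, 0 ≤ w e := by
    intro e he
    rw [hwdef]
    by_cases hT : e ∈ T.edgeSet
    · simp only [if_pos hT]; exact hc e hT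
    · simp only [if_neg hT]
      rw [SimpleGraph.edgeSet_sup] at he
      exact hp0 e (he.resolve_left hT)
  have hweight : ∀ M : SimpleGraph V,
      weight T c p M = ∑ e ∈ (Set.toFinite M.edgeSet).toFinset, w e := by
    intro M
    have h1 : M.edgeSet ∩ T.edgeSet =
        ↑((Set.toFinite M.edgeSet).toFinset.filter (fun e => e ∈ T.edgeSet)) := by
      ext e
      rw [Set.mem_inter_iff, Finset.mem_coe, Finset.mem_filter, Set.Finite.mem_toFinset]
    have h2 : M.edgeSet \ T.edgeSet =
        ↑((Set.toFinite M.edgeSet).toFinset.filter (fun e => ¬ e ∈ T.edgeSet)) := by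
      ext e
      rw [Set.mem_diff, Finset.mem_coe, Finset.mem_filter, Set.Finite.mem_toFinset]
    rw [weight, h1, h2, esum_coe_finset, esum_coe_finset,
      ← Finset.sum_filter_add_sum_filter_not (Set.toFinite M.edgeSet).toFinset
        (fun e => e ∈ T.edgeSet) w]
    congr 1
    · refine Finset.sum_congr rfl (fun e he => ?_)
      rw [hwdef]; simp only [if_pos (Finset.mem_filter.1 he).2]
    · refine Finset.sum_congr rfl (fun e he => ?_)
      rw [hwdef]; simp only [if_neg (Finset.mem_filter.1 he).2]
  set Mstar : SimpleGraph V := starGraph m with hMdef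
  have hMle : Mstar ≤ T ⊔ F := by
    intro u v h
    rw [hMdef, starGraph_adj] at h
    rw [SimpleGraph.sup_adj]
    obtain ⟨huv, h1 | h1⟩ := h
    · by_cases hv : v = v0
      · left; rw [hTdef, starGraph_adj]; exact ⟨huv, Or.inr hv⟩
      · right; rw [hFadj]
        exact ⟨huv, h1 ▸ hmv0, hv, Or.inl h1⟩
    · by_cases hu : u = v0
      · left; rw [hTdef, starGraph_adj]; exact ⟨huv, Or.inl hu⟩
      · right; rw [hFadj]
        exact ⟨huv, hu, h1 ▸ hmv0, Or.inr h1⟩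
  have hMinter : Mstar.edgeSet ∩ T.edgeSet = {s(v0, m)} := by
    ext e
    constructor
    · rintro ⟨h1, h2⟩
      obtain ⟨x, hxm, rfl⟩ := mem_starGraph_edgeSet.1 h1
      obtain ⟨y, hyv, he⟩ := mem_starGraph_edgeSet.1 h2
      rw [Sym2.eq_iff] at he
      rcases he with ⟨h3, -⟩ | ⟨h3, h4⟩
      · exact absurd h3 hmv0
      · rw [h4, Sym2.eq_swap]; rfl
    · rintro rfl
      constructor
      · exact mem_starGraph_edgeSet.2 ⟨v0, fun h => hmv0 h.symm, Sym2.eq_swap⟩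
      · exact mem_starGraph_edgeSet.2 ⟨m, hmv0, rfl⟩
  have hMdiff : Mstar.edgeSet \ T.edgeSet = ↑((L.erase m).image fun x => s(m, x)) := by
    ext e
    simp only [Finset.coe_image, Set.mem_image, Finset.mem_coe, Set.mem_diff]
    constructor
    · rintro ⟨h1, h2⟩
      obtain ⟨x, hxm, rfl⟩ := mem_starGraph_edgeSet.1 h1
      have hx0 : x ≠ v0 := by
        rintro rfl
        exact h2 (mem_starGraph_edgeSet.2 ⟨m, hmv0, Sym2.eq_swap⟩)
      exact ⟨x, Finset.mem_erase.2 ⟨hxm, (hmemL x).2 hx0⟩, rfl⟩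
    · rintro ⟨x, hx, rfl⟩
      rw [Finset.mem_erase, hmemL] at hx
      exact ⟨mem_starGraph_edgeSet.2 ⟨x, hx.1, rfl⟩, hnotT x hx.2⟩
  have hinjm : ∀ x ∈ L.erase m, ∀ y ∈ L.erase m, s(m, x) = s(m, y) → x = y := by
    intro x hx y hy h
    rw [Sym2.eq_iff] at h
    rcases h with ⟨-, h⟩ | ⟨h1, h2⟩
    · exact h
    · exact absurd h1.symm (Finset.ne_of_mem_erase hy)
  have hblueval : blueRevenue T p Mstar = ∑ x ∈ L.erase m, f x := by
    rw [blueRevenue, hMdiff, esum_coe_finset, Finset.sum_image hinjm]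
    exact Finset.sum_congr rfl fun x hx => hpval x (Finset.ne_of_mem_erase hx)
  have hWstar : weight T c p Mstar = ∑ x ∈ L, f x := by
    have hbr : esum p (Mstar.edgeSet \ T.edgeSet) = ∑ x ∈ L.erase m, f x := hblueval
    rw [weight, hbr, hMinter]
    have h1 : esum c {s(v0, m)} = f m := finsum_mem_singleton
    rw [h1, Finset.add_sum_erase L f hmL]
  -- minimality of Mstar among spanning trees of T ⊔ F
  have hmin : ∀ M' : SimpleGraph V, IsSpanningTreeOf (T ⊔ F) M' →
      (∑ x ∈ L, f x) ≤ weight T c p M' := by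
    rintro M' ⟨hle, htree⟩
    rw [hweight M']
    have hnbr : ∀ x : V, x ≠ v0 → ∃ y, M'.Adj x y := by
      intro x hx
      obtain ⟨wk⟩ := htree.isConnected.preconnected x v0
      cases wk with
      | nil => exact absurd rfl hx
      | cons h _ => exact ⟨_, h⟩
    set nbr : V → V := fun x => if hx : x ≠ v0 then Classical.choose (hnbr x hx) else x
      with hnbrdef
    have hnbr_adj : ∀ x : V, x ≠ v0 → M'.Adj x (nbr x) := by
      intro x hx
      rw [hnbrdef]; simp only [dif_pos hx]
      exact Classical.choose_spec (hnbr x hx)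
    have hnbr_class : ∀ x : V, x ≠ v0 → x ≠ m → (nbr x = v0 ∨ nbr x = m) :=
      fun x hx hxm => hTF x (nbr x) (hle (hnbr_adj x hx)) hx hxm
    have hwleaf : ∀ x : V, x ≠ v0 → x ≠ m →
        s(x, nbr x) ∈ M'.edgeSet ∧ f x ≤ w s(x, nbr x) := by
      intro x hx hxm
      refine ⟨(SimpleGraph.mem_edgeSet _).2 (hnbr_adj x hx), ?_⟩
      rcases hnbr_class x hx hxm with h | h
      · rw [h, Sym2.eq_swap]; exact (hwred x hx).ge
      · rw [h, Sym2.eq_swap]; exact (hwblue x hx hxm).ge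

    obtain ⟨ι, hinjι, hmemι, hgeι⟩ :
        ∃ ι : V → Sym2 V, (∀ x ∈ L, ∀ y ∈ L, ι x = ι y → x = y) ∧
          (∀ x ∈ L, ι x ∈ M'.edgeSet) ∧ (∀ x ∈ L, f x ≤ w (ι x)) := by
      by_cases hvm : M'.Adj v0 m
      · refine ⟨fun x => if x = m then s(v0, m) else s(x, nbr x), ?_, ?_, ?_⟩
        · intro x hx y hy hxy
          have hx' := (hmemL x).1 hx
          have hy' := (hmemL y).1 hy
          by_cases h1 : x = m
          · by_cases h2 : y = m
            · rw [h1, h2]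
            · exfalso
              simp only [if_pos h1, if_neg h2, Sym2.eq_iff] at hxy
              rcases hxy with ⟨h5, -⟩ | ⟨-, h5⟩
              · exact hy' h5.symm
              · exact h2 h5.symm
          · by_cases h2 : y = m
            · exfalso
              simp only [if_neg h1, if_pos h2, Sym2.eq_iff] at hxy
              rcases hxy with ⟨h5, -⟩ | ⟨h5, -⟩
              · exact hx' h5
              · exact h1 h5
            · simp only [if_neg h1, if_neg h2, Sym2.eq_iff] at hxy
              rcases hxy with ⟨h5, -⟩ | ⟨h5, h6⟩
              · exact h5
              · exfalso
                rcases hnbr_class y hy' h2 with h7 | h7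
                · exact hx' (h5.trans h7)
                · exact h1 (h5.trans h7)
        · intro x hx
          by_cases h1 : x = m
          · simp only [if_pos h1]; exact (SimpleGraph.mem_edgeSet _).2 hvm
          · simp only [if_neg h1]; exact (hwleaf x ((hmemL x).1 hx) h1).1
        · intro x hx
          by_cases h1 : x = m
          · simp only [if_pos h1]
            rw [hwred m hmv0, h1]

          · simp only [if_neg h1]; exact (hwleaf x ((hmemL x).1 hx) h1).2
      · obtain ⟨x0, hx0v, hx0m, hx00, hx0ne⟩ :
            ∃ x0 : V, M'.Adj v0 x0 ∧ M'.Adj x0 m ∧ x0 ≠ v0 ∧ x0 ≠ m := by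
          obtain ⟨wk⟩ := htree.isConnected.preconnected v0 m
          obtain ⟨q, hq⟩ := wk.toPath
          cases q with
          | nil => exact absurd rfl hmv0
          | cons h r =>
            rename_i y
            rw [SimpleGraph.Walk.cons_isPath_iff] at hq
            have hy0 : y ≠ v0 := h.ne'
            have hym : y ≠ m := by rintro rfl; exact hvm h
            cases r with
            | nil => exact absurd rfl hym
            | cons h2 r2 =>
              rename_i z
              rcases hTF y z (hle h2) hy0 hym with rfl | rfl
              · exact absurd (by
                  rw [SimpleGraph.Walk.support_cons]
                  exact List.mem_cons_of_mem _ r2.start_mem_support) hq.2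
              · exact ⟨y, h, h2, hy0, hym⟩
        refine ⟨fun x => if x = m then s(v0, x0) else if x = x0 then s(x0, m)
          else s(x, nbr x), ?_, ?_, ?_⟩
        · intro x hx y hy hxy
          have hx' := (hmemL x).1 hx
          have hy' := (hmemL y).1 hy
          by_cases h1 : x = m
          · by_cases h2 : y = m
            · rw [h1, h2]
            · exfalso
              simp only [if_pos h1, if_neg h2] at hxy
              by_cases h4 : y = x0
              · simp only [if_pos h4, Sym2.eq_iff] at hxy
                rcases hxy with ⟨h5, -⟩ | ⟨h5, -⟩
                · exact hx00 h5.symm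
                · exact hmv0 h5.symm
              · simp only [if_neg h4, Sym2.eq_iff] at hxy
                rcases hxy with ⟨h5, -⟩ | ⟨-, h5⟩
                · exact hy' h5.symm
                · exact h4 h5.symm
          · by_cases h2 : y = m
            · exfalso
              simp only [if_neg h1, if_pos h2] at hxy
              by_cases h3 : x = x0
              · simp only [if_pos h3, Sym2.eq_iff] at hxy
                rcases hxy with ⟨h5, -⟩ | ⟨-, h5⟩
                · exact hx00 h5
                · exact hmv0 h5
              · simp only [if_neg h3, Sym2.eq_iff] at hxy
                rcases hxy with ⟨h5, -⟩ | ⟨h5, -⟩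
                · exact hx' h5
                · exact h3 h5
            · simp only [if_neg h1, if_neg h2] at hxy
              by_cases h3 : x = x0
              · by_cases h4 : y = x0
                · rw [h3, h4]
                · exfalso
                  simp only [if_pos h3, if_neg h4, Sym2.eq_iff] at hxy
                  rcases hxy with ⟨h5, -⟩ | ⟨-, h5⟩
                  · exact h4 h5.symm
                  · exact h2 h5.symm
              · by_cases h4 : y = x0
                · exfalso
                  simp only [if_neg h3, if_pos h4, Sym2.eq_iff] at hxy
                  rcases hxy with ⟨h5, -⟩ | ⟨h5, -⟩
                  · exact h3 h5
                  · exact h1 h5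
                · simp only [if_neg h3, if_neg h4, Sym2.eq_iff] at hxy
                  rcases hxy with ⟨h5, -⟩ | ⟨h5, h6⟩
                  · exact h5
                  · exfalso
                    rcases hnbr_class y hy' h2 with h7 | h7
                    · exact hx' (h5.trans h7)
                    · exact h1 (h5.trans h7)
        · intro x hx
          by_cases h1 : x = m
          · simp only [if_pos h1]; exact (SimpleGraph.mem_edgeSet _).2 hx0v
          · by_cases h3 : x = x0
            · simp only [if_neg h1, if_pos h3]; exact (SimpleGraph.mem_edgeSet _).2 hx0m
            · simp only [if_neg h1, if_neg h3]
              exact (hwleaf x ((hmemL x).1 hx) h1).1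
        · intro x hx
          by_cases h1 : x = m
          · simp only [if_pos h1]
            rw [hwred x0 hx00, h1]
            exact hmmin x0 ((hmemL x0).2 hx00)
          · by_cases h3 : x = x0
            · simp only [if_neg h1, if_pos h3]
              rw [Sym2.eq_swap, hwblue x0 hx00 hx0ne, h3]
            · simp only [if_neg h1, if_neg h3]
              exact (hwleaf x ((hmemL x).1 hx) h1).2
    have hsub : L.image ι ⊆ (Set.toFinite M'.edgeSet).toFinset := by
      intro e he
      obtain ⟨x, hx, rfl⟩ := Finset.mem_image.1 he
      rw [Set.Finite.mem_toFinset]; exact hmemι x hx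
    calc ∑ x ∈ L, f x ≤ ∑ x ∈ L, w (ι x) := Finset.sum_le_sum hgeι
      _ = ∑ e ∈ L.image ι, w e := (Finset.sum_image hinjι).symm
      _ ≤ ∑ e ∈ (Set.toFinite M'.edgeSet).toFinset, w e := by
          refine Finset.sum_le_sum_of_subset_of_nonneg hsub fun e he _ => ?_
          rw [Set.Finite.mem_toFinset] at he
          exact hw0 e (SimpleGraph.edgeSet_mono hle he)
  -- upper bound for follower revenues
  have hC0 : 0 ≤ redCost T c := by
    rw [hC]; exact Finset.sum_nonneg fun x hx => hf0 x ((hmemL x).1 hx)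
  have hbound : ∀ (F' : SimpleGraph V) (p' : Sym2 V → ℝ) (r : ℝ),
      (∃ M, IsSpanningTreeOf (T ⊔ F') M ∧
        (∀ M'', IsSpanningTreeOf (T ⊔ F') M'' → weight T c p' M ≤ weight T c p' M'') ∧
        r = blueRevenue T p' M) → r ≤ redCost T c := by
    rintro F' p' r ⟨M, hst, hminM, rfl⟩
    have h1 : weight T c p' M ≤ weight T c p' T :=
      hminM T ⟨le_sup_left, starGraph_isTree v0⟩
    have h2 : weight T c p' T = redCost T c := by
      rw [weight, Set.inter_self, Set.diff_self, esum_empty_s7, add_zero, redCost]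
    have h3 : 0 ≤ esum c (M.edgeSet ∩ T.edgeSet) :=
      esum_nonneg' c _ fun e he => hc e he.2
    have h4 : blueRevenue T p' M = weight T c p' M - esum c (M.edgeSet ∩ T.edgeSet) := by
      rw [weight, blueRevenue]; ring
    linarith
  have hflw_mem : blueRevenue T p Mstar ∈ {r | ∃ M, IsSpanningTreeOf (T ⊔ F) M ∧
      (∀ M' : SimpleGraph V, IsSpanningTreeOf (T ⊔ F) M' →
        weight T c p M ≤ weight T c p M') ∧ r = blueRevenue T p M} :=
    ⟨Mstar, ⟨hMle, starGraph_isTree m⟩,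
      fun M' h => by rw [hWstar]; exact hmin M' h, rfl⟩
  have h4 : blueRevenue T p Mstar ≤ followerRevenue T c F p :=
    le_csSup ⟨redCost T c, fun r hr => hbound F p r hr⟩ hflw_mem
  have h5 : followerRevenue T c F p ≤ optRevenue T c := by
    apply le_csSup
    · refine ⟨redCost T c, fun r hr => ?_⟩
      obtain ⟨F', p', -, -, rfl⟩ := hr
      exact Real.sSup_le (fun x hx => hbound F' p' x hx) hC0
    · exact ⟨F, p, hFblue, hp0, rfl⟩
  have hsum : ∑ x ∈ L, f x = f m + ∑ x ∈ L.erase m, f x := (Finset.add_sum_erase L f hmL).symm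
  have h3m : (3 : ℝ) * f m ≤ ∑ x ∈ L, f x := by
    have h6 : (L.card : ℝ) * f m ≤ ∑ x ∈ L, f x := by
      have h7 := Finset.card_nsmul_le_sum L f (f m) hmmin
      rwa [nsmul_eq_mul] at h7
    have h7 : (3 : ℝ) ≤ (L.card : ℝ) := by exact_mod_cast hcard
    nlinarith [hf0 m hmv0]
  calc (2 / 3 : ℝ) * redCost T c ≤ ∑ x ∈ L.erase m, f x := by rw [hC]; linarith
    _ = blueRevenue T p Mstar := hblueval.symm
    _ ≤ followerRevenue T c F p := h4
    _ ≤ optRevenue T c := h5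
end

section
/- For the StackMST(0,0) game with red tree T with nonnegative edge costs, for every vertex s of T let μ(s) denote the maximum cost of a red edge incident to s. Then for every vertex s, the optimal revenue satisfies r*(T, c) ≥ (4/7)·(c(T) − μ(s)). -/
namespace StackMST

/-- `μ(s)`: the maximum cost of a red edge of `T` incident to the vertex `s`. -/
noncomputable def maxIncidentCost {V : Type*} (T : SimpleGraph V) (c : Sym2 V → ℝ)
    (s : V) : ℝ :=
  sSup {x | ∃ e ∈ T.edgeSet, s ∈ e ∧ x = c e}

end StackMST



namespace SMST
open Finset

attribute [local instance] Classical.propDecidable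

variable {V : Type*}

/-- Connectivity generated by a set of undirected edges. -/
def EConn (E : Set (Sym2 V)) : V → V → Prop :=
  Relation.EqvGen (fun a b => s(a, b) ∈ E)

lemma EConn.rfl {E : Set (Sym2 V)} (a : V) : EConn E a a := Relation.EqvGen.refl a

lemma EConn.symm {E : Set (Sym2 V)} {a b : V} (h : EConn E a b) : EConn E b a :=
  Relation.EqvGen.symm _ _ h

lemma EConn.trans {E : Set (Sym2 V)} {a b c : V} (h1 : EConn E a b) (h2 : EConn E b c) :
    EConn E a c := Relation.EqvGen.trans _ _ _ h1 h2

lemma EConn.base {E : Set (Sym2 V)} {a b : V} (h : s(a, b) ∈ E) : EConn E a b :=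
  Relation.EqvGen.rel _ _ h

lemma EConn.mono {E E' : Set (Sym2 V)} (hss : E ⊆ E') {a b : V} (h : EConn E a b) :
    EConn E' a b :=
  Relation.EqvGen.mono (fun _ _ hr => hss hr) a b h

lemma econn_col_eq {α : Type*} {E : Set (Sym2 V)} {col : V → α}
    (hnc : ∀ a b, s(a, b) ∈ E → col a = col b) {u v : V} (h : EConn E u v) :
    col u = col v := by
  induction h with
  | rel a b hab => exact hnc a b hab
  | refl => rfl
  | symm a b _ ih => exact ih.symm
  | trans a b c _ _ ih1 ih2 => exact ih1.trans ih2

/-- An isolated-vertex-collapse lemma: if `u` appears in no edge of `S`, then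
connectivity through `insert s(u,v') S` projects to `S` after replacing `u` by `v'`. -/
lemma econn_collapse {S : Set (Sym2 V)} {u v' : V}
    (hS : ∀ f ∈ S, u ∉ f) {a b : V}
    (h : EConn (insert s(u, v') S) a b) :
    EConn S (if a = u then v' else a) (if b = u then v' else b) := by
  induction h with
  | rel x y hxy =>
    rcases hxy with heq | hmem
    · rw [Sym2.eq_iff] at heq
      rcases heq with ⟨h1, h2⟩ | ⟨h1, h2⟩
      · rw [h1, h2]
        simpa using EConn.rfl (E := S) v'
      · rw [h1, h2]
        simpa using EConn.rfl (E := S) v'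
    · have hx : x ≠ u := fun h => hS _ hmem (h ▸ Sym2.mem_mk_left x y)
      have hy : y ≠ u := fun h => hS _ hmem (h ▸ Sym2.mem_mk_right x y)
      simp [hx, hy]
      exact EConn.base hmem
  | refl x => exact EConn.rfl _
  | symm x y _ ih => exact ih.symm
  | trans x y z _ _ ih1 ih2 => exact ih1.trans ih2

lemma crossP_mk {α : Type*} (col : V → α) (x y : V) :
    (¬ ∀ a b, s(a, b) = s(x, y) → col a = col b) ↔ col x ≠ col y := by
  constructor
  · intro h hxy
    apply h
    intro a b hab
    rw [Sym2.eq_iff] at hab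
    rcases hab with ⟨rfl, rfl⟩ | ⟨rfl, rfl⟩
    · exact hxy
    · exact hxy.symm
  · intro hne h
    exact hne (h x y rfl)

/-- "sameCol" predicate on undirected edges. -/
def sameC {α : Type*} (col : V → α) (e : Sym2 V) : Prop :=
  ∀ a b, s(a, b) = e → col a = col b

lemma sameC_mk {α : Type*} (col : V → α) (x y : V) :
    sameC col s(x, y) ↔ col x = col y := by
  rw [show (sameC col s(x,y) ↔ _) from Iff.rfl]
  constructor
  · intro h; exact h x y rfl
  · intro h a b hab
    rw [Sym2.eq_iff] at hab
    rcases hab with ⟨rfl, rfl⟩ | ⟨rfl, rfl⟩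
    · exact h
    · exact h.symm


/-- Any spanning-connected edge set has at least (#colors - 1) crossing edges. -/
lemma LemX {α : Type*} [Fintype V] (E' : Finset (Sym2 V))
    (hconn : ∀ u v : V, EConn (↑E' : Set (Sym2 V)) u v) :
    ∀ (n : ℕ) (col : V → α), (Finset.univ.image col).card = n →
      n ≤ (E'.filter fun e => ¬ sameC col e).card + 1 := by
  intro n
  induction n using Nat.strong_induction_on with
  | _ n IH =>
    intro col hcard
    rcases Nat.lt_or_ge n 2 with hn | hn
    · omega
    -- two distinct colors exist
    have h2 : 1 < (Finset.univ.image col).card := by omega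
    obtain ⟨ca, hca, cb, hcb, hcab⟩ := Finset.one_lt_card.mp h2
    obtain ⟨pa, _, rfl⟩ := Finset.mem_image.mp hca
    obtain ⟨pb, _, rfl⟩ := Finset.mem_image.mp hcb
    -- a crossing edge exists
    have hex : ∃ a b, s(a, b) ∈ (↑E' : Set (Sym2 V)) ∧ col a ≠ col b := by
      by_contra hno
      push_neg at hno
      exact hcab (econn_col_eq (fun a b hab => hno a b hab) (hconn pa pb))
    obtain ⟨a, b, hab, hcol⟩ := hex
    set col' : V → α := fun x => if col x = col a then col b else col x with hcol'def
    have himg : Finset.univ.image col' = (Finset.univ.image col).erase (col a) := by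
      ext y
      constructor
      · intro hy
        obtain ⟨x, _, rfl⟩ := Finset.mem_image.mp hy
        by_cases hx : col x = col a
        · have hcx : col' x = col b := by simp [hcol'def, hx]
          rw [hcx]
          exact Finset.mem_erase.mpr ⟨fun h => hcol h.symm,
            Finset.mem_image_of_mem col (Finset.mem_univ b)⟩
        · have hcx : col' x = col x := by simp [hcol'def, hx]
          rw [hcx]
          exact Finset.mem_erase.mpr ⟨hx, Finset.mem_image_of_mem col (Finset.mem_univ x)⟩
      · intro hy
        rw [Finset.mem_erase] at hy
        obtain ⟨hyne, hy⟩ := hy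
        obtain ⟨x, _, rfl⟩ := Finset.mem_image.mp hy
        refine Finset.mem_image.mpr ⟨x, Finset.mem_univ x, ?_⟩
        simp only [hcol'def]
        rw [if_neg hyne]
    have hsub : (E'.filter fun e => ¬ sameC col' e) ⊆
        ((E'.filter fun e => ¬ sameC col e).erase s(a, b)) := by
      intro e he
      rw [Finset.mem_filter] at he
      obtain ⟨heE, hec⟩ := he
      obtain ⟨x, y, rfl⟩ : ∃ x y, e = s(x, y) := Sym2.ind (fun x y => ⟨x, y, rfl⟩) e
      rw [show (¬ sameC col' s(x,y)) ↔ _ from not_congr (sameC_mk col' x y)] at hec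
      have hxy : col x ≠ col y := by
        intro h
        apply hec
        simp [hcol'def, h]
      refine Finset.mem_erase.mpr ⟨?_, Finset.mem_filter.mpr ⟨heE, ?_⟩⟩
      · intro h
        rw [Sym2.eq_iff] at h
        have hca' : col' a = col' b := by
          simp [hcol'def]
        rcases h with ⟨rfl, rfl⟩ | ⟨rfl, rfl⟩
        · exact hec hca'
        · exact hec hca'.symm
      · rw [not_congr (sameC_mk col x y)]
        exact hxy
    have habf : s(a, b) ∈ (E'.filter fun e => ¬ sameC col e) := by
      refine Finset.mem_filter.mpr ⟨hab, ?_⟩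
      rw [not_congr (sameC_mk col a b)]
      exact hcol
    have hcane : col a ∈ Finset.univ.image col := Finset.mem_image_of_mem col (Finset.mem_univ a)
    have h1 : (Finset.univ.image col').card = n - 1 := by
      rw [himg, Finset.card_erase_of_mem hcane, hcard]
    have h2' := IH (n - 1) (by omega) col' h1
    have h3 : (E'.filter fun e => ¬ sameC col' e).card ≤
        (E'.filter fun e => ¬ sameC col e).card - 1 := by
      calc (E'.filter fun e => ¬ sameC col' e).card
          ≤ ((E'.filter fun e => ¬ sameC col e).erase s(a,b)).card := Finset.card_le_card hsub
        _ = (E'.filter fun e => ¬ sameC col e).card - 1 := Finset.card_erase_of_mem habf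
    have h4 : 1 ≤ (E'.filter fun e => ¬ sameC col e).card := Finset.card_pos.mpr ⟨_, habf⟩
    omega

/-- In a tree (edge set all of whose edges are bridges), with color classes connected by
same-colored edges, there are at most (#colors - 1) crossing edges. -/
lemma LemY {α : Type*} [Fintype V] [Nonempty V] (E0 : Finset (Sym2 V))
    (hbr : ∀ e ∈ E0, ∀ x y, s(x, y) = e → ¬ EConn (↑(E0.erase e) : Set (Sym2 V)) x y) :
    ∀ (n : ℕ) (col : V → α),
      (∀ u v : V, col u = col v →
        EConn (↑(E0.filter fun e => sameC col e) : Set (Sym2 V)) u v) →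
      (E0.filter fun e => ¬ sameC col e).card = n →
      n + 1 ≤ (Finset.univ.image col).card := by
  intro n
  induction n using Nat.strong_induction_on with
  | _ n IH =>
    intro col hclass hcard
    rcases Nat.eq_zero_or_pos n with hn | hn
    · subst hn
      have : (Finset.univ.image col).Nonempty :=
        ⟨col (Classical.arbitrary V), Finset.mem_image_of_mem col (Finset.mem_univ _)⟩
      have := Finset.card_pos.mpr this
      omega
    -- pick a crossing edge
    have hpos : 0 < (E0.filter fun e => ¬ sameC col e).card := by omega
    obtain ⟨e, he⟩ := Finset.card_pos.mp hpos
    obtain ⟨x, y, rfl⟩ : ∃ a b, e = s(a, b) := Sym2.ind (fun a b => ⟨a, b, rfl⟩) e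
    rw [Finset.mem_filter] at he
    obtain ⟨heE, hecr⟩ := he
    have hxy : col x ≠ col y := (not_congr (sameC_mk col x y)).mp hecr
    set col' : V → α := fun z => if col z = col x then col y else col z with hcol'def
    -- the same-colored E0-edges avoid e and each crossing-pair is unique
    have hsame_sub : (E0.filter fun f => sameC col f) ⊆ E0.erase s(x, y) := by
      intro f hf
      rw [Finset.mem_filter] at hf
      refine Finset.mem_erase.mpr ⟨?_, hf.1⟩
      intro h
      subst h
      exact hxy (hf.2 x y rfl)
    -- new crossing set equals old minus e
    have hkey : (E0.filter fun f => ¬ sameC col' f) =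
        (E0.filter fun f => ¬ sameC col f).erase s(x, y) := by
      apply Finset.Subset.antisymm
      · intro f hf
        rw [Finset.mem_filter] at hf
        obtain ⟨hfE, hfc⟩ := hf
        obtain ⟨u, v, rfl⟩ : ∃ a b, f = s(a, b) := Sym2.ind (fun a b => ⟨a, b, rfl⟩) f
        rw [not_congr (sameC_mk col' u v)] at hfc
        have huv : col u ≠ col v := by
          intro h; apply hfc; simp [hcol'def, h]
        refine Finset.mem_erase.mpr ⟨?_, Finset.mem_filter.mpr ⟨hfE, (not_congr (sameC_mk col u v)).mpr huv⟩⟩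
        intro h
        rw [Sym2.eq_iff] at h
        have : col' x = col' y := by simp [hcol'def]
        rcases h with ⟨rfl, rfl⟩ | ⟨rfl, rfl⟩
        · exact hfc this
        · exact hfc this.symm
      · intro f hf
        rw [Finset.mem_erase] at hf
        obtain ⟨hfne, hf⟩ := hf
        rw [Finset.mem_filter] at hf
        obtain ⟨hfE, hfc⟩ := hf
        obtain ⟨u, v, rfl⟩ : ∃ a b, f = s(a, b) := Sym2.ind (fun a b => ⟨a, b, rfl⟩) f
        have huv : col u ≠ col v := (not_congr (sameC_mk col u v)).mp hfc
        refine Finset.mem_filter.mpr ⟨hfE, (not_congr (sameC_mk col' u v)).mpr ?_⟩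
        intro h
        -- h : col' u = col' v ; derive that f joins the classes of x and y, contradiction
        simp only [hcol'def] at h
        by_cases hu : col u = col x <;> by_cases hv : col v = col x
        · exact huv (hu.trans hv.symm)
        · rw [if_pos hu, if_neg hv] at h
          -- col v = col y ; so u ~ x, v ~ y
          have c1 : EConn (↑(E0.erase s(x,y)) : Set (Sym2 V)) u x :=
            EConn.mono (fun f hf => hsame_sub hf) (hclass u x hu)
          have c2 : EConn (↑(E0.erase s(x,y)) : Set (Sym2 V)) v y :=
            EConn.mono (fun f hf => hsame_sub hf) (hclass v y h.symm)
          have c3 : EConn (↑(E0.erase s(x,y)) : Set (Sym2 V)) u v :=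
            EConn.base (by
              simp only [Finset.coe_erase, Set.mem_diff, Set.mem_singleton_iff]
              exact ⟨hfE, hfne⟩)
          exact hbr s(x,y) heE x y rfl ((c1.symm.trans c3).trans c2)
        · rw [if_neg hu, if_pos hv] at h
          have c1 : EConn (↑(E0.erase s(x,y)) : Set (Sym2 V)) v x :=
            EConn.mono (fun f hf => hsame_sub hf) (hclass v x hv)
          have c2 : EConn (↑(E0.erase s(x,y)) : Set (Sym2 V)) u y :=
            EConn.mono (fun f hf => hsame_sub hf) (hclass u y h)
          have c3 : EConn (↑(E0.erase s(x,y)) : Set (Sym2 V)) u v :=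
            EConn.base (by
              simp only [Finset.coe_erase, Set.mem_diff, Set.mem_singleton_iff]
              exact ⟨hfE, hfne⟩)
          exact hbr s(x,y) heE x y rfl ((c1.symm.trans c3.symm).trans c2)
        · rw [if_neg hu, if_neg hv] at h
          exact huv h
    -- invariant for col'
    have hclass' : ∀ u v : V, col' u = col' v →
        EConn (↑(E0.filter fun f => sameC col' f) : Set (Sym2 V)) u v := by
      have hmono : ∀ {a b : V}, EConn (↑(E0.filter fun f => sameC col f) : Set (Sym2 V)) a b →
          EConn (↑(E0.filter fun f => sameC col' f) : Set (Sym2 V)) a b := by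
        intro a b hab
        refine EConn.mono ?_ hab
        intro f hf
        simp only [Finset.coe_filter, Set.mem_setOf_eq] at hf ⊢
        refine ⟨hf.1, ?_⟩
        obtain ⟨u, v, rfl⟩ : ∃ a b, f = s(a, b) := Sym2.ind (fun a b => ⟨a, b, rfl⟩) f
        rw [sameC_mk] at hf ⊢
        simp [hcol'def, hf.2]
      have hebase : EConn (↑(E0.filter fun f => sameC col' f) : Set (Sym2 V)) x y := by
        refine EConn.base ?_
        simp only [Finset.coe_filter, Set.mem_setOf_eq]
        refine ⟨heE, ?_⟩
        rw [sameC_mk]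
        simp [hcol'def]
      intro u v huv
      simp only [hcol'def] at huv
      by_cases hu : col u = col x <;> by_cases hv : col v = col x
      · exact hmono (hclass u v (hu.trans hv.symm))
      · rw [if_pos hu, if_neg hv] at huv
        exact ((hmono (hclass u x hu)).trans hebase).trans (hmono (hclass y v huv))
      · rw [if_neg hu, if_pos hv] at huv
        exact ((hmono (hclass u y huv)).trans hebase.symm).trans (hmono (hclass x v hv.symm))
      · rw [if_neg hu, if_neg hv] at huv
        exact hmono (hclass u v huv)
    -- cardinalities
    have himg : Finset.univ.image col' = (Finset.univ.image col).erase (col x) := by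
      ext z
      constructor
      · intro hz
        obtain ⟨t, _, rfl⟩ := Finset.mem_image.mp hz
        by_cases ht : col t = col x
        · have hct : col' t = col y := by simp [hcol'def, ht]
          rw [hct]
          exact Finset.mem_erase.mpr ⟨fun h => hxy h.symm,
            Finset.mem_image_of_mem col (Finset.mem_univ y)⟩
        · have hct : col' t = col t := by simp [hcol'def, ht]
          rw [hct]
          exact Finset.mem_erase.mpr ⟨ht, Finset.mem_image_of_mem col (Finset.mem_univ t)⟩
      · intro hz
        rw [Finset.mem_erase] at hz
        obtain ⟨hzne, hz⟩ := hz
        obtain ⟨t, _, rfl⟩ := Finset.mem_image.mp hz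
        refine Finset.mem_image.mpr ⟨t, Finset.mem_univ t, ?_⟩
        simp only [hcol'def]
        rw [if_neg hzne]
    have hcx : col x ∈ Finset.univ.image col := Finset.mem_image_of_mem col (Finset.mem_univ x)
    have hcy : col y ∈ Finset.univ.image col := Finset.mem_image_of_mem col (Finset.mem_univ y)
    have himgc : (Finset.univ.image col').card = (Finset.univ.image col).card - 1 := by
      rw [himg, Finset.card_erase_of_mem hcx]
    have hcc : (E0.filter fun f => ¬ sameC col' f).card = n - 1 := by
      rw [hkey, Finset.card_erase_of_mem (Finset.mem_filter.mpr ⟨heE, hecr⟩), hcard]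
    have h2 : 1 < (Finset.univ.image col).card := by
      exact Finset.one_lt_card.mpr ⟨col x, hcx, col y, hcy, hxy⟩
    have := IH (n - 1) (by omega) col' hclass' hcc
    omega

/-- CDF-dominance plus equal cardinality implies sum comparison. -/
lemma sum_le_of_cdf {ι : Type*} (w : ι → ℝ) :
    ∀ (m : ℕ) (A B : Finset ι), A.card = m → A.card = B.card →
      (∀ t : ℝ, (A.filter fun e => t ≤ w e).card ≤ (B.filter fun e => t ≤ w e).card) →
      ∑ e ∈ A, w e ≤ ∑ e ∈ B, w e := by
  intro m
  induction m with
  | zero =>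
    intro A B hA hAB _
    have hB : B.card = 0 := by omega
    rw [Finset.card_eq_zero.mp hA, Finset.card_eq_zero.mp hB]
  | succ m IH =>
    intro A B hA hAB hdom
    have hAne : A.Nonempty := Finset.card_pos.mp (by omega)
    obtain ⟨a, haA, hamax⟩ := Finset.exists_max_image A w hAne
    have h1 : a ∈ A.filter fun e => w a ≤ w e := Finset.mem_filter.mpr ⟨haA, le_refl _⟩
    have h2 : 0 < (B.filter fun e => w a ≤ w e).card :=
      lt_of_lt_of_le (Finset.card_pos.mpr ⟨a, h1⟩) (hdom (w a))
    obtain ⟨b, hb⟩ := Finset.card_pos.mp h2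
    rw [Finset.mem_filter] at hb
    obtain ⟨hbB, hwab⟩ := hb
    have hdom' : ∀ t : ℝ, ((A.erase a).filter fun e => t ≤ w e).card ≤
        ((B.erase b).filter fun e => t ≤ w e).card := by
      intro t
      rw [Finset.filter_erase, Finset.filter_erase]
      by_cases ht : t ≤ w a
      · have haf : a ∈ A.filter fun e => t ≤ w e := Finset.mem_filter.mpr ⟨haA, ht⟩
        have hbf : b ∈ B.filter fun e => t ≤ w e := Finset.mem_filter.mpr ⟨hbB, le_trans ht hwab⟩
        rw [Finset.card_erase_of_mem haf, Finset.card_erase_of_mem hbf]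
        have := hdom t
        omega
      · have : (A.filter fun e => t ≤ w e) = ∅ := by
          apply Finset.filter_false_of_mem
          intro e heA h
          exact ht (le_trans h (hamax e heA))
        rw [this]
        simp
    have hsums : ∑ e ∈ A, w e = w a + ∑ e ∈ A.erase a, w e := by
      rw [Finset.add_sum_erase A w haA]
    have hsums' : ∑ e ∈ B, w e = w b + ∑ e ∈ B.erase b, w e := by
      rw [Finset.add_sum_erase B w hbB]
    rw [hsums, hsums']
    have hrec := IH (A.erase a) (B.erase b)
      (by rw [Finset.card_erase_of_mem haA]; omega)
      (by rw [Finset.card_erase_of_mem haA, Finset.card_erase_of_mem hbB]; omega)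
      hdom'
    linarith


/-- Finite trees on a finite vertex support, built by adding leaves. -/
inductive IsLTree : Finset V → Finset (Sym2 V) → Prop
  | single (v : V) : IsLTree {v} ∅
  | grow {W : Finset V} {E : Finset (Sym2 V)} (u v : V) (hW : IsLTree W E)
      (hv : v ∈ W) (hu : u ∉ W) : IsLTree (insert u W) (insert s(u, v) E)

namespace IsLTree

lemma nonempty {W : Finset V} {E} (h : IsLTree W E) : W.Nonempty := by
  induction h with
  | single v => exact ⟨v, Finset.mem_singleton_self v⟩
  | grow u v _ _ _ _ => exact ⟨u, Finset.mem_insert_self u _⟩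

lemma mem_of_mem_edge {W : Finset V} {E} (h : IsLTree W E) :
    ∀ e ∈ E, ∀ x ∈ e, x ∈ W := by
  induction h with
  | single v => intro e he; exact absurd he (Finset.notMem_empty e)
  | grow u v hW hv hu ih =>
    intro e he x hx
    rcases Finset.mem_insert.mp he with rfl | he'
    · rcases Sym2.mem_iff.mp hx with rfl | rfl
      · exact Finset.mem_insert_self x _
      · exact Finset.mem_insert_of_mem hv
    · exact Finset.mem_insert_of_mem (ih e he' x hx)

lemma nondiag {W : Finset V} {E} (h : IsLTree W E) : ∀ e ∈ E, ¬ e.IsDiag := by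
  induction h with
  | single v => intro e he; exact absurd he (Finset.notMem_empty e)
  | grow u v hW hv hu ih =>
    intro e he
    rcases Finset.mem_insert.mp he with rfl | he'
    · rw [Sym2.mk_isDiag_iff]
      intro h'; exact hu (h' ▸ hv)
    · exact ih e he'

lemma new_edge_not_mem {W : Finset V} {E} (h : IsLTree W E) {u x : V} (hu : u ∉ W) :
    s(u, x) ∉ E := fun hmem => hu (h.mem_of_mem_edge _ hmem u (Sym2.mem_mk_left u x))

lemma card_eq {W : Finset V} {E} (h : IsLTree W E) : W.card = E.card + 1 := by
  induction h with
  | single v => simp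
  | grow u v hW hv hu ih =>
    rw [Finset.card_insert_of_notMem hu,
      Finset.card_insert_of_notMem (hW.new_edge_not_mem hu), ih]

lemma conn {W : Finset V} {E} (h : IsLTree W E) :
    ∀ u ∈ W, ∀ v ∈ W, EConn (↑E : Set (Sym2 V)) u v := by
  induction h with
  | single v =>
    intro a ha b hb
    rw [Finset.mem_singleton] at ha hb
    rw [ha, hb]; exact EConn.rfl _
  | @grow Wg Eg u v hW hv hu ih =>
    intro a ha b hb
    have hmono : ∀ {x y : V}, EConn (↑Eg : Set (Sym2 V)) x y →
        EConn (↑(insert s(u,v) Eg) : Set (Sym2 V)) x y :=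
      fun hc => EConn.mono
        (by intro f hf; rw [Finset.coe_insert]; exact Set.mem_insert_of_mem _ hf) hc
    have hedge : EConn (↑(insert s(u,v) Eg) : Set (Sym2 V)) u v :=
      EConn.base (by rw [Finset.coe_insert]; exact Set.mem_insert _ _)
    rcases Finset.mem_insert.mp ha with rfl | ha' <;> rcases Finset.mem_insert.mp hb with rfl | hb'
    · exact EConn.rfl _
    · exact hedge.trans (hmono (ih v hv b hb'))
    · exact (hmono (ih a ha' v hv)).trans hedge.symm
    · exact hmono (ih a ha' b hb')

lemma bridge {W : Finset V} {E} (h : IsLTree W E) :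
    ∀ e ∈ E, ∀ x y : V, s(x, y) = e → ¬ EConn (↑(E.erase e) : Set (Sym2 V)) x y := by
  induction h with
  | single v => intro e he; exact absurd he (Finset.notMem_empty e)
  | @grow Wg Eg u v hW hv hu ih =>
    intro e he x y hxy hcon
    rcases Finset.mem_insert.mp he with rfl | he'
    · -- the new leaf edge
      rw [Finset.erase_insert (hW.new_edge_not_mem (x := v) hu)] at hcon
      have hiso : ∀ f ∈ (↑Eg : Set (Sym2 V)), u ∉ f := by
        intro f hf hmem
        exact hu (hW.mem_of_mem_edge f hf u hmem)
      have hcoleq := econn_col_eq (col := fun z => if z = u then (0 : ℕ) else 1)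
        (fun a b hab => by
          have ha : a ≠ u := fun h' => hiso _ hab (h' ▸ Sym2.mem_mk_left a b)
          have hb : b ≠ u := fun h' => hiso _ hab (h' ▸ Sym2.mem_mk_right a b)
          simp only [if_neg ha, if_neg hb]) hcon
      have hvu : v ≠ u := fun h' => hu (h' ▸ hv)
      rw [Sym2.eq_iff] at hxy
      rcases hxy with ⟨rfl, rfl⟩ | ⟨rfl, rfl⟩
      · simp [hvu] at hcoleq
      · simp [hvu, Ne.symm hvu] at hcoleq
    · -- an old edge
      have hne : s(u, v) ≠ e := fun h' => (hW.new_edge_not_mem hu) (h' ▸ he')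
      rw [Finset.erase_insert_of_ne hne] at hcon
      have hx : x ∈ Wg := hW.mem_of_mem_edge e he' x (hxy ▸ Sym2.mem_mk_left x y)
      have hy : y ∈ Wg := hW.mem_of_mem_edge e he' y (hxy ▸ Sym2.mem_mk_right x y)
      have hxu : x ≠ u := fun h' => hu (h' ▸ hx)
      have hyu : y ≠ u := fun h' => hu (h' ▸ hy)
      have hcon' : EConn (insert s(u,v) (↑(Eg.erase e) : Set (Sym2 V))) x y := by
        refine EConn.mono ?_ hcon
        intro f hf
        rw [Finset.coe_insert] at hf
        exact hf
      have := econn_collapse (S := (↑(Eg.erase e) : Set (Sym2 V))) (u := u) (v' := v)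
        (fun f hf hmem => hu (hW.mem_of_mem_edge f (Finset.mem_of_mem_erase hf) u hmem)) hcon'
      rw [if_neg hxu, if_neg hyu] at this
      exact ih e he' x y hxy this

lemma vertex_edge {W : Finset V} {E} (h : IsLTree W E) :
    2 ≤ W.card → ∀ v ∈ W, ∃ e ∈ E, v ∈ e := by
  induction h with
  | single v => intro h2; simp at h2
  | @grow Wg Eg u v hW hv hu ih =>
    intro _ z hz
    rcases Finset.mem_insert.mp hz with rfl | hz'
    · exact ⟨s(z, v), Finset.mem_insert_self _ _, Sym2.mem_mk_left _ _⟩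
    · rcases Nat.lt_or_ge Wg.card 2 with h1 | h2
      · have hc1 : Wg.card = 1 := by
          have := Finset.card_pos.mpr hW.nonempty
          omega
        obtain ⟨w, hw⟩ := Finset.card_eq_one.mp hc1
        rw [hw, Finset.mem_singleton] at hz' hv
        refine ⟨s(u, v), Finset.mem_insert_self _ _, ?_⟩
        rw [hz', ← hv]
        exact Sym2.mem_mk_right _ _
      · obtain ⟨e, he, hze⟩ := ih h2 z hz'
        exact ⟨e, Finset.mem_insert_of_mem he, hze⟩

lemma split {W : Finset V} {E} (h : IsLTree W E) :
    ∀ e ∈ E, ∃ (W₁ W₂ : Finset V) (E₁ E₂ : Finset (Sym2 V)) (x y : V),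
      IsLTree W₁ E₁ ∧ IsLTree W₂ E₂ ∧ W = W₁ ∪ W₂ ∧ Disjoint W₁ W₂ ∧
      E = insert e (E₁ ∪ E₂) ∧ e ∉ E₁ ∪ E₂ ∧ e = s(x, y) ∧ x ∈ W₁ ∧ y ∈ W₂ := by
  induction h with
  | single v => intro e he; exact absurd he (Finset.notMem_empty e)
  | @grow Wg Eg u v hW hv hu ih =>
    intro e he
    rcases Finset.mem_insert.mp he with rfl | he'
    · refine ⟨Wg, {u}, Eg, ∅, v, u, hW, IsLTree.single u, ?_, ?_, ?_, ?_, Sym2.eq_swap, hv,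
        Finset.mem_singleton_self u⟩
      · ext z
        simp only [Finset.mem_insert, Finset.mem_union, Finset.mem_singleton]
        tauto
      · simpa using hu
      · simp
      · simpa using hW.new_edge_not_mem (x := v) hu
    · obtain ⟨W₁, W₂, E₁, E₂, x, y, h1, h2, hWu, hWd, hEu, hEm, hexy, hx, hy⟩ := ih e he'
      have hne : s(u, v) ≠ e := fun h' => (hW.new_edge_not_mem hu) (h' ▸ he')
      have huW1 : u ∉ W₁ := fun h' => hu (hWu ▸ Finset.mem_union_left _ h')
      have huW2 : u ∉ W₂ := fun h' => hu (hWu ▸ Finset.mem_union_right _ h')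
      have hvmem : v ∈ W₁ ∨ v ∈ W₂ := by rw [hWu] at hv; exact Finset.mem_union.mp hv
      rcases hvmem with hv1 | hv2
      · refine ⟨insert u W₁, W₂, insert s(u,v) E₁, E₂, x, y,
          IsLTree.grow u v h1 hv1 huW1, h2, ?_, ?_, ?_, ?_, hexy,
          Finset.mem_insert_of_mem hx, hy⟩
        · rw [hWu]; ext z
          simp only [Finset.mem_insert, Finset.mem_union]
          tauto
        · rw [Finset.disjoint_left]
          intro a ha hb
          rcases Finset.mem_insert.mp ha with rfl | ha'
          · exact huW2 hb
          · exact (Finset.disjoint_left.mp hWd) ha' hb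
        · rw [hEu]; ext f
          simp only [Finset.mem_insert, Finset.mem_union]
          tauto
        · intro hmem
          rcases Finset.mem_union.mp hmem with hf | hf
          · rcases Finset.mem_insert.mp hf with h' | h'
            · exact hne h'.symm
            · exact hEm (Finset.mem_union_left _ h')
          · exact hEm (Finset.mem_union_right _ hf)
      · refine ⟨W₁, insert u W₂, E₁, insert s(u,v) E₂, x, y,
          h1, IsLTree.grow u v h2 hv2 huW2, ?_, ?_, ?_, ?_, hexy, hx,
          Finset.mem_insert_of_mem hy⟩
        · rw [hWu]; ext z
          simp only [Finset.mem_insert, Finset.mem_union]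
          tauto
        · rw [Finset.disjoint_left]
          intro a ha hb
          rcases Finset.mem_insert.mp hb with rfl | hb'
          · exact huW1 ha
          · exact (Finset.disjoint_left.mp hWd) ha hb'
        · rw [hEu]; ext f
          simp only [Finset.mem_insert, Finset.mem_union]
          tauto
        · intro hmem
          rcases Finset.mem_union.mp hmem with hf | hf
          · exact hEm (Finset.mem_union_left _ hf)
          · rcases Finset.mem_insert.mp hf with h' | h'
            · exact hne h'.symm
            · exact hEm (Finset.mem_union_right _ h')

lemma glue {W₂ E₂} (h2 : IsLTree W₂ E₂) :
    ∀ {W₁ E₁}, IsLTree W₁ E₁ → ∀ {x y : V}, Disjoint W₁ W₂ → x ∈ W₁ → y ∈ W₂ →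
      IsLTree (W₁ ∪ W₂) (insert s(x, y) (E₁ ∪ E₂)) := by
  induction h2 with
  | single v =>
    intro W₁ E₁ h1 x y hd hx hy
    rw [Finset.mem_singleton] at hy
    subst hy
    have hstep : IsLTree (insert y W₁) (insert s(y, x) E₁) :=
      IsLTree.grow y x h1 hx (Finset.disjoint_right.mp hd (Finset.mem_singleton_self y))
    have hs : insert y W₁ = W₁ ∪ {y} := by
      ext z; simp only [Finset.mem_insert, Finset.mem_union, Finset.mem_singleton]; tauto
    have he : insert s(y, x) E₁ = insert s(x, y) (E₁ ∪ ∅) := by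
      rw [Finset.union_empty, Sym2.eq_swap]
    rwa [hs, he] at hstep
  | @grow Wg Eg u v hW hv hu ih =>
    intro W₁ E₁ h1 x y hd hx hy
    have hdW : Disjoint W₁ Wg := Finset.disjoint_left.mpr
      (fun a ha hb => Finset.disjoint_left.mp hd ha (Finset.mem_insert_of_mem hb))
    have huW1 : u ∉ W₁ := fun h' => Finset.disjoint_left.mp hd h' (Finset.mem_insert_self u _)
    rcases Finset.mem_insert.mp hy with rfl | hy'
    · -- glue point is the new leaf u = y
      have h1' : IsLTree (insert y W₁) (insert s(y, x) E₁) := IsLTree.grow y x h1 hx huW1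
      have hd' : Disjoint (insert y W₁) Wg := Finset.disjoint_left.mpr (by
        intro a ha hb
        rcases Finset.mem_insert.mp ha with rfl | ha'
        · exact hu hb
        · exact Finset.disjoint_left.mp hdW ha' hb)
      have hstep := ih h1' hd' (Finset.mem_insert_self y W₁) hv
      have hs : insert y W₁ ∪ Wg = W₁ ∪ insert y Wg := by
        ext z; simp only [Finset.mem_insert, Finset.mem_union]; tauto
      have he : insert s(y, v) (insert s(y, x) E₁ ∪ Eg) =
          insert s(x, y) (E₁ ∪ insert s(y, v) Eg) := by
        ext f; simp only [Finset.mem_insert, Finset.mem_union]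
        rw [Sym2.eq_swap (a := x) (b := y)]
        tauto
      rwa [hs, he] at hstep
    · have hstep := IsLTree.grow u v (ih h1 hdW hx hy') (Finset.mem_union_right _ hv)
        (by
          intro h'
          rcases Finset.mem_union.mp h' with h'' | h''
          · exact huW1 h''
          · exact hu h'')
      have hs : insert u (W₁ ∪ Wg) = W₁ ∪ insert u Wg := by
        ext z; simp only [Finset.mem_insert, Finset.mem_union]; tauto
      have he : insert s(u, v) (insert s(x, y) (E₁ ∪ Eg)) =
          insert s(x, y) (E₁ ∪ insert s(u, v) Eg) := by
        ext f; simp only [Finset.mem_insert, Finset.mem_union]; tauto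
      rwa [hs, he] at hstep

lemma growset {W E} (h : IsLTree W E) (D : Finset V) :
    Disjoint D W → ∀ (t : V → V), (∀ v ∈ D, t v ∈ W) →
      IsLTree (W ∪ D) (E ∪ D.image fun v => s(v, t v)) := by
  induction D using Finset.induction_on with
  | empty => intro _ t _; simpa using h
  | @insert a D' ha ih =>
    intro hd t ht
    have hd' : Disjoint D' W := Finset.disjoint_left.mpr
      (fun z hz => Finset.disjoint_left.mp hd (Finset.mem_insert_of_mem hz))
    have haW : a ∉ W := Finset.disjoint_left.mp hd (Finset.mem_insert_self a D')
    have hstep := IsLTree.grow a (t a)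
      (ih hd' t (fun v hv => ht v (Finset.mem_insert_of_mem hv)))
      (Finset.mem_union_left _ (ht a (Finset.mem_insert_self a D'))) (by
        intro h'
        rcases Finset.mem_union.mp h' with h'' | h''
        · exact haW h''
        · exact ha h'')
    have hs : insert a (W ∪ D') = W ∪ insert a D' := by
      ext z; simp only [Finset.mem_insert, Finset.mem_union]; tauto
    have he : insert s(a, t a) (E ∪ D'.image fun v => s(v, t v)) =
        E ∪ (insert a D').image fun v => s(v, t v) := by
      rw [Finset.image_insert]
      ext f; simp only [Finset.mem_insert, Finset.mem_union]; tauto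
    rwa [hs, he] at hstep

end IsLTree

lemma econn_ends {E : Set (Sym2 V)} {a b : V} (h : EConn E a b) :
    a ≠ b → (∃ e ∈ E, a ∈ e) ∧ (∃ e ∈ E, b ∈ e) := by
  induction h with
  | rel x y hxy =>
    exact fun _ => ⟨⟨_, hxy, Sym2.mem_mk_left x y⟩, ⟨_, hxy, Sym2.mem_mk_right x y⟩⟩
  | refl x => exact fun h' => absurd rfl h'
  | symm x y _ ih => exact fun h' => ⟨(ih h'.symm).2, (ih h'.symm).1⟩
  | trans x y z _ _ ih1 ih2 =>
    intro hxz
    by_cases h1 : x = y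
    · exact h1 ▸ ih2 (h1 ▸ hxz)
    · by_cases h2 : y = z
      · exact h2 ▸ ih1 (h2 ▸ hxz : x ≠ y)
      · exact ⟨(ih1 h1).1, (ih2 h2).2⟩

/-- Characterization: connected + right edge count implies leaf-buildable tree. -/
lemma isLTree_of : ∀ (n : ℕ) (W : Finset V) (E : Finset (Sym2 V)), W.card = n →
    W.Nonempty → (∀ e ∈ E, ¬ e.IsDiag) → (∀ e ∈ E, ∀ x ∈ e, x ∈ W) →
    (∀ u ∈ W, ∀ v ∈ W, EConn (↑E : Set (Sym2 V)) u v) → W.card = E.card + 1 →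
    IsLTree W E := by
  intro n
  induction n using Nat.strong_induction_on with
  | _ n IH =>
    intro W E hn hne hdiag hsub hconn hcard
    rcases Nat.lt_or_ge n 2 with h2 | h2
    · -- single vertex
      have h1 : W.card = 1 := by
        have := Finset.card_pos.mpr hne; omega
      obtain ⟨v, hv⟩ := Finset.card_eq_one.mp h1
      have hE : E = ∅ := by
        rw [Finset.eq_empty_iff_forall_notMem]
        intro e he
        obtain ⟨x, y, rfl⟩ : ∃ a b, e = s(a, b) := Sym2.ind (fun a b => ⟨a, b, rfl⟩) e
        have hx := hsub _ he x (Sym2.mem_mk_left x y)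
        have hy := hsub _ he y (Sym2.mem_mk_right x y)
        rw [hv, Finset.mem_singleton] at hx hy
        exact hdiag _ he (by rw [Sym2.mk_isDiag_iff, hx, hy])
      rw [hv, hE]; exact IsLTree.single v
    · -- find a leaf by degree counting
      have hdegsum : ∑ v ∈ W, (E.filter fun e => v ∈ e).card = 2 * E.card := by
        have h1 : ∀ v, (E.filter fun e => v ∈ e).card = ∑ e ∈ E, (if v ∈ e then 1 else 0) := by
          intro v; rw [Finset.card_filter]
        calc ∑ v ∈ W, (E.filter fun e => v ∈ e).card
            = ∑ v ∈ W, ∑ e ∈ E, (if v ∈ e then 1 else 0) := by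
              exact Finset.sum_congr rfl (fun v _ => h1 v)
          _ = ∑ e ∈ E, ∑ v ∈ W, (if v ∈ e then 1 else 0) := Finset.sum_comm
          _ = ∑ e ∈ E, (W.filter fun v => v ∈ e).card := by
              exact Finset.sum_congr rfl (fun e _ => (Finset.card_filter _ _).symm)
          _ = ∑ e ∈ E, 2 := by
              refine Finset.sum_congr rfl (fun e he => ?_)
              obtain ⟨x, y, rfl⟩ : ∃ a b, e = s(a, b) := Sym2.ind (fun a b => ⟨a, b, rfl⟩) e
              have hxy : x ≠ y := by
                intro h'; exact hdiag _ he (by rw [Sym2.mk_isDiag_iff, h'])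
              have : (W.filter fun v => v ∈ s(x, y)) = {x, y} := by
                ext z
                simp only [Finset.mem_filter, Finset.mem_insert, Finset.mem_singleton, Sym2.mem_iff]
                constructor
                · rintro ⟨_, rfl | rfl⟩
                  · left; rfl
                  · right; rfl
                · rintro (rfl | rfl)
                  · exact ⟨hsub _ he z (Sym2.mem_mk_left _ _), Or.inl rfl⟩
                  · exact ⟨hsub _ he z (Sym2.mem_mk_right _ _), Or.inr rfl⟩
              rw [this, Finset.card_insert_of_notMem (by simpa using hxy), Finset.card_singleton]
          _ = 2 * E.card := by rw [Finset.sum_const, smul_eq_mul, mul_comm]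
      have hdeg1 : ∀ v ∈ W, 1 ≤ (E.filter fun e => v ∈ e).card := by
        intro v hv
        obtain ⟨w, hw, hwv⟩ : ∃ w ∈ W, w ≠ v := by
          by_contra hno
          push_neg at hno
          have : W ⊆ {v} := fun z hz => Finset.mem_singleton.mpr (hno z hz)
          have := Finset.card_le_card this
          simp at this
          omega
        obtain ⟨e, he, hve⟩ := (econn_ends (hconn v hv w hw) (fun h' => hwv h'.symm)).1
        exact Finset.card_pos.mpr ⟨e, Finset.mem_filter.mpr ⟨he, hve⟩⟩
      have hleaf : ∃ v ∈ W, (E.filter fun e => v ∈ e).card = 1 := by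
        by_contra hno
        push_neg at hno
        have hge : ∀ v ∈ W, 2 ≤ (E.filter fun e => v ∈ e).card := by
          intro v hv
          have := hdeg1 v hv
          have := hno v hv
          omega
        have : 2 * W.card ≤ ∑ v ∈ W, (E.filter fun e => v ∈ e).card := by
          calc 2 * W.card = ∑ _v ∈ W, 2 := by rw [Finset.sum_const, smul_eq_mul, mul_comm]
            _ ≤ _ := Finset.sum_le_sum hge
        rw [hdegsum] at this
        omega
      obtain ⟨v, hvW, hvdeg⟩ := hleaf
      obtain ⟨e, he⟩ := Finset.card_eq_one.mp hvdeg
      have heE : e ∈ E := by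
        have : e ∈ E.filter fun e => v ∈ e := he ▸ Finset.mem_singleton_self e
        exact (Finset.mem_filter.mp this).1
      have hve : v ∈ e := by
        have : e ∈ E.filter fun e => v ∈ e := he ▸ Finset.mem_singleton_self e
        exact (Finset.mem_filter.mp this).2
      obtain ⟨v', rfl⟩ : ∃ b, e = s(v, b) := by
        obtain ⟨x, y, rfl⟩ : ∃ a b, e = s(a, b) := Sym2.ind (fun a b => ⟨a, b, rfl⟩) e
        rcases Sym2.mem_iff.mp hve with rfl | rfl
        · exact ⟨y, rfl⟩
        · exact ⟨x, Sym2.eq_swap⟩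
      have hvv' : v ≠ v' := fun h' => hdiag _ heE (by rw [Sym2.mk_isDiag_iff, h'])
      have hv'W : v' ∈ W := hsub _ heE v' (Sym2.mem_mk_right _ _)
      -- every other edge avoids v
      have honly : ∀ f ∈ E, f ≠ s(v, v') → v ∉ f := by
        intro f hf hfne hvf
        have : f ∈ E.filter fun e => v ∈ e := Finset.mem_filter.mpr ⟨hf, hvf⟩
        rw [he, Finset.mem_singleton] at this
        exact hfne this
      set W' := W.erase v with hW'
      set E' := E.erase s(v, v') with hE'
      have hW'card : W'.card = n - 1 := by rw [hW', Finset.card_erase_of_mem hvW, hn]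
      have hE'sub : ∀ f ∈ E', ∀ x ∈ f, x ∈ W' := by
        intro f hf x hx
        have hfE := Finset.mem_of_mem_erase hf
        have hfne := Finset.ne_of_mem_erase hf
        refine Finset.mem_erase.mpr ⟨?_, hsub _ hfE x hx⟩
        intro h'
        exact honly f hfE hfne (h' ▸ hx)
      have hconn' : ∀ u ∈ W', ∀ w ∈ W', EConn (↑E' : Set (Sym2 V)) u w := by
        intro a ha b hb
        have haW := Finset.mem_of_mem_erase ha
        have hbW := Finset.mem_of_mem_erase hb
        have hane := Finset.ne_of_mem_erase ha
        have hbne := Finset.ne_of_mem_erase hb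
        have h0 : EConn (insert s(v, v') (↑E' : Set (Sym2 V))) a b := by
          refine EConn.mono ?_ (hconn a haW b hbW)
          intro f hf
          by_cases hfe : f = s(v, v')
          · rw [hfe]; exact Set.mem_insert _ _
          · exact Set.mem_insert_of_mem _ (Finset.mem_coe.mpr (Finset.mem_erase.mpr ⟨hfe, hf⟩))
        have := econn_collapse (S := (↑E' : Set (Sym2 V))) (u := v) (v' := v')
          (fun f hf hmem => honly f (Finset.mem_of_mem_erase hf) (Finset.ne_of_mem_erase hf) hmem) h0
        rwa [if_neg hane, if_neg hbne] at this
      have hEcard : 1 ≤ E.card := Finset.card_pos.mpr ⟨_, heE⟩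
      have hIH := IH (n - 1) (by omega) W' E' hW'card
        (Finset.card_pos.mp (by omega))
        (fun f hf => hdiag f (Finset.mem_of_mem_erase hf)) hE'sub hconn'
        (by
          rw [hW'card, hE', Finset.card_erase_of_mem heE]
          omega)
      have := IsLTree.grow v v' hIH
        (Finset.mem_erase.mpr ⟨fun h' => hvv' h'.symm, hv'W⟩)
        (Finset.notMem_erase v W)
      rwa [Finset.insert_erase hvW, Finset.insert_erase heE] at this


lemma reachable_econn {G : SimpleGraph V} {u v : V} (h : G.Reachable u v) :
    EConn G.edgeSet u v := by
  obtain ⟨p⟩ := h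
  induction p with
  | nil => exact EConn.rfl _
  | cons h p ih => exact (EConn.base (G.mem_edgeSet.mpr h)).trans ih

lemma econn_reachable {E : Finset (Sym2 V)} (hnd : ∀ e ∈ E, ¬ e.IsDiag) {u v : V}
    (h : EConn (↑E : Set (Sym2 V)) u v) :
    (SimpleGraph.fromEdgeSet (↑E : Set (Sym2 V))).Reachable u v := by
  induction h with
  | rel a b hab =>
    refine SimpleGraph.Adj.reachable ((SimpleGraph.fromEdgeSet_adj _).mpr ⟨hab, ?_⟩)
    intro hd
    exact hnd _ hab (by rw [Sym2.mk_isDiag_iff]; exact hd)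
  | refl a => exact SimpleGraph.Reachable.refl a
  | symm a b _ ih => exact ih.symm
  | trans a b c _ _ ih1 ih2 => exact ih1.trans ih2

lemma IsLTree.isTree [Fintype V] {E : Finset (Sym2 V)} (h : IsLTree Finset.univ E) :
    (SimpleGraph.fromEdgeSet (↑E : Set (Sym2 V))).IsTree := by
  have hnd := h.nondiag
  constructor
  · rw [SimpleGraph.connected_iff]
    refine ⟨fun u v => econn_reachable hnd (h.conn u (Finset.mem_univ u) v (Finset.mem_univ v)),
      ?_⟩
    obtain ⟨v, _⟩ := h.nonempty
    exact ⟨v⟩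
  · rw [SimpleGraph.isAcyclic_iff_forall_edge_isBridge]
    intro e he
    rw [SimpleGraph.edgeSet_fromEdgeSet] at he
    obtain ⟨heE, hediag⟩ := he
    obtain ⟨x, y, rfl⟩ : ∃ a b, e = s(a, b) := Sym2.ind (fun a b => ⟨a, b, rfl⟩) e
    have hxy : x ≠ y := by
      intro h'
      exact hediag (show s(x,y).IsDiag from Sym2.mk_isDiag_iff.mpr h')
    rw [SimpleGraph.isBridge_iff]
    intro hreach
    have hec := reachable_econn hreach
    have hsub : (SimpleGraph.fromEdgeSet (↑E : Set (Sym2 V)) \ SimpleGraph.fromEdgeSet {s(x, y)}).edgeSet ⊆ (↑(E.erase s(x, y)) : Set (Sym2 V)) := by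
      intro f hf
      rw [SimpleGraph.edgeSet_sdiff, SimpleGraph.edgeSet_fromEdgeSet,
        SimpleGraph.edgeSet_fromEdgeSet] at hf
      obtain ⟨⟨hfE, hfd⟩, hfne⟩ := hf
      rw [Finset.coe_erase]
      refine ⟨hfE, ?_⟩
      intro hfe
      exact hfne ⟨hfe, hfd⟩
    exact h.bridge _ heE x y rfl (EConn.mono hsub hec)

lemma isLTree_univ_of_isTree [Fintype V] {G : SimpleGraph V} [Fintype G.edgeSet]
    (hG : G.IsTree) : IsLTree Finset.univ G.edgeFinset := by
  have hNE : Nonempty V := hG.isConnected.nonempty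
  apply isLTree_of (Finset.univ.card) _ _ rfl Finset.univ_nonempty
  · intro e he
    exact SimpleGraph.not_isDiag_of_mem_edgeSet G (SimpleGraph.mem_edgeFinset.mp he)
  · intro e _ x _
    exact Finset.mem_univ x
  · intro u _ v _
    have : EConn G.edgeSet u v := reachable_econn (hG.isConnected.preconnected u v)
    rwa [← SimpleGraph.coe_edgeFinset] at this
  · rw [Finset.card_univ, ← hG.card_edgeFinset]

/-- The key minimality criterion: if every `G`-edge has its endpoints connected in `E0` by
edges of no larger weight, then `E0` has minimum total weight among spanning trees of `G`. -/
lemma tree_min [Fintype V] (w : Sym2 V → ℝ) (E0 : Finset (Sym2 V))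
    (h0 : IsLTree Finset.univ E0) (G : SimpleGraph V)
    (hH : ∀ x y : V, G.Adj x y →
      EConn {f : Sym2 V | f ∈ E0 ∧ w f ≤ w s(x, y)} x y)
    (M : SimpleGraph V) (hMG : M ≤ G) (hMT : M.IsTree) [Fintype M.edgeSet] :
    ∑ e ∈ E0, w e ≤ ∑ e ∈ M.edgeFinset, w e := by
  have hNE : Nonempty V := hMT.isConnected.nonempty
  have hcards : E0.card = M.edgeFinset.card := by
    have h1 := h0.card_eq
    have h2 := hMT.card_edgeFinset
    rw [Finset.card_univ] at h1
    omega
  apply sum_le_of_cdf w E0.card E0 M.edgeFinset rfl hcards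
  intro t
  -- coloring by components of light edges of E0
  set col : V → Set V := fun v => {z | EConn (↑(E0.filter fun f => w f < t) : Set (Sym2 V)) z v}
    with hcoldef
  have hcol_iff : ∀ a b : V, col a = col b ↔
      EConn (↑(E0.filter fun f => w f < t) : Set (Sym2 V)) a b := by
    intro a b
    constructor
    · intro h
      have ha : a ∈ col a := EConn.rfl a
      rw [h] at ha
      exact ha
    · intro h
      ext z
      exact ⟨fun hz => hz.trans h, fun hz => hz.trans h.symm⟩
  have hlight_same : ∀ f ∈ E0.filter (fun f => w f < t), sameC col f := by
    intro f hf
    obtain ⟨a, b, rfl⟩ : ∃ x y, f = s(x, y) := Sym2.ind (fun x y => ⟨x, y, rfl⟩) f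
    rw [sameC_mk, hcol_iff]
    exact EConn.base (Finset.mem_coe.mpr hf)
  -- heavy E0 edges are exactly the crossing edges
  have hkey : E0.filter (fun e => t ≤ w e) = E0.filter (fun e => ¬ sameC col e) := by
    ext e
    simp only [Finset.mem_filter]
    constructor
    · rintro ⟨heE, ht⟩
      refine ⟨heE, ?_⟩
      obtain ⟨x, y, rfl⟩ : ∃ a b, e = s(a, b) := Sym2.ind (fun a b => ⟨a, b, rfl⟩) e
      rw [sameC_mk, hcol_iff]
      intro hcon
      refine h0.bridge _ heE x y rfl (EConn.mono ?_ hcon)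
      intro f hf
      rw [Finset.mem_coe, Finset.mem_filter] at hf
      rw [Finset.coe_erase]
      refine ⟨hf.1, ?_⟩
      intro hfe
      rw [Set.mem_singleton_iff] at hfe
      subst hfe
      exact absurd ht (not_le.mpr hf.2)
    · rintro ⟨heE, hcr⟩
      refine ⟨heE, ?_⟩
      by_contra hlt
      exact hcr (hlight_same e (Finset.mem_filter.mpr ⟨heE, not_le.mp hlt⟩))
  have hY := LemY (α := Set V) E0 h0.bridge (E0.filter (fun e => ¬ sameC col e)).card col
    (by
      intro u v huv
      rw [hcol_iff] at huv
      refine EConn.mono ?_ huv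
      intro f hf
      rw [Finset.mem_coe] at hf ⊢
      rw [Finset.mem_filter] at hf ⊢
      exact ⟨hf.1, hlight_same f (Finset.mem_filter.mpr hf)⟩) rfl
  have hX := LemX (α := Set V) M.edgeFinset
    (by
      intro u v
      have : EConn M.edgeSet u v := reachable_econn (hMT.isConnected.preconnected u v)
      rwa [← SimpleGraph.coe_edgeFinset] at this)
    (Finset.univ.image col).card col rfl
  have hMsub : M.edgeFinset.filter (fun e => ¬ sameC col e) ⊆
      M.edgeFinset.filter (fun e => t ≤ w e) := by
    intro e he
    rw [Finset.mem_filter] at he ⊢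
    obtain ⟨heM, hcr⟩ := he
    refine ⟨heM, ?_⟩
    obtain ⟨x, y, rfl⟩ : ∃ a b, e = s(a, b) := Sym2.ind (fun a b => ⟨a, b, rfl⟩) e
    have hadj : G.Adj x y := hMG (M.mem_edgeSet.mp (SimpleGraph.mem_edgeFinset.mp heM))
    by_contra hlt
    apply hcr
    rw [sameC_mk, hcol_iff]
    refine EConn.mono ?_ (hH x y hadj)
    intro f hf
    obtain ⟨hf1, hf2⟩ := hf
    rw [Finset.mem_coe, Finset.mem_filter]
    exact ⟨hf1, lt_of_le_of_lt hf2 (not_le.mp hlt)⟩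
  have h4 := Finset.card_le_card hMsub
  rw [hkey]
  have hbe : ∀ (i1 i2 : DecidableEq (Set V)), (@Finset.image V (Set V) i1 col Finset.univ).card = (@Finset.image V (Set V) i2 col Finset.univ).card := fun i1 i2 => by rw [Subsingleton.elim i1 i2]
  rw [hbe _ (fun a b => Classical.propDecidable (a = b))] at hX hY
  omega

end SMST

namespace SMST
open StackMST
open Finset

attribute [local instance] Classical.propDecidable

variable {V : Type*}

lemma esum_eq {S : Set (Sym2 V)} (hS : S.Finite) (w : Sym2 V → ℝ) :
    esum w S = ∑ e ∈ hS.toFinset, w e :=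
  finsum_mem_eq_finite_toFinset_sum w hS

lemma weight_eq [Fintype V] (T : SimpleGraph V) (c p : Sym2 V → ℝ) (M : SimpleGraph V)
    [Fintype M.edgeSet] :
    weight T c p M = ∑ e ∈ M.edgeFinset, (if e ∈ T.edgeSet then c e else p e) := by
  rw [weight, esum_eq (Set.toFinite _), esum_eq (Set.toFinite _)]
  rw [← Finset.sum_filter_add_sum_filter_not M.edgeFinset (fun e => e ∈ T.edgeSet)]
  have h1 : (Set.toFinite (M.edgeSet ∩ T.edgeSet)).toFinset =
      M.edgeFinset.filter (fun e => e ∈ T.edgeSet) := by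
    ext e
    simp only [Set.Finite.mem_toFinset, Finset.mem_filter, SimpleGraph.mem_edgeFinset]
    exact Set.mem_inter_iff e _ _
  have h2 : (Set.toFinite (M.edgeSet \ T.edgeSet)).toFinset =
      M.edgeFinset.filter (fun e => e ∉ T.edgeSet) := by
    ext e
    simp only [Set.Finite.mem_toFinset, Finset.mem_filter, SimpleGraph.mem_edgeFinset]
    exact Set.mem_diff e
  rw [h1, h2]
  congr 1
  · exact Finset.sum_congr rfl (fun e he => by
      rw [if_pos (Finset.mem_filter.mp he).2])
  · exact Finset.sum_congr rfl (fun e he => by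
      rw [if_neg (Finset.mem_filter.mp he).2])

lemma redCost_eq [Fintype V] (T : SimpleGraph V) (c : Sym2 V → ℝ) [Fintype T.edgeSet] :
    redCost T c = ∑ e ∈ T.edgeFinset, c e := by
  rw [redCost, esum_eq (Set.toFinite _)]
  refine Finset.sum_congr ?_ (fun _ _ => rfl)
  ext e
  simp only [Set.Finite.mem_toFinset, SimpleGraph.mem_edgeFinset]

lemma redCost_nonneg [Fintype V] (T : SimpleGraph V) (c : Sym2 V → ℝ)
    (hc : ∀ e ∈ T.edgeSet, 0 ≤ c e) : 0 ≤ redCost T c := by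
  rw [redCost, esum_eq (Set.toFinite _)]
  exact Finset.sum_nonneg (fun e he => hc e ((Set.Finite.mem_toFinset _).mp he))

/-- Any candidate revenue of a minimal spanning tree is at most the red cost. -/
lemma rev_le_redCost [Fintype V] (T : SimpleGraph V) (hT : T.IsTree)
    (c : Sym2 V → ℝ) (hc : ∀ e ∈ T.edgeSet, 0 ≤ c e) (F : SimpleGraph V) (p : Sym2 V → ℝ)
    (M : SimpleGraph V) (hM : IsSpanningTreeOf (T ⊔ F) M)
    (hmin : ∀ M' : SimpleGraph V, IsSpanningTreeOf (T ⊔ F) M' →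
      weight T c p M ≤ weight T c p M') :
    blueRevenue T p M ≤ redCost T c := by
  have hwT : weight T c p T = redCost T c := by
    rw [weight, redCost, Set.inter_self, Set.diff_self]
    have : esum p (∅ : Set (Sym2 V)) = 0 := finsum_mem_empty
    rw [this, add_zero]
  have h1 : weight T c p M ≤ redCost T c := by
    rw [← hwT]
    exact hmin T ⟨le_sup_left, hT⟩
  have h2 : 0 ≤ esum c (M.edgeSet ∩ T.edgeSet) := by
    rw [esum_eq (Set.toFinite _)]
    refine Finset.sum_nonneg (fun e he => ?_)
    rw [Set.Finite.mem_toFinset] at he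
    exact hc e he.2
  have : blueRevenue T p M = weight T c p M - esum c (M.edgeSet ∩ T.edgeSet) := by
    rw [weight, blueRevenue]; ring
  rw [this]
  linarith

lemma followerRevenue_le_redCost [Fintype V] (T : SimpleGraph V) (hT : T.IsTree)
    (c : Sym2 V → ℝ) (hc : ∀ e ∈ T.edgeSet, 0 ≤ c e) (F : SimpleGraph V) (p : Sym2 V → ℝ) :
    followerRevenue T c F p ≤ redCost T c := by
  apply Real.sSup_le
  · rintro r ⟨M, hM, hmin, rfl⟩
    exact rev_le_redCost T hT c hc F p M hM hmin
  · exact redCost_nonneg T c hc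

/-- The main interface: a spanning tree certificate yields a lower bound on optimal revenue. -/
lemma strategy_bound [Fintype V] (T : SimpleGraph V) (hT : T.IsTree)
    (c : Sym2 V → ℝ) (hc : ∀ e ∈ T.edgeSet, 0 ≤ c e)
    (E0 : Finset (Sym2 V)) (pr : Sym2 V → ℝ)
    (hLT : IsLTree Finset.univ E0)
    (hpr : ∀ e ∈ E0, 0 ≤ pr e)
    (hred : ∀ e ∈ E0, e ∈ T.edgeSet → pr e = c e)
    (hH : ∀ x y : V, T.Adj x y →
      EConn {f : Sym2 V | f ∈ E0 ∧ pr f ≤ c s(x, y)} x y) :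
    ∑ e ∈ E0.filter (fun e => e ∉ T.edgeSet), pr e ≤ optRevenue T c := by
  classical
  set p : Sym2 V → ℝ := fun e => if e ∈ E0 then pr e else 0 with hpdef
  set w : Sym2 V → ℝ := fun e => if e ∈ T.edgeSet then c e else p e with hwdef
  have hwE0 : ∀ e ∈ E0, w e = pr e := by
    intro e he
    by_cases heT : e ∈ T.edgeSet
    · simp only [hwdef, if_pos heT]
      exact (hred e he heT).symm
    · simp only [hwdef, hpdef, if_neg heT, if_pos he]
  set F : SimpleGraph V :=
    SimpleGraph.fromEdgeSet (↑(E0.filter (fun e => e ∉ T.edgeSet)) : Set (Sym2 V)) with hFdef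
  set M0 : SimpleGraph V := SimpleGraph.fromEdgeSet (↑E0 : Set (Sym2 V)) with hM0def
  have hM0edge : M0.edgeSet = (↑E0 : Set (Sym2 V)) := by
    rw [hM0def, SimpleGraph.edgeSet_fromEdgeSet]
    ext e
    simp only [Set.mem_diff, Finset.mem_coe, Set.mem_setOf_eq]
    exact ⟨fun h => h.1, fun h => ⟨h, hLT.nondiag e h⟩⟩
  have hFedge : F.edgeSet = (↑(E0.filter (fun e => e ∉ T.edgeSet)) : Set (Sym2 V)) := by
    rw [hFdef, SimpleGraph.edgeSet_fromEdgeSet]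
    ext e
    simp only [Set.mem_diff, Finset.mem_coe, Set.mem_setOf_eq, Finset.mem_filter]
    exact ⟨fun h => h.1, fun h => ⟨h, hLT.nondiag e h.1⟩⟩
  have hM0le : M0 ≤ T ⊔ F := by
    intro a b hadj
    rw [hM0def] at hadj
    rw [SimpleGraph.fromEdgeSet_adj] at hadj
    obtain ⟨hab, hne⟩ := hadj
    rw [Finset.mem_coe] at hab
    by_cases hT' : s(a, b) ∈ T.edgeSet
    · exact (SimpleGraph.sup_adj T F a b).mpr (Or.inl (T.mem_edgeSet.mp hT'))
    · refine (SimpleGraph.sup_adj T F a b).mpr (Or.inr ?_)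
      rw [hFdef, SimpleGraph.fromEdgeSet_adj]
      exact ⟨Finset.mem_coe.mpr (Finset.mem_filter.mpr ⟨hab, hT'⟩), hne⟩
  have hM0T : M0.IsTree := hLT.isTree
  have hblue : IsBlueSet T F := by
    intro a b hadj
    rw [hFdef, SimpleGraph.fromEdgeSet_adj] at hadj
    obtain ⟨hab, hne⟩ := hadj
    rw [Finset.mem_coe, Finset.mem_filter] at hab
    rw [SimpleGraph.compl_adj]
    exact ⟨hne, fun hTadj => hab.2 (T.mem_edgeSet.mpr hTadj)⟩
  have hpnn : ∀ e ∈ F.edgeSet, 0 ≤ p e := by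
    intro e he
    rw [hFedge, Finset.mem_coe, Finset.mem_filter] at he
    simp only [hpdef, if_pos he.1]
    exact hpr e he.1
  -- minimality of M0
  have hmin : ∀ M' : SimpleGraph V, IsSpanningTreeOf (T ⊔ F) M' →
      weight T c p M0 ≤ weight T c p M' := by
    intro M' hM'
    obtain ⟨hM'le, hM'T⟩ := hM'
    haveI : Fintype M0.edgeSet := Set.Finite.fintype (Set.toFinite _)
    haveI : Fintype M'.edgeSet := Set.Finite.fintype (Set.toFinite _)
    rw [weight_eq T c p M0, weight_eq T c p M']
    have hM0fin : M0.edgeFinset = E0 := by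
      ext e
      rw [SimpleGraph.mem_edgeFinset, hM0edge, Finset.mem_coe]
    rw [hM0fin]
    have hwsame : ∀ e ∈ E0, (if e ∈ T.edgeSet then c e else p e) = w e := fun e he => rfl
    have hHw : ∀ x y : V, (T ⊔ F).Adj x y →
        EConn {f : Sym2 V | f ∈ E0 ∧ w f ≤ w s(x, y)} x y := by
      intro x y hadj
      rcases (SimpleGraph.sup_adj T F x y).mp hadj with hTadj | hFadj
      · have hwxy : w s(x, y) = c s(x, y) := by
          simp only [hwdef, if_pos (T.mem_edgeSet.mpr hTadj)]
        rw [hwxy]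
        refine EConn.mono ?_ (hH x y hTadj)
        intro f hf
        obtain ⟨hf1, hf2⟩ := hf
        exact ⟨hf1, by rw [hwE0 f hf1]; exact hf2⟩
      · rw [hFdef, SimpleGraph.fromEdgeSet_adj] at hFadj
        obtain ⟨hmem, _⟩ := hFadj
        rw [Finset.mem_coe, Finset.mem_filter] at hmem
        exact EConn.base ⟨hmem.1, le_refl _⟩
    exact tree_min w E0 hLT (T ⊔ F) hHw M' hM'le hM'T
  -- the revenue of M0
  have hrev : blueRevenue T p M0 = ∑ e ∈ E0.filter (fun e => e ∉ T.edgeSet), pr e := by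
    rw [blueRevenue, esum_eq (Set.toFinite _)]
    have : (Set.toFinite (M0.edgeSet \ T.edgeSet)).toFinset =
        E0.filter (fun e => e ∉ T.edgeSet) := by
      ext e
      rw [Set.Finite.mem_toFinset, Set.mem_diff, hM0edge, Finset.mem_coe, Finset.mem_filter]
    rw [this]
    refine Finset.sum_congr rfl (fun e he => ?_)
    rw [Finset.mem_filter] at he
    simp only [hpdef, if_pos he.1]
  -- chain of sSup inequalities
  have hmem_inner : blueRevenue T p M0 ∈
      {r | ∃ M : SimpleGraph V, IsSpanningTreeOf (T ⊔ F) M ∧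
        (∀ M' : SimpleGraph V, IsSpanningTreeOf (T ⊔ F) M' →
          weight T c p M ≤ weight T c p M') ∧ r = blueRevenue T p M} :=
    ⟨M0, ⟨hM0le, hM0T⟩, hmin, rfl⟩
  have h1 : blueRevenue T p M0 ≤ followerRevenue T c F p := by
    apply le_csSup _ hmem_inner
    refine ⟨redCost T c, ?_⟩
    rintro r ⟨M, hM, hminM, rfl⟩
    exact rev_le_redCost T hT c hc F p M hM hminM
  have h2 : followerRevenue T c F p ≤ optRevenue T c := by
    apply le_csSup
    · refine ⟨redCost T c, ?_⟩
      rintro r ⟨F', p', _, _, rfl⟩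
      exact followerRevenue_le_redCost T hT c hc F' p'
    · exact ⟨F, p, hblue, hpnn, rfl⟩
  rw [← hrev]
  exact h1.trans h2


lemma edge_has_mem (e : Sym2 V) : ∃ x, x ∈ e := by
  obtain ⟨a, b, rfl⟩ : ∃ a b, e = s(a, b) := Sym2.ind (fun a b => ⟨a, b, rfl⟩) e
  exact ⟨a, Sym2.mem_mk_left a b⟩

lemma edges_disjoint_of_supports {W₁ W₂ : Finset V} {E₁ E₂ : Finset (Sym2 V)}
    (h1 : IsLTree W₁ E₁) (h2 : IsLTree W₂ E₂) (hd : Disjoint W₁ W₂) : Disjoint E₁ E₂ := by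
  rw [Finset.disjoint_left]
  intro e he1 he2
  obtain ⟨x, hx⟩ := edge_has_mem e
  exact Finset.disjoint_left.mp hd (h1.mem_of_mem_edge e he1 x hx)
    (h2.mem_of_mem_edge e he2 x hx)

/-- The Kruskal-style recursive construction (Strategy 1). -/
lemma strat1_rec [Fintype V] (T : SimpleGraph V) [Fintype T.edgeSet] (c : Sym2 V → ℝ)
    {K : Type*} [LinearOrder K] (key : Sym2 V → K)
    (hkey_inj : Function.Injective key) (hkeyc : ∀ e f : Sym2 V, key e ≤ key f → c e ≤ c f)
    (hc : ∀ e ∈ T.edgeSet, 0 ≤ c e) :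
    ∀ (n : ℕ) (W : Finset V) (ER : Finset (Sym2 V)), W.card = n →
      IsLTree W ER → (ER = T.edgeFinset.filter (fun e => ∀ x ∈ e, x ∈ W)) →
      (∀ e ∈ T.edgeFinset, (∃ x ∈ e, x ∈ W) → e ∉ ER → ∀ f ∈ ER, key f < key e) →
      ∃ (E0 : Finset (Sym2 V)) (pr : Sym2 V → ℝ),
        IsLTree W E0 ∧
        (∀ g ∈ E0, 0 ≤ pr g) ∧
        (∀ g ∈ E0, g ∈ T.edgeSet → pr g = c g) ∧
        (∀ g ∈ E0, ∃ f ∈ ER, pr g ≤ c f) ∧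
        (∀ f ∈ ER, ∀ x y : V, s(x, y) = f →
          EConn {g : Sym2 V | g ∈ E0 ∧ pr g ≤ c f} x y) ∧
        (∀ g ∈ E0, g ∈ T.edgeSet → ∀ e ∈ T.edgeFinset, e ≠ g → (∃ x, x ∈ e ∧ x ∈ g) →
          key g < key e) ∧
        (∑ g ∈ E0, pr g = ∑ f ∈ ER, c f) := by
  intro n
  induction n using Nat.strong_induction_on with
  | _ n IH =>
    intro W ER hn hLT hch hbnd
    rcases Nat.lt_or_ge ER.card 2 with hsmall | hbig
    · -- base: at most one red edge, keep everything
      refine ⟨ER, c, hLT, ?_, fun g _ _ => rfl, ?_, ?_, ?_, ?_⟩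
      · intro g hg
        have : g ∈ T.edgeFinset := (Finset.mem_filter.mp (hch ▸ hg)).1
        exact hc g (SimpleGraph.mem_edgeFinset.mp this)
      · intro g hg; exact ⟨g, hg, le_refl _⟩
      · intro f hf x y hxy
        refine EConn.base ?_
        rw [hxy]
        exact ⟨hf, le_refl _⟩
      · intro g hg _ e he hne hshare
        by_cases heER : e ∈ ER
        · exfalso
          have h1 : 1 ≤ ER.card := Finset.card_pos.mpr ⟨g, hg⟩
          have : ({g, e} : Finset (Sym2 V)) ⊆ ER := by
            intro z hz
            rcases Finset.mem_insert.mp hz with rfl | hz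
            · exact hg
            · rw [Finset.mem_singleton] at hz; exact hz ▸ heER
          have h2 : ({g, e} : Finset (Sym2 V)).card = 2 := by
            rw [Finset.card_insert_of_notMem (by simpa using fun h => hne h.symm),
              Finset.card_singleton]
          have := Finset.card_le_card this
          omega
        · obtain ⟨x, hxe, hxg⟩ := hshare
          refine hbnd e he ⟨x, hxe, ?_⟩ heER g hg
          exact hLT.mem_of_mem_edge g hg x hxg
      · rfl
    · -- recursive case: split at the key-maximal edge
      have hERne : ER.Nonempty := Finset.card_pos.mp (by omega)
      obtain ⟨fs, hfsER, hfsmax⟩ := Finset.exists_max_image ER key hERne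
      obtain ⟨W₁, W₂, E₁, E₂, x, y, h1, h2, hWu, hWd, hEu, hEm, hfxy, hx, hy⟩ :=
        hLT.split fs hfsER
      have hfs_lt : ∀ f ∈ ER, f ≠ fs → key f < key fs :=
        fun f hf hne => lt_of_le_of_ne (hfsmax f hf) (fun h => hne (hkey_inj h))
      have hER_ET : ER ⊆ T.edgeFinset := by
        intro f hf
        exact (Finset.mem_filter.mp (hch ▸ hf)).1
      have hE1sub : E₁ ⊆ ER := fun f hf => hEu ▸ Finset.mem_insert_of_mem (Finset.mem_union_left _ hf)
      have hE2sub : E₂ ⊆ ER := fun f hf => hEu ▸ Finset.mem_insert_of_mem (Finset.mem_union_right _ hf)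
      have hfs_notin1 : fs ∉ E₁ := fun h => hEm (Finset.mem_union_left _ h)
      have hfs_notin2 : fs ∉ E₂ := fun h => hEm (Finset.mem_union_right _ h)
      -- characterizations of the parts
      have hch1 : E₁ = T.edgeFinset.filter (fun e => ∀ z ∈ e, z ∈ W₁) := by
        ext f
        constructor
        · intro hf
          refine Finset.mem_filter.mpr ⟨hER_ET (hE1sub hf), fun z hz => h1.mem_of_mem_edge f hf z hz⟩
        · intro hf
          obtain ⟨hfT, hfW1⟩ := Finset.mem_filter.mp hf
          have hfER : f ∈ ER := by
            rw [hch]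
            exact Finset.mem_filter.mpr ⟨hfT, fun z hz => hWu ▸ Finset.mem_union_left _ (hfW1 z hz)⟩
          rw [hEu] at hfER
          rcases Finset.mem_insert.mp hfER with rfl | hfER'
          · exfalso
            have : y ∈ W₁ := hfW1 y (hfxy ▸ Sym2.mem_mk_right x y)
            exact Finset.disjoint_left.mp hWd this hy
          · rcases Finset.mem_union.mp hfER' with hf1 | hf2
            · exact hf1
            · exfalso
              obtain ⟨z, hz⟩ := edge_has_mem f
              exact Finset.disjoint_left.mp hWd (hfW1 z hz) (h2.mem_of_mem_edge f hf2 z hz)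
      have hch2 : E₂ = T.edgeFinset.filter (fun e => ∀ z ∈ e, z ∈ W₂) := by
        ext f
        constructor
        · intro hf
          refine Finset.mem_filter.mpr ⟨hER_ET (hE2sub hf), fun z hz => h2.mem_of_mem_edge f hf z hz⟩
        · intro hf
          obtain ⟨hfT, hfW2⟩ := Finset.mem_filter.mp hf
          have hfER : f ∈ ER := by
            rw [hch]
            exact Finset.mem_filter.mpr ⟨hfT, fun z hz => hWu ▸ Finset.mem_union_right _ (hfW2 z hz)⟩
          rw [hEu] at hfER
          rcases Finset.mem_insert.mp hfER with rfl | hfER'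
          · exfalso
            have : x ∈ W₂ := hfW2 x (hfxy ▸ Sym2.mem_mk_left x y)
            exact Finset.disjoint_left.mp hWd hx this
          · rcases Finset.mem_union.mp hfER' with hf1 | hf2
            · exfalso
              obtain ⟨z, hz⟩ := edge_has_mem f
              exact Finset.disjoint_left.mp hWd (h1.mem_of_mem_edge f hf1 z hz) (hfW2 z hz)
            · exact hf2
      -- boundary conditions for the parts
      have hbnd1 : ∀ e ∈ T.edgeFinset, (∃ z ∈ e, z ∈ W₁) → e ∉ E₁ → ∀ f ∈ E₁, key f < key e := by
        intro e he hze heE1 f hf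
        by_cases heER : e ∈ ER
        · have : e = fs := by
            rw [hEu] at heER
            rcases Finset.mem_insert.mp heER with rfl | h'
            · rfl
            · rcases Finset.mem_union.mp h' with h1' | h2'
              · exact absurd h1' heE1
              · exfalso
                obtain ⟨z, hz, hzW1⟩ := hze
                exact Finset.disjoint_left.mp hWd hzW1 (h2.mem_of_mem_edge e h2' z hz)
          subst this
          exact hfs_lt f (hE1sub hf) (fun h => hfs_notin1 (h ▸ hf))
        · obtain ⟨z, hz, hzW1⟩ := hze
          exact hbnd e he ⟨z, hz, hWu ▸ Finset.mem_union_left _ hzW1⟩ heER f (hE1sub hf)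
      have hbnd2 : ∀ e ∈ T.edgeFinset, (∃ z ∈ e, z ∈ W₂) → e ∉ E₂ → ∀ f ∈ E₂, key f < key e := by
        intro e he hze heE2 f hf
        by_cases heER : e ∈ ER
        · have : e = fs := by
            rw [hEu] at heER
            rcases Finset.mem_insert.mp heER with rfl | h'
            · rfl
            · rcases Finset.mem_union.mp h' with h1' | h2'
              · exfalso
                obtain ⟨z, hz, hzW2⟩ := hze
                exact Finset.disjoint_left.mp hWd (h1.mem_of_mem_edge e h1' z hz) hzW2
              · exact absurd h2' heE2
          subst this
          exact hfs_lt f (hE2sub hf) (fun h => hfs_notin2 (h ▸ hf))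
        · obtain ⟨z, hz, hzW2⟩ := hze
          exact hbnd e he ⟨z, hz, hWu ▸ Finset.mem_union_right _ hzW2⟩ heER f (hE2sub hf)
      -- cardinalities
      have hcard : W.card = W₁.card + W₂.card := by
        rw [hWu]; exact Finset.card_union_of_disjoint hWd
      have hW1pos : 1 ≤ W₁.card := Finset.card_pos.mpr h1.nonempty
      have hW2pos : 1 ≤ W₂.card := Finset.card_pos.mpr h2.nonempty
      have hIH1 := IH W₁.card (by omega) W₁ E₁ rfl h1 hch1 hbnd1
      have hIH2 := IH W₂.card (by omega) W₂ E₂ rfl h2 hch2 hbnd2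
      obtain ⟨F1, p1, ht1, hp1nn, hp1red, hwb1, hH1, hk1, hsum1⟩ := hIH1
      obtain ⟨F2, p2, ht2, hp2nn, hp2red, hwb2, hH2, hk2, hsum2⟩ := hIH2
      -- choose a blue crossing pair (a, b)
      have hWcard3 : 3 ≤ W.card := by
        have := hLT.card_eq
        omega
      have hab : ∃ a b : V, a ∈ W₁ ∧ b ∈ W₂ ∧ s(a, b) ≠ fs := by
        rcases Nat.lt_or_ge W₁.card 2 with hs1 | hs1
        · -- W₁ = {x}; pick b ∈ W₂ \ {y}
          have h2le : 2 ≤ W₂.card := by omega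
          have : (W₂.erase y).Nonempty := by
            rw [← Finset.card_pos, Finset.card_erase_of_mem hy]
            omega
          obtain ⟨b, hb⟩ := this
          refine ⟨x, b, hx, Finset.mem_of_mem_erase hb, ?_⟩
          intro h
          rw [hfxy, Sym2.eq_iff] at h
          rcases h with ⟨-, h2'⟩ | ⟨h1', -⟩
          · exact Finset.ne_of_mem_erase hb h2'
          · exact Finset.disjoint_left.mp hWd hx (h1' ▸ hy)
        · have : (W₁.erase x).Nonempty := by
            rw [← Finset.card_pos, Finset.card_erase_of_mem hx]
            omega
          obtain ⟨a, ha⟩ := this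
          refine ⟨a, y, Finset.mem_of_mem_erase ha, hy, ?_⟩
          intro h
          rw [hfxy, Sym2.eq_iff] at h
          rcases h with ⟨h1', -⟩ | ⟨h1', -⟩
          · exact Finset.ne_of_mem_erase ha h1'
          · exact Finset.disjoint_left.mp hWd (Finset.mem_of_mem_erase ha) (h1'.symm ▸ hy)
      obtain ⟨a, b, haW1, hbW2, habne⟩ := hab
      have hab_blue : s(a, b) ∉ T.edgeFinset := by
        intro hmem
        have habW : ∀ z ∈ s(a, b), z ∈ W := by
          intro z hz
          rcases Sym2.mem_iff.mp hz with rfl | rfl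
          · exact hWu ▸ Finset.mem_union_left _ haW1
          · exact hWu ▸ Finset.mem_union_right _ hbW2
        have : s(a, b) ∈ ER := by
          rw [hch]; exact Finset.mem_filter.mpr ⟨hmem, habW⟩
        rw [hEu] at this
        rcases Finset.mem_insert.mp this with h' | h'
        · exact habne h'
        · rcases Finset.mem_union.mp h' with h'' | h''
          · exact Finset.disjoint_left.mp hWd
              (h1.mem_of_mem_edge _ h'' b (Sym2.mem_mk_right a b)) hbW2
          · exact Finset.disjoint_left.mp hWd haW1
              (h2.mem_of_mem_edge _ h'' a (Sym2.mem_mk_left a b))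
      -- build the combined tree
      have hF12d : Disjoint F1 F2 := edges_disjoint_of_supports ht1 ht2 hWd
      have hab_not1 : s(a, b) ∉ F1 := fun h =>
        Finset.disjoint_left.mp hWd (ht1.mem_of_mem_edge _ h b (Sym2.mem_mk_right a b)) hbW2
      have hab_not2 : s(a, b) ∉ F2 := fun h =>
        Finset.disjoint_left.mp hWd haW1 (ht2.mem_of_mem_edge _ h a (Sym2.mem_mk_left a b))
      set E0 : Finset (Sym2 V) := insert s(a, b) (F1 ∪ F2) with hE0def
      set pr : Sym2 V → ℝ := fun g =>
        if g ∈ F1 then p1 g else if g ∈ F2 then p2 g else if g = s(a, b) then c fs else 0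
        with hprdef
      have hprF1 : ∀ g ∈ F1, pr g = p1 g := fun g hg => by
        simp only [hprdef, if_pos hg]
      have hprF2 : ∀ g ∈ F2, pr g = p2 g := fun g hg => by
        have : g ∉ F1 := Finset.disjoint_right.mp hF12d hg
        simp only [hprdef, if_neg this, if_pos hg]
      have hprab : pr s(a, b) = c fs := by
        simp [hprdef, hab_not1, hab_not2]
      have htree : IsLTree W E0 := by
        have := ht2.glue ht1 hWd haW1 hbW2
        rwa [← hWu, ← hE0def] at this
      -- every weight in E0 is at most c fs
      have hwb_all : ∀ g ∈ E0, pr g ≤ c fs := by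
        intro g hg
        rcases Finset.mem_insert.mp hg with rfl | hg'
        · rw [hprab]
        · rcases Finset.mem_union.mp hg' with hg1 | hg2
          · rw [hprF1 g hg1]
            obtain ⟨f, hf, hle⟩ := hwb1 g hg1
            exact hle.trans (hkeyc f fs (hfsmax f (hE1sub hf)))
          · rw [hprF2 g hg2]
            obtain ⟨f, hf, hle⟩ := hwb2 g hg2
            exact hle.trans (hkeyc f fs (hfsmax f (hE2sub hf)))
      refine ⟨E0, pr, htree, ?_, ?_, ?_, ?_, ?_, ?_⟩
      · -- nonnegativity
        intro g hg
        rcases Finset.mem_insert.mp hg with rfl | hg'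
        · rw [hprab]
          exact hc fs (SimpleGraph.mem_edgeFinset.mp (hER_ET hfsER))
        · rcases Finset.mem_union.mp hg' with hg1 | hg2
          · rw [hprF1 g hg1]; exact hp1nn g hg1
          · rw [hprF2 g hg2]; exact hp2nn g hg2
      · -- red edges keep their cost
        intro g hg hgT
        rcases Finset.mem_insert.mp hg with rfl | hg'
        · exact absurd (SimpleGraph.mem_edgeFinset.mpr hgT) hab_blue
        · rcases Finset.mem_union.mp hg' with hg1 | hg2
          · rw [hprF1 g hg1]; exact hp1red g hg1 hgT
          · rw [hprF2 g hg2]; exact hp2red g hg2 hgT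
      · -- weight bound
        intro g hg
        exact ⟨fs, hfsER, hwb_all g hg⟩
      · -- certificates
        intro f hf u v huv
        rw [hEu] at hf
        rcases Finset.mem_insert.mp hf with rfl | hf'
        · -- the split edge fs itself: route through the whole tree
          have hcfs : c s(u, v) = c f := by rw [huv]
          have hsub : (↑E0 : Set (Sym2 V)) ⊆ {g : Sym2 V | g ∈ E0 ∧ pr g ≤ c f} := by
            intro g hg
            rw [Finset.mem_coe] at hg
            exact ⟨hg, hwb_all g hg⟩
          have hxu : u = x ∧ v = y ∨ u = y ∧ v = x := by
            rw [hfxy] at huv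
            exact Sym2.eq_iff.mp huv
          have hconn_all : EConn (↑E0 : Set (Sym2 V)) x y := by
            have c1 : EConn (↑E0 : Set (Sym2 V)) x a := by
              refine EConn.mono ?_ (ht1.conn x hx a haW1)
              intro g hg
              rw [Finset.mem_coe] at hg ⊢
              exact Finset.mem_insert_of_mem (Finset.mem_union_left _ hg)
            have c2 : EConn (↑E0 : Set (Sym2 V)) a b :=
              EConn.base (Finset.mem_coe.mpr (Finset.mem_insert_self _ _))
            have c3 : EConn (↑E0 : Set (Sym2 V)) b y := by
              refine EConn.mono ?_ (ht2.conn b hbW2 y hy)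
              intro g hg
              rw [Finset.mem_coe] at hg ⊢
              exact Finset.mem_insert_of_mem (Finset.mem_union_right _ hg)
            exact (c1.trans c2).trans c3
          have := EConn.mono hsub hconn_all
          rcases hxu with ⟨rfl, rfl⟩ | ⟨rfl, rfl⟩
          · exact this
          · exact this.symm
        · rcases Finset.mem_union.mp hf' with hf1 | hf2
          · refine EConn.mono ?_ (hH1 f hf1 u v huv)
            intro g hg
            obtain ⟨hg1, hg2⟩ := hg
            exact ⟨Finset.mem_insert_of_mem (Finset.mem_union_left _ hg1),
              by rw [hprF1 g hg1]; exact hg2⟩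
          · refine EConn.mono ?_ (hH2 f hf2 u v huv)
            intro g hg
            obtain ⟨hg1, hg2⟩ := hg
            exact ⟨Finset.mem_insert_of_mem (Finset.mem_union_right _ hg1),
              by rw [hprF2 g hg1]; exact hg2⟩
      · -- kept red edges are strict local minima
        intro g hg hgT
        rcases Finset.mem_insert.mp hg with rfl | hg'
        · exact absurd (SimpleGraph.mem_edgeFinset.mpr hgT) hab_blue
        · rcases Finset.mem_union.mp hg' with hg1 | hg2
          · exact hk1 g hg1 hgT
          · exact hk2 g hg2 hgT
      · -- total weight identity
        have hdE12 : Disjoint E₁ E₂ := edges_disjoint_of_supports h1 h2 hWd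
        rw [hE0def, Finset.sum_insert (by
            intro h
            rcases Finset.mem_union.mp h with h' | h'
            · exact hab_not1 h'
            · exact hab_not2 h'),
          Finset.sum_union hF12d, hEu,
          Finset.sum_insert (by
            intro h
            rcases Finset.mem_union.mp h with h' | h'
            · exact hfs_notin1 h'
            · exact hfs_notin2 h'),
          Finset.sum_union hdE12, hprab]
        have e1 : ∑ g ∈ F1, pr g = ∑ f ∈ E₁, c f := by
          rw [← hsum1]
          exact Finset.sum_congr rfl (fun g hg => hprF1 g hg)
        have e2 : ∑ g ∈ F2, pr g = ∑ f ∈ E₂, c f := by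
          rw [← hsum2]
          exact Finset.sum_congr rfl (fun g hg => hprF2 g hg)
        rw [e1, e2]


/-- Shared core of the anchored-star strategy (Strategy 2). -/
lemma strat2_core [Fintype V] (T : SimpleGraph V) [Fintype T.edgeSet]
    (c : Sym2 V → ℝ) (hc : ∀ e ∈ T.edgeSet, 0 ≤ c e) (s : V) (m : V → ℝ)
    (hm_le : ∀ v : V, ∀ e ∈ T.edgeFinset, v ∈ e → m v ≤ c e)
    (hm0 : ∀ v : V, 0 ≤ m v)
    (estar : Sym2 V) (hstarT : estar ∈ T.edgeFinset)
    (hcm : ∀ v : V, v ≠ s → c estar ≤ m v)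
    (ostar : V) (π : V → V)
    (hos : ostar ≠ s)
    (hmo : m ostar = c estar)
    (hpne : ∀ v : V, v ≠ s → π v ≠ v)
    (hredo : s(ostar, π ostar) = estar)
    (hblue : ∀ v : V, v ≠ s → v ≠ ostar → s(v, π v) ∉ T.edgeSet)
    (hinj : ∀ v v' : V, v ≠ s → v' ≠ s → v ≠ v' → s(v, π v) = s(v', π v') → False)
    (hkey : ∀ v : V, v ≠ s →
      EConn {g : Sym2 V | ∃ u : V, u ≠ s ∧ g = s(u, π u) ∧
        (if u = ostar then c estar else m u) ≤ m v} v s) :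
    ∃ (E0 : Finset (Sym2 V)) (pr : Sym2 V → ℝ),
      IsLTree Finset.univ E0 ∧ (∀ g ∈ E0, 0 ≤ pr g) ∧
      (∀ g ∈ E0, g ∈ T.edgeSet → pr g = c g) ∧
      (∀ x y : V, T.Adj x y → EConn {g : Sym2 V | g ∈ E0 ∧ pr g ≤ c s(x, y)} x y) ∧
      (∑ v ∈ Finset.univ.erase s, m v) - c estar ≤
        ∑ g ∈ E0.filter (fun g => g ∉ T.edgeSet), pr g := by
  set att : V → Sym2 V := fun v => s(v, π v) with hatt
  set mq : V → ℝ := fun u => if u = ostar then c estar else m u with hmq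
  set E0 : Finset (Sym2 V) := (Finset.univ.erase s).image att with hE0
  set pr : Sym2 V → ℝ := fun g =>
    if g = estar then c estar else ∑ v ∈ Finset.univ.erase s, (if att v = g then m v else 0)
    with hpr
  have hmemerase : ∀ v : V, v ≠ s → v ∈ Finset.univ.erase s :=
    fun v hv => Finset.mem_erase.mpr ⟨hv, Finset.mem_univ v⟩
  have hattne : ∀ u : V, u ≠ s → u ≠ ostar → att u ≠ estar := by
    intro u hu huo h
    rw [← hredo] at h
    exact hinj u ostar hu hos huo h
  have hprval : ∀ u : V, u ≠ s → pr (att u) = mq u := by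
    intro u hu
    by_cases huo : u = ostar
    · subst huo
      simp [hpr, hmq, hatt, hredo]
    · simp only [hpr, hmq]
      rw [if_neg (hattne u hu huo), if_neg huo]
      rw [Finset.sum_eq_single_of_mem u (hmemerase u hu)]
      · rw [if_pos rfl]
      · intro b hb hbu
        rw [if_neg]
        intro h
        exact hinj b u (Finset.mem_erase.mp hb).1 hu hbu h
  have hmq_le : ∀ u : V, u ≠ s → c estar ≤ mq u := by
    intro u hu
    by_cases huo : u = ostar
    · simp [hmq, huo]
    · simp only [hmq, if_neg huo]
      exact hcm u hu
  have hmq_le_m : ∀ u : V, u ≠ s → mq u ≤ m u := by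
    intro u hu
    by_cases huo : u = ostar
    · subst huo; simp [hmq, hmo]
    · simp [hmq, huo]
  have hE0mem : ∀ u : V, u ≠ s → att u ∈ E0 := by
    intro u hu
    exact Finset.mem_image_of_mem att (hmemerase u hu)
  have hkeysub : ∀ v : V, v ≠ s → ∀ t : ℝ, m v ≤ t →
      {g : Sym2 V | ∃ u : V, u ≠ s ∧ g = s(u, π u) ∧ mq u ≤ m v} ⊆
      {g : Sym2 V | g ∈ E0 ∧ pr g ≤ t} := by
    intro v hv t ht g hg
    obtain ⟨u, hu, rfl, hle⟩ := hg
    refine ⟨hE0mem u hu, ?_⟩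
    rw [show s(u, π u) = att u from rfl, hprval u hu]
    exact hle.trans ht
  -- connectivity of E0 to s
  have hconnE0 : ∀ v : V, EConn (↑E0 : Set (Sym2 V)) v s := by
    intro v
    by_cases hv : v = s
    · rw [hv]; exact EConn.rfl s
    · refine EConn.mono ?_ (hkey v hv)
      intro g hg
      obtain ⟨u, hu, rfl, -⟩ := hg
      exact Finset.mem_coe.mpr (hE0mem u hu)
  have hE0nondiag : ∀ g ∈ E0, ¬ g.IsDiag := by
    intro g hg
    obtain ⟨u, hu, rfl⟩ := Finset.mem_image.mp hg
    rw [Sym2.mk_isDiag_iff]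
    exact fun h => hpne u (Finset.mem_erase.mp hu).1 h.symm
  have hinj' : Set.InjOn att ↑(Finset.univ.erase s) := by
    intro u hu u' hu' h
    by_contra hne
    exact hinj u u' (Finset.mem_erase.mp hu).1 (Finset.mem_erase.mp hu').1 hne h
  have hcardE0 : E0.card = (Finset.univ.erase s).card := Finset.card_image_of_injOn hinj'
  have hsnonempty : (Finset.univ : Finset V).Nonempty := ⟨s, Finset.mem_univ s⟩
  have htree : IsLTree Finset.univ E0 := by
    refine isLTree_of (Finset.univ.card) Finset.univ E0 rfl hsnonempty hE0nondiag
      (fun e _ x _ => Finset.mem_univ x) (fun u _ v _ => ?_) ?_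
    · exact (hconnE0 u).trans (hconnE0 v).symm
    · rw [hcardE0, Finset.card_erase_of_mem (Finset.mem_univ s)]
      have : 1 ≤ (Finset.univ : Finset V).card := Finset.card_pos.mpr hsnonempty
      omega
  have hstarc0 : 0 ≤ c estar := hc estar (SimpleGraph.mem_edgeFinset.mp hstarT)
  refine ⟨E0, pr, htree, ?_, ?_, ?_, ?_⟩
  · intro g hg
    obtain ⟨u, hu, rfl⟩ := Finset.mem_image.mp hg
    rw [hprval u (Finset.mem_erase.mp hu).1]
    by_cases huo : u = ostar
    · simp [hmq, huo]
      exact hstarc0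
    · simp [hmq, huo]
      exact hm0 u
  · intro g hg hgT
    obtain ⟨u, hu, rfl⟩ := Finset.mem_image.mp hg
    have hu' := (Finset.mem_erase.mp hu).1
    by_cases huo : u = ostar
    · have h2 : att ostar = estar := hredo
      rw [huo, h2]
      simp [hpr]
    · exact absurd hgT (hblue u hu' huo)
  · intro x y hadj
    have hxyT : s(x, y) ∈ T.edgeFinset := SimpleGraph.mem_edgeFinset.mpr (T.mem_edgeSet.mpr hadj)
    have hxne : x ≠ y := SimpleGraph.Adj.ne hadj
    by_cases hxs : x = s
    · subst hxs
      have hy : y ≠ x := hxne.symm  -- y ≠ s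
      have := EConn.mono (hkeysub y hy (c s(x, y)) (hm_le y _ hxyT (Sym2.mem_mk_right x y)))
        (hkey y hy)
      exact this.symm
    · by_cases hys : y = s
      · subst hys
        exact EConn.mono (hkeysub x hxs (c s(x, y)) (hm_le x _ hxyT (Sym2.mem_mk_left x y)))
          (hkey x hxs)
      · have c1 := EConn.mono
          (hkeysub x hxs (c s(x, y)) (hm_le x _ hxyT (Sym2.mem_mk_left x y))) (hkey x hxs)
        have c2 := EConn.mono
          (hkeysub y hys (c s(x, y)) (hm_le y _ hxyT (Sym2.mem_mk_right x y))) (hkey y hys)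
        exact c1.trans c2.symm
  · -- revenue
    have hfil : E0.filter (fun g => g ∉ T.edgeSet) =
        ((Finset.univ.erase s).erase ostar).image att := by
      ext g
      constructor
      · intro hg
        obtain ⟨hgE, hgB⟩ := Finset.mem_filter.mp hg
        obtain ⟨u, hu, rfl⟩ := Finset.mem_image.mp hgE
        have hu' := (Finset.mem_erase.mp hu).1
        refine Finset.mem_image.mpr ⟨u, ?_, rfl⟩
        refine Finset.mem_erase.mpr ⟨fun h => ?_, hu⟩
        apply hgB
        rw [h, show att ostar = estar from hredo]
        exact SimpleGraph.mem_edgeFinset.mp hstarT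
      · intro hg
        obtain ⟨u, hu, rfl⟩ := Finset.mem_image.mp hg
        have huo := Finset.ne_of_mem_erase hu
        have hu2 := Finset.mem_of_mem_erase hu
        have hu' := (Finset.mem_erase.mp hu2).1
        exact Finset.mem_filter.mpr ⟨hE0mem u hu', hblue u hu' huo⟩
    rw [hfil]
    rw [Finset.sum_image (by
      intro u hu u' hu' h
      by_contra hne
      exact hinj u u' (Finset.mem_erase.mp (Finset.mem_of_mem_erase hu)).1
        (Finset.mem_erase.mp (Finset.mem_of_mem_erase hu')).1 hne h)]
    have : ∀ u ∈ (Finset.univ.erase s).erase ostar, pr (att u) = m u := by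
      intro u hu
      have huo := Finset.ne_of_mem_erase hu
      have hu' := (Finset.mem_erase.mp (Finset.mem_of_mem_erase hu)).1
      rw [hprval u hu']
      simp [hmq, huo]
    rw [Finset.sum_congr rfl this]
    have hsum : ∑ v ∈ Finset.univ.erase s, m v =
        m ostar + ∑ v ∈ (Finset.univ.erase s).erase ostar, m v :=
      (Finset.add_sum_erase _ m (hmemerase ostar hos)).symm
    rw [hsum, hmo]
    linarith [le_refl (∑ v ∈ (Finset.univ.erase s).erase ostar, m v)]


lemma tree_no_triangle {T : SimpleGraph V} (hT : T.IsTree) {a b d : V}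
    (h1 : T.Adj a b) (h2 : T.Adj b d) (h3 : T.Adj a d) : False := by
  classical
  have hp : (SimpleGraph.Walk.cons h3 SimpleGraph.Walk.nil : T.Walk a d).IsPath := by
    simp [SimpleGraph.Walk.isPath_def, h3.ne]
  have hq : (SimpleGraph.Walk.cons h1 (SimpleGraph.Walk.cons h2 SimpleGraph.Walk.nil) :
      T.Walk a d).IsPath := by
    simp [SimpleGraph.Walk.isPath_def, h1.ne, h2.ne, h3.ne]
  have := hT.IsAcyclic.path_unique ⟨_, hp⟩ ⟨_, hq⟩
  have hlen := congrArg (fun r : T.Path a d => r.1.length) this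
  simp at hlen

lemma tree_no_square {T : SimpleGraph V} (hT : T.IsTree) {a b d e : V}
    (hab : T.Adj a b) (hbe : T.Adj b e) (had : T.Adj a d) (hde : T.Adj d e)
    (hbd : b ≠ d) (hae : a ≠ e) : False := by
  classical
  have hp : (SimpleGraph.Walk.cons hab (SimpleGraph.Walk.cons hbe SimpleGraph.Walk.nil) :
      T.Walk a e).IsPath := by
    simp [SimpleGraph.Walk.isPath_def, hab.ne, hbe.ne, hae]
  have hq : (SimpleGraph.Walk.cons had (SimpleGraph.Walk.cons hde SimpleGraph.Walk.nil) :
      T.Walk a e).IsPath := by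
    simp [SimpleGraph.Walk.isPath_def, had.ne, hde.ne, hae]
  have := hT.IsAcyclic.path_unique ⟨_, hp⟩ ⟨_, hq⟩
  have hsup := congrArg (fun r : T.Path a e => r.1.support) this
  simp [SimpleGraph.Walk.support_cons] at hsup
  exact hbd hsup

/-- Strategy 2: the anchored star at `s`. -/
lemma strat2 [Fintype V] (T : SimpleGraph V) [Fintype T.edgeSet] (hT : T.IsTree)
    (c : Sym2 V → ℝ) (hc : ∀ e ∈ T.edgeSet, 0 ≤ c e) (s : V) (m : V → ℝ)
    (hm_le : ∀ v : V, ∀ e ∈ T.edgeFinset, v ∈ e → m v ≤ c e)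
    (hm_mem : ∀ v : V, ∃ e ∈ T.edgeFinset, v ∈ e ∧ m v = c e)
    (estar : Sym2 V) (hstarT : estar ∈ T.edgeFinset)
    (hstarmin : ∀ e ∈ T.edgeFinset, c estar ≤ c e) :
    ∃ (E0 : Finset (Sym2 V)) (pr : Sym2 V → ℝ),
      IsLTree Finset.univ E0 ∧ (∀ g ∈ E0, 0 ≤ pr g) ∧
      (∀ g ∈ E0, g ∈ T.edgeSet → pr g = c g) ∧
      (∀ x y : V, T.Adj x y → EConn {g : Sym2 V | g ∈ E0 ∧ pr g ≤ c s(x, y)} x y) ∧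
      (∑ v ∈ Finset.univ.erase s, m v) - c estar ≤
        ∑ g ∈ E0.filter (fun g => g ∉ T.edgeSet), pr g := by
  have hm0 : ∀ v : V, 0 ≤ m v := by
    intro v
    obtain ⟨e, he, -, hme⟩ := hm_mem v
    rw [hme]
    exact hc e (SimpleGraph.mem_edgeFinset.mp he)
  have hcm : ∀ v : V, c estar ≤ m v := by
    intro v
    obtain ⟨e, he, -, hme⟩ := hm_mem v
    rw [hme]
    exact hstarmin e he
  have hmend : ∀ v : V, v ∈ estar → m v = c estar :=
    fun v hv => le_antisymm (hm_le v estar hstarT hv) (hcm v)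
  obtain ⟨x0, y0, rfl⟩ : ∃ a b, estar = s(a, b) := Sym2.ind (fun a b => ⟨a, b, rfl⟩) estar
  have hadj0 : T.Adj x0 y0 := T.mem_edgeSet.mp (SimpleGraph.mem_edgeFinset.mp hstarT)
  by_cases hcase : x0 = s ∨ y0 = s
  · -- Case II : the cheapest edge touches s
    obtain ⟨us, hadjs, hustar⟩ : ∃ u : V, T.Adj s u ∧ s(x0, y0) = s(s, u) := by
      rcases hcase with rfl | rfl
      · exact ⟨y0, hadj0, rfl⟩
      · exact ⟨x0, hadj0.symm, Sym2.eq_swap⟩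
    rw [hustar] at hstarT hstarmin hmend hcm ⊢
    have hus_ne : us ≠ s := hadjs.ne'
    set π : V → V := fun v => if v = us then s else if T.Adj s v then us else s with hπ
    have hπus : π us = s := by simp [hπ]
    have hπN : ∀ v : V, v ≠ us → T.Adj s v → π v = us := by
      intro v hv ha; simp [hπ, hv, ha]
    have hπZ : ∀ v : V, v ≠ us → ¬T.Adj s v → π v = s := by
      intro v hv ha; simp [hπ, hv, ha]
    have hrange : ∀ v : V, π v = s ∨ π v = us := by
      intro v
      by_cases h1 : v = us
      · left; rw [h1, hπus]
      · by_cases h2 : T.Adj s v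
        · right; exact hπN v h1 h2
        · left; exact hπZ v h1 h2
    refine strat2_core T c hc s m hm_le hm0 s(s, us) hstarT (fun v _ => hcm v) us π
      hus_ne (hmend us (Sym2.mem_mk_right s us)) ?_ ?_ ?_ ?_ ?_
    · -- π v ≠ v
      intro v hv
      by_cases h1 : v = us
      · rw [h1, hπus]; exact Ne.symm (h1 ▸ hv)
      · by_cases h2 : T.Adj s v
        · rw [hπN v h1 h2]; exact Ne.symm h1
        · rw [hπZ v h1 h2]; exact Ne.symm hv
    · rw [hπus]; exact Sym2.eq_swap
    · -- blue
      intro v hv hvu hmem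
      by_cases h2 : T.Adj s v
      · rw [hπN v hvu h2] at hmem
        exact tree_no_triangle hT h2 (T.mem_edgeSet.mp hmem) hadjs
      · rw [hπZ v hvu h2] at hmem
        exact h2 ((T.mem_edgeSet.mp hmem).symm)
    · -- injectivity
      intro v v' hv hv' hne heq
      rw [Sym2.eq_iff] at heq
      rcases heq with ⟨h1, -⟩ | ⟨h1, h2⟩
      · exact hne h1
      · rcases hrange v' with h3 | h3
        · exact hv (h1.trans h3)
        · rcases hrange v with h4 | h4
          · exact hv' (h2.symm.trans h4)
          · have hv_us : v = us := h1.trans h3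
            rw [hv_us, hπus] at h4
            exact hus_ne h4.symm
    · -- key connectivity
      intro v hv
      by_cases h1 : v = us
      · subst h1
        refine EConn.base ?_
        refine ⟨v, hv, ?_, ?_⟩
        · rw [hπus]
        · rw [if_pos rfl]
          exact hcm v
      · by_cases h2 : T.Adj s v
        · have c1 : EConn {g : Sym2 V | ∃ u : V, u ≠ s ∧ g = s(u, π u) ∧
              (if u = us then c s(s, us) else m u) ≤ m v} v us := by
            refine EConn.base ⟨v, hv, ?_, ?_⟩
            · rw [hπN v h1 h2]
            · rw [if_neg h1]
          have c2 : EConn {g : Sym2 V | ∃ u : V, u ≠ s ∧ g = s(u, π u) ∧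
              (if u = us then c s(s, us) else m u) ≤ m v} us s := by
            refine EConn.base ⟨us, hus_ne, ?_, ?_⟩
            · rw [hπus]
            · rw [if_pos rfl]
              exact hcm v
          exact c1.trans c2
        · refine EConn.base ⟨v, hv, ?_, ?_⟩
          · rw [hπZ v h1 h2]
          · rw [if_neg h1]
  · -- Case I : the cheapest edge avoids s
    push_neg at hcase
    obtain ⟨hx0s, hy0s⟩ := hcase
    obtain ⟨zs, os, hzs_nadj, hzo, hswap⟩ :
        ∃ z o : V, ¬T.Adj s z ∧ T.Adj o z ∧ s(x0, y0) = s(o, z) := by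
      by_cases hxN : T.Adj s x0
      · refine ⟨y0, x0, ?_, hadj0, rfl⟩
        intro hyN
        exact tree_no_triangle hT hxN hadj0 hyN
      · exact ⟨x0, y0, hxN, hadj0.symm, Sym2.eq_swap⟩
    rw [hswap] at hstarT hstarmin hmend hcm ⊢
    have hzs_ne_s : zs ≠ s := by
      intro h
      have hmem : zs ∈ s(x0, y0) := by rw [hswap]; exact Sym2.mem_mk_right os zs
      rcases Sym2.mem_iff.mp hmem with h2 | h2
      · exact hx0s (h2.symm.trans h)
      · exact hy0s (h2.symm.trans h)
    have hos_ne_s : os ≠ s := by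
      rintro rfl
      exact hzs_nadj hzo
    have hoz_ne : os ≠ zs := hzo.ne
    set π : V → V := fun v =>
      if v = os then zs else if T.Adj s v ∧ T.Adj v zs then os
      else if T.Adj s v then zs else s with hπ
    have hπos : π os = zs := by simp [hπ]
    have hπzs : π zs = s := by
      simp only [hπ, if_neg (Ne.symm hoz_ne)]
      rw [if_neg (by rintro ⟨h, -⟩; exact hzs_nadj h), if_neg (fun h => hzs_nadj h)]
    have hπNB : ∀ v : V, v ≠ os → T.Adj s v → T.Adj v zs → π v = os := by
      intro v h1 h2 h3; simp [hπ, h1, h2, h3]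
    have hπN : ∀ v : V, v ≠ os → T.Adj s v → ¬T.Adj v zs → π v = zs := by
      intro v h1 h2 h3
      simp only [hπ, if_neg h1]
      rw [if_neg (by rintro ⟨-, h⟩; exact h3 h), if_pos h2]
    have hπZ : ∀ v : V, v ≠ os → ¬T.Adj s v → π v = s := by
      intro v h1 h2
      simp only [hπ, if_neg h1]
      rw [if_neg (by rintro ⟨h, -⟩; exact h2 h), if_neg h2]
    have hrange : ∀ v : V, π v = zs ∨ π v = os ∨ π v = s := by
      intro v
      by_cases h1 : v = os
      · left; rw [h1, hπos]
      · by_cases h2 : T.Adj s v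
        · by_cases h3 : T.Adj v zs
          · right; left; exact hπNB v h1 h2 h3
          · left; exact hπN v h1 h2 h3
        · right; right; exact hπZ v h1 h2
    have hmzs : m zs = c s(os, zs) := hmend zs (Sym2.mem_mk_right os zs)
    have hmos : m os = c s(os, zs) := hmend os (Sym2.mem_mk_left os zs)
    refine strat2_core T c hc s m hm_le hm0 s(os, zs) hstarT (fun v _ => hcm v) os π
      hos_ne_s hmos ?_ ?_ ?_ ?_ ?_
    · -- π v ≠ v
      intro v hv
      by_cases h1 : v = os
      · rw [h1, hπos]; exact Ne.symm hoz_ne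
      · by_cases h2 : T.Adj s v
        · by_cases h3 : T.Adj v zs
          · rw [hπNB v h1 h2 h3]; exact Ne.symm h1
          · rw [hπN v h1 h2 h3]
            exact fun h => hzs_nadj (by rw [h]; exact h2)
        · rw [hπZ v h1 h2]; exact Ne.symm hv
    · rw [hπos]
    · -- blue
      intro v hv hvo hmem
      by_cases h2 : T.Adj s v
      · by_cases h3 : T.Adj v zs
        · rw [hπNB v hvo h2 h3] at hmem
          exact tree_no_triangle hT h3 hzo.symm (T.mem_edgeSet.mp hmem)
        · rw [hπN v hvo h2 h3] at hmem
          exact h3 (T.mem_edgeSet.mp hmem)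
      · rw [hπZ v hvo h2] at hmem
        exact h2 ((T.mem_edgeSet.mp hmem).symm)
    · -- injectivity
      intro v v' hv hv' hne heq
      rw [Sym2.eq_iff] at heq
      rcases heq with ⟨h1, -⟩ | ⟨h1, h2⟩
      · exact hne h1
      · -- v = π v', v' = π v : both are in {zs, os}
        have hvin : v = zs ∨ v = os := by
          rcases hrange v' with h | h | h
          · left; exact h1.trans h
          · right; exact h1.trans h
          · exact absurd (h1.trans h) hv
        have hv'in : v' = zs ∨ v' = os := by
          rcases hrange v with h | h | h
          · left; exact h2.symm.trans h
          · right; exact h2.symm.trans h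
          · exact absurd (h2.symm.trans h) hv'
        -- one of them equals zs, but π zs = s
        rcases hvin with h5 | h5
        · rw [h5, hπzs] at h2
          exact hv' h2.symm
        · rcases hv'in with h6 | h6
          · rw [h6, hπzs] at h1
            exact hv h1
          · exact hne (h5.trans h6.symm)
    · -- key connectivity
      intro v hv
      set Sv : Set (Sym2 V) := {g : Sym2 V | ∃ u : V, u ≠ s ∧ g = s(u, π u) ∧
        (if u = os then c s(os, zs) else m u) ≤ m v} with hSv
      have hbzs : EConn Sv zs s := by
        refine EConn.base ⟨zs, hzs_ne_s, ?_, ?_⟩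
        · rw [hπzs]
        · rw [if_neg (Ne.symm hoz_ne), hmzs]
          exact hcm v
      have hbos : EConn Sv os zs := by
        refine EConn.base ⟨os, hos_ne_s, ?_, ?_⟩
        · rw [hπos]
        · rw [if_pos rfl]
          exact hcm v
      by_cases h1 : v = os
      · subst h1
        exact hbos.trans hbzs
      · by_cases hvz : v = zs
        · subst hvz
          exact hbzs
        · by_cases h2 : T.Adj s v
          · by_cases h3 : T.Adj v zs
            · have c1 : EConn Sv v os := by
                refine EConn.base ⟨v, hv, ?_, ?_⟩
                · rw [hπNB v h1 h2 h3]
                · rw [if_neg h1]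
              exact (c1.trans hbos).trans hbzs
            · have c1 : EConn Sv v zs := by
                refine EConn.base ⟨v, hv, ?_, ?_⟩
                · rw [hπN v h1 h2 h3]
                · rw [if_neg h1]
              exact c1.trans hbzs
          · refine EConn.base ⟨v, hv, ?_, ?_⟩
            · rw [hπZ v h1 h2]
            · rw [if_neg h1]

end SMST


open StackMST

open SMST

/-- For the StackMST(0,0) game with red tree `T` (with at least
one edge) and nonnegative edge costs, for every vertex `s`,
`r*(T, c) ≥ (4/7)·(c(T) − μ(s))`, where `μ(s)` is the maximum cost of a red edge
incident to `s`. -/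
theorem stackMST_lower_bound_via_mu {V : Type*} [Finite V]
    (T : SimpleGraph V) (hT : T.IsTree) (hE : T.edgeSet.Nonempty)
    (c : Sym2 V → ℝ) (hc : ∀ e ∈ T.edgeSet, 0 ≤ c e) :
    ∀ s : V, (4 / 7 : ℝ) * (redCost T c - maxIncidentCost T c s) ≤ optRevenue T c := by
  classical
  intro s
  letI : Fintype V := Fintype.ofFinite V
  haveI : Fintype T.edgeSet := Set.Finite.fintype (Set.toFinite _)
  -- basic structure
  have hLT0 : IsLTree Finset.univ T.edgeFinset := isLTree_univ_of_isTree hT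
  obtain ⟨e0, he0⟩ := hE
  have he0' : e0 ∈ T.edgeFinset := SimpleGraph.mem_edgeFinset.mpr he0
  have hcard2 : 2 ≤ (Finset.univ : Finset V).card := by
    obtain ⟨a, b, rfl⟩ : ∃ x y, e0 = s(x, y) := Sym2.ind (fun x y => ⟨x, y, rfl⟩) e0
    have hab : a ≠ b := by
      intro h
      exact SimpleGraph.not_isDiag_of_mem_edgeSet T he0 (Sym2.mk_isDiag_iff.mpr h)
    exact Finset.one_lt_card.mpr ⟨a, Finset.mem_univ a, b, Finset.mem_univ b, hab⟩
  have hinc : ∀ v : V, (T.edgeFinset.filter (fun e => v ∈ e)).Nonempty := by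
    intro v
    obtain ⟨e, he, hve⟩ := hLT0.vertex_edge hcard2 v (Finset.mem_univ v)
    exact ⟨e, Finset.mem_filter.mpr ⟨he, hve⟩⟩
  -- the minimum incident cost function
  set m : V → ℝ := fun v => ((T.edgeFinset.filter (fun e => v ∈ e)).image c).min'
    ((hinc v).image c) with hm
  have hm_le : ∀ v : V, ∀ e ∈ T.edgeFinset, v ∈ e → m v ≤ c e := by
    intro v e he hve
    exact Finset.min'_le _ _ (Finset.mem_image_of_mem c (Finset.mem_filter.mpr ⟨he, hve⟩))
  have hm_mem : ∀ v : V, ∃ e ∈ T.edgeFinset, v ∈ e ∧ m v = c e := by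
    intro v
    have := Finset.min'_mem ((T.edgeFinset.filter (fun e => v ∈ e)).image c) ((hinc v).image c)
    obtain ⟨e, he, hec⟩ := Finset.mem_image.mp this
    obtain ⟨he1, he2⟩ := Finset.mem_filter.mp he
    exact ⟨e, he1, he2, hec.symm⟩
  have hm0 : ∀ v : V, 0 ≤ m v := by
    intro v
    obtain ⟨e, he, -, hme⟩ := hm_mem v
    rw [hme]
    exact hc e (SimpleGraph.mem_edgeFinset.mp he)
  -- the globally cheapest edge
  obtain ⟨estar, hstarT, hstarmin⟩ := Finset.exists_min_image T.edgeFinset c ⟨e0, he0'⟩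
  -- the tie-breaking key
  letI : LinearOrder (Sym2 V) := WellOrderingRel.isWellOrder.linearOrder
  set key : Sym2 V → ℝ ×ₗ (Sym2 V) := fun e => toLex (c e, e) with hkey
  have hkey_inj : Function.Injective key := by
    intro e f h
    have := toLex.injective h
    exact congrArg Prod.snd this
  have hkeyc : ∀ e f : Sym2 V, @LE.le (ℝ ×ₗ Sym2 V) (Prod.Lex.instLinearOrder ℝ (Sym2 V)).toLE (key e) (key f) → c e ≤ c f := by
    intro e f h
    simp only [hkey] at h
    rcases (@Prod.Lex.le_iff ℝ (Sym2 V) _ ‹LinearOrder (Sym2 V)›.toLE _ _).mp h with h' | ⟨h', -⟩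
    · exact le_of_lt h'
    · exact le_of_eq h'
  -- Strategy 1 (Kruskal)
  have hch0 : T.edgeFinset = T.edgeFinset.filter (fun e => ∀ x ∈ e, x ∈ Finset.univ) := by
    rw [Finset.filter_true_of_mem (fun e _ => fun x _ => Finset.mem_univ x)]
  have hbnd0 : ∀ e ∈ T.edgeFinset, (∃ x ∈ e, x ∈ Finset.univ) → e ∉ T.edgeFinset →
      ∀ f ∈ T.edgeFinset, @LT.lt (ℝ ×ₗ Sym2 V) (Prod.Lex.instLinearOrder ℝ (Sym2 V)).toLT (key f) (key e) := by
    intro e he _ hne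
    exact absurd he hne
  obtain ⟨E1, pr1, hLT1, hpr1, hred1, hwb1, hH1, hk1, hsum1⟩ :=
    strat1_rec T c key hkey_inj hkeyc hc (Finset.univ.card) Finset.univ T.edgeFinset rfl
      hLT0 hch0 hbnd0
  set KK : Finset (Sym2 V) := E1.filter (fun g => g ∈ T.edgeSet) with hKK
  have hr1 : redCost T c - ∑ g ∈ KK, c g ≤ optRevenue T c := by
    have hb := strategy_bound T hT c hc E1 pr1 hLT1 hpr1 hred1
      (fun x y hadj => hH1 s(x, y)
        (SimpleGraph.mem_edgeFinset.mpr (T.mem_edgeSet.mpr hadj)) x y rfl)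
    have hsplit : ∑ g ∈ E1, pr1 g =
        (∑ g ∈ KK, pr1 g) + ∑ g ∈ E1.filter (fun g => g ∉ T.edgeSet), pr1 g :=
      (Finset.sum_filter_add_sum_filter_not E1 (fun g => g ∈ T.edgeSet) pr1).symm
    have hKKc : ∑ g ∈ KK, pr1 g = ∑ g ∈ KK, c g := by
      refine Finset.sum_congr rfl (fun g hg => ?_)
      obtain ⟨hg1, hg2⟩ := Finset.mem_filter.mp hg
      exact hred1 g hg1 hg2
    have hrc : redCost T c = ∑ f ∈ T.edgeFinset, c f := redCost_eq T c
    have : ∑ g ∈ E1.filter (fun g => g ∉ T.edgeSet), pr1 g =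
        redCost T c - ∑ g ∈ KK, c g := by
      rw [hrc, ← hsum1]
      rw [hsplit, hKKc]
      ring
    rw [← this]
    exact hb
  -- Strategy 2 (anchored star)
  obtain ⟨E2, pr2, hLT2, hpr2, hred2, hH2, hrev2⟩ :=
    strat2 T hT c hc s m hm_le hm_mem estar hstarT hstarmin
  have hr2 : (∑ v ∈ Finset.univ.erase s, m v) - c estar ≤ optRevenue T c :=
    le_trans hrev2 (strategy_bound T hT c hc E2 pr2 hLT2 hpr2 hred2 hH2)
  -- kept edges are local minima; matching properties
  have hKKT : ∀ g ∈ KK, g ∈ T.edgeFinset := by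
    intro g hg
    exact SimpleGraph.mem_edgeFinset.mpr (Finset.mem_filter.mp hg).2
  have hloc : ∀ g ∈ KK, ∀ e ∈ T.edgeFinset, e ≠ g → (∃ x, x ∈ e ∧ x ∈ g) → @LT.lt (ℝ ×ₗ Sym2 V) (Prod.Lex.instLinearOrder ℝ (Sym2 V)).toLT (key g) (key e) := by
    intro g hg
    obtain ⟨hg1, hg2⟩ := Finset.mem_filter.mp hg
    exact hk1 g hg1 hg2
  have hmval : ∀ g ∈ KK, ∀ v, v ∈ g → m v = c g := by
    intro g hg v hv
    refine le_antisymm (hm_le v g (hKKT g hg) hv) ?_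
    obtain ⟨e, he, hve, hme⟩ := hm_mem v
    rw [hme]
    by_cases heg : e = g
    · rw [heg]
    · exact hkeyc g e (@le_of_lt _ (Prod.Lex.instLinearOrder ℝ (Sym2 V)).toPreorder _ _ (hloc g hg e he heg ⟨v, hve, hv⟩))
  have hmatch : ∀ g ∈ KK, ∀ g' ∈ KK, g ≠ g' → ∀ v, v ∈ g → v ∈ g' → False := by
    intro g hg g' hg' hne v hv hv'
    have h1 := hloc g hg g' (hKKT g' hg') (Ne.symm hne) ⟨v, hv', hv⟩
    have h2 := hloc g' hg' g (hKKT g hg) hne ⟨v, hv, hv'⟩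
    exact absurd (@lt_trans _ (Prod.Lex.instLinearOrder ℝ (Sym2 V)).toPreorder _ _ _ h1 h2) (@lt_irrefl _ (Prod.Lex.instLinearOrder ℝ (Sym2 V)).toPreorder _)
  -- endpoint sets
  set EPS : Sym2 V → Finset V := fun g => Finset.univ.filter (fun v => v ∈ g ∧ v ≠ s) with hEPS
  have hdisj : (↑KK : Set (Sym2 V)).PairwiseDisjoint EPS := by
    intro g hg g' hg' hne
    simp only [Function.onFun]
    rw [Finset.disjoint_left]
    intro v hv hv'
    obtain ⟨-, hv1, -⟩ := Finset.mem_filter.mp hv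
    obtain ⟨-, hv2, -⟩ := Finset.mem_filter.mp hv'
    exact hmatch g hg g' hg' hne v hv1 hv2
  have hsubU : KK.biUnion EPS ⊆ Finset.univ.erase s := by
    intro v hv
    obtain ⟨g, -, hvg⟩ := Finset.mem_biUnion.mp hv
    exact Finset.mem_erase.mpr ⟨(Finset.mem_filter.mp hvg).2.2, Finset.mem_univ v⟩
  have hclaimB : ∀ g ∈ KK, 2 * c g - (if s ∈ g then c g else 0) ≤ ∑ v ∈ EPS g, m v := by
    intro g hg
    obtain ⟨a, b, rfl⟩ : ∃ x y, g = s(x, y) := Sym2.ind (fun x y => ⟨x, y, rfl⟩) g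
    have hab : a ≠ b := by
      intro h
      exact SimpleGraph.not_isDiag_of_mem_edgeSet T (Finset.mem_filter.mp hg).2
        (Sym2.mk_isDiag_iff.mpr h)
    have hma : m a = c s(a, b) := hmval _ hg a (Sym2.mem_mk_left a b)
    have hmb : m b = c s(a, b) := hmval _ hg b (Sym2.mem_mk_right a b)
    have hEg : EPS s(a, b) = ({a, b} : Finset V).filter (fun v => v ≠ s) := by
      ext v
      simp only [hEPS, Finset.mem_filter, Finset.mem_univ, true_and, Sym2.mem_iff,
        Finset.mem_insert, Finset.mem_singleton]
    rw [hEg]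
    by_cases hsa : a = s
    · have hsb : b ≠ s := fun h => hab (hsa.trans h.symm)
      have : ({a, b} : Finset V).filter (fun v => v ≠ s) = {b} := by
        ext v
        simp only [Finset.mem_filter, Finset.mem_insert, Finset.mem_singleton]
        constructor
        · rintro ⟨rfl | rfl, h2⟩
          · exact absurd hsa h2
          · rfl
        · rintro rfl
          exact ⟨Or.inr rfl, hsb⟩
      rw [this, Finset.sum_singleton, hmb]
      rw [if_pos (by rw [Sym2.mem_iff]; exact Or.inl hsa.symm)]
      linarith
    · by_cases hsb : b = s
      · have : ({a, b} : Finset V).filter (fun v => v ≠ s) = {a} := by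
          ext v
          simp only [Finset.mem_filter, Finset.mem_insert, Finset.mem_singleton]
          constructor
          · rintro ⟨rfl | rfl, h2⟩
            · rfl
            · exact absurd hsb h2
          · rintro rfl
            exact ⟨Or.inl rfl, hsa⟩
        rw [this, Finset.sum_singleton, hma]
        rw [if_pos (by rw [Sym2.mem_iff]; exact Or.inr hsb.symm)]
        linarith
      · have : ({a, b} : Finset V).filter (fun v => v ≠ s) = {a, b} := by
          refine Finset.filter_true_of_mem ?_
          intro v hv
          rcases Finset.mem_insert.mp hv with rfl | hv'
          · exact hsa
          · rw [Finset.mem_singleton] at hv'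
            exact hv' ▸ hsb
        rw [this, Finset.sum_pair hab, hma, hmb]
        rw [if_neg (by rw [Sym2.mem_iff]; rintro (rfl | rfl); exact hsa rfl; exact hsb rfl)]
        linarith
  -- the μ(s) quantity
  set S0 : Set ℝ := {x | ∃ e ∈ T.edgeSet, s ∈ e ∧ x = c e} with hS0
  have hmudef : maxIncidentCost T c s = sSup S0 := rfl
  have hS0fin : S0.Finite := by
    have : S0 ⊆ c '' T.edgeSet := by
      rintro x ⟨e, he, -, rfl⟩
      exact ⟨e, he, rfl⟩
    exact Set.Finite.subset ((Set.toFinite T.edgeSet).image c) this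
  obtain ⟨einc, heinc⟩ := hinc s
  obtain ⟨heinc1, heinc2⟩ := Finset.mem_filter.mp heinc
  have hS0ne : S0.Nonempty := ⟨c einc, einc, SimpleGraph.mem_edgeFinset.mp heinc1, heinc2, rfl⟩
  have hmu_ge : ∀ e ∈ T.edgeSet, s ∈ e → c e ≤ maxIncidentCost T c s := by
    intro e he hse
    rw [hmudef]
    exact le_csSup hS0fin.bddAbove ⟨e, he, hse, rfl⟩
  have hmu0 : 0 ≤ maxIncidentCost T c s :=
    le_trans (hc einc (SimpleGraph.mem_edgeFinset.mp heinc1))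
      (hmu_ge einc (SimpleGraph.mem_edgeFinset.mp heinc1) heinc2)
  have hstar_mu : c estar ≤ maxIncidentCost T c s :=
    le_trans (hstarmin einc heinc1)
      (hmu_ge einc (SimpleGraph.mem_edgeFinset.mp heinc1) heinc2)
  have hmu_le : maxIncidentCost T c s ≤ redCost T c := by
    rw [hmudef]
    refine csSup_le hS0ne ?_
    rintro x ⟨e, he, -, rfl⟩
    rw [redCost_eq T c]
    exact Finset.single_le_sum (fun f hf => hc f (SimpleGraph.mem_edgeFinset.mp hf))
      (SimpleGraph.mem_edgeFinset.mpr he)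
  -- at most one kept edge at s
  have hKKs_le : ∑ g ∈ KK.filter (fun g => s ∈ g), c g ≤ maxIncidentCost T c s := by
    rcases Finset.eq_empty_or_nonempty (KK.filter (fun g => s ∈ g)) with h | ⟨g0, hg0⟩
    · rw [h, Finset.sum_empty]; exact hmu0
    · have : KK.filter (fun g => s ∈ g) = {g0} := by
        ext g
        constructor
        · intro hg
          rw [Finset.mem_singleton]
          by_contra hne
          obtain ⟨hgK, hgs⟩ := Finset.mem_filter.mp hg
          obtain ⟨hg0K, hg0s⟩ := Finset.mem_filter.mp hg0
          exact hmatch g hgK g0 hg0K hne s hgs hg0s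
        · rintro rfl' 
          rw [Finset.mem_singleton] at rfl'
          exact rfl' ▸ hg0
      rw [this, Finset.sum_singleton]
      obtain ⟨hg0K, hg0s⟩ := Finset.mem_filter.mp hg0
      exact hmu_ge g0 (Finset.mem_filter.mp hg0K).2 hg0s
  -- assemble the Σ m bound
  have hsum_m : 2 * (∑ g ∈ KK, c g) - maxIncidentCost T c s ≤
      ∑ v ∈ Finset.univ.erase s, m v := by
    have h1 : ∑ v ∈ KK.biUnion EPS, m v ≤ ∑ v ∈ Finset.univ.erase s, m v :=
      Finset.sum_le_sum_of_subset_of_nonneg hsubU (fun v _ _ => hm0 v)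
    have h2 : ∑ v ∈ KK.biUnion EPS, m v = ∑ g ∈ KK, ∑ v ∈ EPS g, m v :=
      Finset.sum_biUnion hdisj
    have h3 : ∑ g ∈ KK, (2 * c g - (if s ∈ g then c g else 0)) ≤ ∑ g ∈ KK, ∑ v ∈ EPS g, m v :=
      Finset.sum_le_sum hclaimB
    have h4 : ∑ g ∈ KK, (2 * c g - (if s ∈ g then c g else 0)) =
        2 * (∑ g ∈ KK, c g) - ∑ g ∈ KK.filter (fun g => s ∈ g), c g := by
      rw [Finset.sum_sub_distrib, ← Finset.mul_sum]
      congr 1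
      exact (Finset.sum_filter (fun g => s ∈ g) c).symm
    have h5 := h4 ▸ h3
    linarith [h1, h2 ▸ h5, hKKs_le]
  -- final combination
  have hK0 : 0 ≤ ∑ g ∈ KK, c g := by
    refine Finset.sum_nonneg (fun g hg => hc g (Finset.mem_filter.mp hg).2)
  have hr2' : 2 * (∑ g ∈ KK, c g) - 2 * maxIncidentCost T c s ≤ optRevenue T c := by
    have := hr2
    linarith [hsum_m, hstar_mu]
  linarith [hr1, hr2', hmu_le]
end

section
/- Let D = (V, B') be a finite graph. Then there exist edge subsets F1, F2 ⊆ B' and vertex subsets C1, C2 ⊆ V such that, for each i ∈ {1, 2}: every edge of F_i has exactly one endpoint in C_i, and every vertex not in C_i is incident to at most one edge of F_i (so that (V, F_i) is a forest of stars with centers in C_i); and moreover, every vertex of V incident to at least one edge of B' is, for i = 1 or for i = 2, a vertex not in C_i that is incident to exactly one edge of F_i (i.e., it is a leaf of a star of (V, F_i)). -/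
open SimpleGraph

private lemma step_exists' {V : Type*} (G : SimpleGraph V) (r v : V)
    (hrv : G.Reachable r v) (hn : ∃ u, G.Adj v u) :
    ∃ u, G.Adj v u ∧ G.dist r u % 2 ≠ G.dist r v % 2 := by
  rcases Nat.eq_zero_or_pos (G.dist r v) with h0 | hpos
  · have hrv' : r = v := hrv.dist_eq_zero_iff.mp h0
    obtain ⟨u, hu⟩ := hn
    refine ⟨u, hu, ?_⟩
    have h1 : G.dist r u = 1 := by
      rw [hrv']; exact (SimpleGraph.dist_eq_one_iff_adj).mpr hu
    omega
  · obtain ⟨n, hn'⟩ : ∃ n, G.dist r v = n + 1 := ⟨G.dist r v - 1, by omega⟩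
    obtain ⟨p, hp⟩ := hrv.symm.exists_walk_length_eq_dist
    rw [SimpleGraph.dist_comm] at hp
    cases p with
    | nil => simp only [SimpleGraph.Walk.length_nil] at hp; omega
    | cons h q' =>
      rename_i u
      refine ⟨u, h, ?_⟩
      have hq'l : q'.length = n := by
        simp only [SimpleGraph.Walk.length_cons] at hp; omega
      have hle : G.dist r u ≤ n := by
        calc G.dist r u ≤ q'.reverse.length := SimpleGraph.dist_le q'.reverse
        _ = n := by rw [SimpleGraph.Walk.length_reverse, hq'l]
      have hge : n ≤ G.dist r u := by
        obtain ⟨w, hw⟩ := (q'.reverse.reachable).exists_walk_length_eq_dist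
        have hwalk : G.dist r v ≤ (w.concat h.symm).length := SimpleGraph.dist_le _
        rw [SimpleGraph.Walk.length_concat, hw, hn'] at hwalk
        omega
      have : G.dist r u = n := le_antisymm hle hge
      omega

/-- Let `D = (V, B')` be a finite (loopless) graph. There exist
edge subsets `F1, F2 ⊆ B'` and vertex subsets `C1, C2 ⊆ V` such that, for each
`i ∈ {1, 2}`: every edge of `Fᵢ` has exactly one endpoint in `Cᵢ`, every vertex not
in `Cᵢ` is incident to at most one edge of `Fᵢ` (so `(V, Fᵢ)` is a forest of stars
with centers in `Cᵢ`), and moreover every vertex incident to an edge of `B'` is,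
for `i = 1` or for `i = 2`, a vertex not in `Cᵢ` incident to exactly one edge of
`Fᵢ` (i.e., a leaf of a star of `(V, Fᵢ)`). -/
theorem forest_of_stars_decomposition {V : Type*} [Finite V]
    (B' : Set (Sym2 V)) (hB' : ∀ e ∈ B', ¬ e.IsDiag) :
    ∃ (F1 F2 : Set (Sym2 V)) (C1 C2 : Set V),
      F1 ⊆ B' ∧ F2 ⊆ B' ∧
      (∀ e ∈ F1, ∃ u v, e = s(u, v) ∧ u ∈ C1 ∧ v ∉ C1) ∧
      (∀ e ∈ F2, ∃ u v, e = s(u, v) ∧ u ∈ C2 ∧ v ∉ C2) ∧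
      (∀ v ∉ C1, ∀ e₁ ∈ F1, ∀ e₂ ∈ F1, v ∈ e₁ → v ∈ e₂ → e₁ = e₂) ∧
      (∀ v ∉ C2, ∀ e₁ ∈ F2, ∀ e₂ ∈ F2, v ∈ e₁ → v ∈ e₂ → e₁ = e₂) ∧
      (∀ v : V, (∃ e ∈ B', v ∈ e) →
        (v ∉ C1 ∧ ∃! e, e ∈ F1 ∧ v ∈ e) ∨ (v ∉ C2 ∧ ∃! e, e ∈ F2 ∧ v ∈ e)) := by
  classical
  let G : SimpleGraph V :=
    { Adj := fun u v => u ≠ v ∧ s(u, v) ∈ B'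
      symm := by
        constructor
        intro u v h
        refine ⟨h.1.symm, ?_⟩
        rw [Sym2.eq_swap]; exact h.2
      loopless := ⟨fun v h => h.1 rfl⟩ }
  let rt : V → V := fun v => (G.connectedComponentMk v).out
  have hroot : ∀ v, G.Reachable (rt v) v := by
    intro v
    exact SimpleGraph.ConnectedComponent.eq.mp ((G.connectedComponentMk v).out_eq)
  -- active vertices have a neighbor
  have hA : ∀ v, (∃ e ∈ B', v ∈ e) → ∃ u, G.Adj v u := by
    intro v ⟨e, he, hve⟩
    obtain ⟨u, rfl⟩ := (Sym2.mem_iff_exists).mp hve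
    refine ⟨u, ?_, he⟩
    intro huv
    exact hB' _ he (by rw [← huv]; exact Sym2.mk_isDiag_iff.mpr rfl)
  have key : ∀ v, (∃ e ∈ B', v ∈ e) →
      ∃ u, G.Adj v u ∧ G.dist (rt v) u % 2 ≠ G.dist (rt v) v % 2 :=
    fun v hv => step_exists' G (rt v) v (hroot v) (hA v hv)
  let f : V → V := fun v => if h : ∃ e ∈ B', v ∈ e then (key v h).choose else v
  have hf : ∀ v (h : ∃ e ∈ B', v ∈ e),
      G.Adj v (f v) ∧ G.dist (rt v) (f v) % 2 ≠ G.dist (rt v) v % 2 := by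
    intro v h
    simp only [f, dif_pos h]
    exact (key v h).choose_spec
  let c : V → ℕ := fun v => G.dist (rt v) v % 2
  have hc01 : ∀ v, c v = 0 ∨ c v = 1 := fun v => Nat.mod_two_eq_zero_or_one _
  have hrt_adj : ∀ u v, G.Adj u v → rt u = rt v := by
    intro u v h
    have : G.connectedComponentMk u = G.connectedComponentMk v :=
      SimpleGraph.ConnectedComponent.eq.mpr h.reachable
    simp only [rt, this]
  have hcf : ∀ v (h : ∃ e ∈ B', v ∈ e), c (f v) ≠ c v := by
    intro v h
    have h1 := hf v h
    have h2 : rt (f v) = rt v := (hrt_adj v (f v) h1.1).symm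
    simpa only [c, h2] using h1.2
  let F : ℕ → Set (Sym2 V) := fun i =>
    {e | ∃ v, (∃ e' ∈ B', v ∈ e') ∧ c v = i ∧ e = s(v, f v)}
  let C : ℕ → Set V := fun i => {v | c v ≠ i}
  have hFsub : ∀ i, F i ⊆ B' := by
    rintro i e ⟨v, hv, _, rfl⟩
    exact (hf v hv).1.2
  have hFstar : ∀ i, ∀ e ∈ F i, ∃ u v, e = s(u, v) ∧ u ∈ C i ∧ v ∉ C i := by
    rintro i e ⟨v, hv, hcv, rfl⟩
    refine ⟨f v, v, Sym2.eq_swap.symm, ?_, ?_⟩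
    · simp only [C, Set.mem_setOf_eq]
      exact hcv ▸ hcf v hv
    · simp only [C, Set.mem_setOf_eq, not_not]
      exact hcv
  have hmem : ∀ (w v : V) (hv : ∃ e ∈ B', v ∈ e), w ∈ C (c w) → w ∈ (s(v, f v) : Sym2 V) →
      (∃ e' ∈ B', v ∈ e') ∧ False := by
    intro w v hv hw hmem
    exact absurd rfl hw
  have huniq : ∀ i, ∀ w ∉ C i, ∀ v, (∃ e ∈ B', v ∈ e) → c v = i →
      w ∈ (s(v, f v) : Sym2 V) → w = v := by
    intro i w hw v hv hcv hmem
    simp only [C, Set.mem_setOf_eq, not_not] at hw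
    rcases Sym2.mem_iff.mp hmem with rfl | rfl
    · rfl
    · exact absurd (hw.trans hcv.symm) (hcf v hv)
  have hatmost : ∀ i, ∀ w ∉ C i, ∀ e₁ ∈ F i, ∀ e₂ ∈ F i, w ∈ e₁ → w ∈ e₂ → e₁ = e₂ := by
    rintro i w hw e₁ ⟨v₁, hv₁, hc₁, rfl⟩ e₂ ⟨v₂, hv₂, hc₂, rfl⟩ h₁ h₂
    obtain rfl := huniq i w hw v₁ hv₁ hc₁ h₁
    obtain rfl := huniq i w hw v₂ hv₂ hc₂ h₂
    rfl
  refine ⟨F 0, F 1, C 0, C 1, hFsub 0, hFsub 1, hFstar 0, hFstar 1,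
    hatmost 0, hatmost 1, ?_⟩
  intro v hv
  have hleaf : ∀ i, c v = i → v ∉ C i ∧ ∃! e, e ∈ F i ∧ v ∈ e := by
    intro i hcv
    refine ⟨by simp [C, hcv], ⟨s(v, f v), ⟨⟨v, hv, hcv, rfl⟩, Sym2.mem_mk_left _ _⟩, ?_⟩⟩
    rintro e ⟨⟨w, hw, hcw, rfl⟩, hmem'⟩
    obtain rfl := huniq i v (by simp [C, hcv]) w hw hcw hmem'
    rfl
  rcases hc01 v with h | h
  · exact Or.inl (hleaf 0 h)
  · exact Or.inr (hleaf 1 h)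
end
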